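/- arXiv:2205.08078 — 5 statements merged into one kernel-verified Lean document; each statement's English description precedes it below -/
import Mathlib

section
/- For each number of heads m, let p_SA(m) be the infimum over weight matrices W_{1j} ∈ ℝ^{d×d} and W_{2j} ∈ ℝ^{d×c} (j = 1,…,m) of Σ_{i=1}^n L(Σ_{j=1}^m (X_i W_{1j} X_iᵀ) X_i W_{2j}, Y_i) + (β/2) Σ_{j=1}^m (‖W_{1j}‖_F² + ‖W_{2j}‖_F²). Then there exists m* ≤ min{d², dc} such that for every m ≥ m*, p_SA(m) equals the optimal value of the convex program: the infimum over Z ∈ ℝ^{d²×dc} of Σ_{i=1}^n L(Σ_{k=1}^d Σ_{ℓ=1}^d G_i[k,ℓ] · X_i Z^{(k,ℓ)}, Y_i) + β‖Z‖_*, where G_i := X_iᵀ X_i. -/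
open Matrix Pointwise Kronecker

noncomputable section

/-- Frobenius norm of a real matrix. -/
def frobNorm {m n : Type*} [Fintype m] [Fintype n] (A : Matrix m n ℝ) : ℝ :=
  Real.sqrt (∑ i, ∑ j, (A i j) ^ 2)

/-- Nuclear norm of a real matrix: the sum of its singular values, i.e. the square
roots of the eigenvalues of `Aᴴ * A`. -/
def nuclearNorm {m n : Type*} [Fintype m] [Fintype n] [DecidableEq n] (A : Matrix m n ℝ) : ℝ :=
  ∑ i, Real.sqrt ((Matrix.isHermitian_conjTranspose_mul_self A).eigenvalues i)

/-- The constrained nuclear norm `‖Z‖_{*,K}`. -/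
def cNuclearNorm {N ι κ : Type*} [Fintype N] [Fintype ι] [Fintype κ] [DecidableEq κ]
    (K : Matrix N ι ℝ) (Z : Matrix ι κ ℝ) : ℝ :=
  sInf {t : ℝ | 0 ≤ t ∧ Z ∈ t • convexHull ℝ
    {M : Matrix ι κ ℝ | ∃ u v, M = Matrix.vecMulVec u v ∧ (∀ r, 0 ≤ (K *ᵥ u) r) ∧
      nuclearNorm M ≤ 1}}

/-- The 0-1 diagonal matrix `diag(1{A u ≥ 0})`. -/
def gateArr {N q : Type*} [Fintype q] [DecidableEq N] (A : Matrix N q ℝ) (u : q → ℝ) :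
    Matrix N N ℝ :=
  Matrix.diagonal fun r => if 0 ≤ (A *ᵥ u) r then (1 : ℝ) else 0

/-- The set of hyperplane arrangements of a matrix `A`. -/
def arrSet {N q : Type*} [Fintype q] [DecidableEq N] (A : Matrix N q ℝ) :
    Set (Matrix N N ℝ) :=
  Set.range (gateArr A)

/-- Entrywise ReLU of a matrix. -/
def reluM {m n : Type*} (A : Matrix m n ℝ) : Matrix m n ℝ :=
  Matrix.of fun i j => max (A i j) 0

/-- Entrywise ReLU of a vector. -/
def reluV {m : Type*} (v : m → ℝ) : m → ℝ := fun i => max (v i) 0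

/-- `circ(X)`: horizontal concatenation of all circulant row-shifts of `X`. -/
def circM {s p : ℕ} (X : Matrix (Fin s) (Fin p) ℝ) : Matrix (Fin s) (Fin s × Fin p) ℝ :=
  Matrix.of fun i q => X (i + q.1) q.2

section aux
variable {ι κ : Type*} [Fintype ι] [Fintype κ] [DecidableEq κ]

lemma dot_self_nonneg' (u : ι → ℝ) : 0 ≤ u ⬝ᵥ u :=
  Finset.sum_nonneg fun i _ => mul_self_nonneg _

lemma dotProduct_sum' {J : Type*} (s : Finset J) (u : ι → ℝ) (f : J → ι → ℝ) :
    u ⬝ᵥ (∑ j ∈ s, f j) = ∑ j ∈ s, u ⬝ᵥ f j := by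
  simp only [dotProduct, Finset.sum_apply, Finset.mul_sum]
  rw [Finset.sum_comm]

lemma sum_dotProduct' {J : Type*} (s : Finset J) (u : ι → ℝ) (f : J → ι → ℝ) :
    (∑ j ∈ s, f j) ⬝ᵥ u = ∑ j ∈ s, f j ⬝ᵥ u := by
  simp only [dotProduct, Finset.sum_apply, Finset.sum_mul]
  rw [Finset.sum_comm]

lemma bessel (c : κ → ι → ℝ) (h1 : ∀ i j, i ≠ j → c i ⬝ᵥ c j = 0)
    (h2 : ∀ i, c i ⬝ᵥ c i ≤ 1) (u : ι → ℝ) :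
    ∑ i, (c i ⬝ᵥ u) ^ 2 ≤ u ⬝ᵥ u := by
  set t : κ → ℝ := fun i => c i ⬝ᵥ u with ht
  have h0 : 0 ≤ (u - ∑ i, t i • c i) ⬝ᵥ (u - ∑ i, t i • c i) := dot_self_nonneg' _
  have e1 : (u - ∑ i, t i • c i) ⬝ᵥ (u - ∑ i, t i • c i)
      = u ⬝ᵥ u - 2 * ∑ i, t i ^ 2 + ∑ i, t i ^ 2 * (c i ⬝ᵥ c i) := by
    rw [sub_dotProduct, dotProduct_sub, dotProduct_sub]
    rw [dotProduct_sum', sum_dotProduct', sum_dotProduct']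
    have e2 : ∀ i, u ⬝ᵥ (t i • c i) = t i ^ 2 := by
      intro i
      rw [dotProduct_smul, dotProduct_comm]
      simp [ht, sq, smul_eq_mul]
    have e3 : ∀ i, (t i • c i) ⬝ᵥ u = t i ^ 2 := by
      intro i; rw [smul_dotProduct]; simp [ht, sq, smul_eq_mul]
    have e4 : ∀ i, (t i • c i) ⬝ᵥ (∑ j, t j • c j) = t i ^ 2 * (c i ⬝ᵥ c i) := by
      intro i
      rw [dotProduct_sum', Finset.sum_eq_single i]
      · rw [smul_dotProduct, dotProduct_smul]; simp [sq, smul_eq_mul]; ring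
      · intro j _ hj
        rw [smul_dotProduct, dotProduct_smul, h1 i j (Ne.symm hj)]
        simp
      · intro h; exact absurd (Finset.mem_univ i) h
    simp only [e2, e3, e4]
    ring
  have e5 : ∑ i, t i ^ 2 * (c i ⬝ᵥ c i) ≤ ∑ i, t i ^ 2 := by
    apply Finset.sum_le_sum
    intro i _
    calc t i ^ 2 * (c i ⬝ᵥ c i) ≤ t i ^ 2 * 1 :=
          mul_le_mul_of_nonneg_left (h2 i) (sq_nonneg _)
      _ = t i ^ 2 := mul_one _
  rw [e1] at h0
  linarith

lemma svd_exists (A : Matrix ι κ ℝ) :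
    ∃ (σ : κ → ℝ) (p : κ → ι → ℝ) (q : κ → κ → ℝ),
      (∀ i, 0 ≤ σ i) ∧ nuclearNorm A = ∑ i, σ i ∧
      A = ∑ i, σ i • Matrix.vecMulVec (p i) (q i) ∧
      (∀ i j, i ≠ j → p i ⬝ᵥ p j = 0) ∧
      (∀ i, p i ⬝ᵥ p i ≤ 1) ∧
      (∀ i, σ i ≠ 0 → p i ⬝ᵥ p i = 1) ∧
      (∀ i j, i ≠ j → q i ⬝ᵥ q j = 0) ∧
      (∀ i, q i ⬝ᵥ q i = 1) := by
  have hA : (Aᴴ * A).IsHermitian := Matrix.isHermitian_conjTranspose_mul_self A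
  set lam : κ → ℝ := hA.eigenvalues with hlamdef
  have hlam : ∀ i, 0 ≤ lam i := Matrix.eigenvalues_conjTranspose_mul_self_nonneg A
  set Q : Matrix κ κ ℝ := (hA.eigenvectorUnitary : Matrix κ κ ℝ) with hQdef
  have hQ1 : star Q * Q = 1 := Unitary.coe_star_mul_self _
  have hQ2 : Q * star Q = 1 := Unitary.coe_mul_star_self _
  set q : κ → κ → ℝ := fun i r => Q r i with hqdef
  have hspec : Aᴴ * A = Q * Matrix.diagonal lam * star Q := by
    have := hA.spectral_theorem
    rwa [show (RCLike.ofReal ∘ hA.eigenvalues : κ → ℝ) = lam by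
      funext i; simp [hlamdef, RCLike.ofReal_real_eq_id]] at this
  have hAQ : (Aᴴ * A) * Q = Q * Matrix.diagonal lam := by
    rw [hspec, mul_assoc (Q * Matrix.diagonal lam), hQ1, mul_one]
  have hcol : ∀ i, (Aᴴ * A) *ᵥ q i = lam i • q i := by
    intro i
    funext r
    have h1 : ((Aᴴ * A) * Q) r i = ((Aᴴ * A) *ᵥ q i) r := by
      simp [Matrix.mul_apply, Matrix.mulVec, dotProduct, hqdef]
    have h2 : (Q * Matrix.diagonal lam) r i = lam i * Q r i := by
      rw [Matrix.mul_diagonal]; ring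
    rw [Pi.smul_apply, smul_eq_mul, ← h2, ← hAQ, h1]
  have hqq : ∀ i j, q i ⬝ᵥ q j = if i = j then 1 else 0 := by
    intro i j
    have : (star Q * Q) i j = q i ⬝ᵥ q j := by
      simp [Matrix.mul_apply, dotProduct, Matrix.star_apply, hqdef]
    rw [← this, hQ1, Matrix.one_apply]
  have hkey : ∀ i j, (A *ᵥ q i) ⬝ᵥ (A *ᵥ q j) = lam j * (q i ⬝ᵥ q j) := by
    intro i j
    have h1 : (A *ᵥ q i) ⬝ᵥ (A *ᵥ q j) = q i ⬝ᵥ ((Aᴴ * A) *ᵥ q j) := by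
      rw [← Matrix.mulVec_mulVec]
      rw [dotProduct_comm (q i), Matrix.conjTranspose_eq_transpose_of_trivial,
        Matrix.mulVec_transpose, ← Matrix.dotProduct_mulVec, dotProduct_comm]
    rw [h1, hcol j, dotProduct_smul, smul_eq_mul]
  set σ : κ → ℝ := fun i => Real.sqrt (lam i) with hσdef
  have hσ0 : ∀ i, 0 ≤ σ i := fun i => Real.sqrt_nonneg _
  have hσσ : ∀ i, σ i * σ i = lam i := fun i => Real.mul_self_sqrt (hlam i)
  have hAq0 : ∀ i, σ i = 0 → A *ᵥ q i = 0 := by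
    intro i h
    have hl0 : lam i = 0 := le_antisymm (by rw [← hσσ i, h]; simp) (hlam i)
    have : (A *ᵥ q i) ⬝ᵥ (A *ᵥ q i) = 0 := by
      rw [hkey i i, hl0, zero_mul]
    funext r
    have hz := (Finset.sum_eq_zero_iff_of_nonneg
      (fun x (_ : x ∈ Finset.univ) => mul_self_nonneg ((A *ᵥ q i) x))).mp this r (Finset.mem_univ r)
    have := mul_self_eq_zero.mp hz
    simpa using this
  set p : κ → ι → ℝ := fun i => if σ i = 0 then 0 else (σ i)⁻¹ • (A *ᵥ q i) with hpdef
  have hσp : ∀ i, σ i • p i = A *ᵥ q i := by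
    intro i
    by_cases h : σ i = 0
    · simp [hpdef, h, hAq0 i h]
    · simp [hpdef, h, smul_smul, mul_inv_cancel₀ h]
  have hppkey : ∀ i j, σ i ≠ 0 → σ j ≠ 0 →
      p i ⬝ᵥ p j = (σ i)⁻¹ * ((σ j)⁻¹ * (lam j * (q i ⬝ᵥ q j))) := by
    intro i j hi hj
    simp only [hpdef, if_neg hi, if_neg hj, smul_dotProduct, dotProduct_smul,
      smul_eq_mul, hkey i j]
    ring
  refine ⟨σ, p, q, hσ0, rfl, ?_, ?_, ?_, ?_, ?_, ?_⟩
  · -- decomposition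
    have hA2 : A = A * Q * star Q := by rw [Matrix.mul_assoc, hQ2, Matrix.mul_one]
    funext r c
    have : A r c = ∑ i, (A *ᵥ q i) r * q i c := by
      conv_lhs => rw [hA2]
      rw [Matrix.mul_apply]
      refine Finset.sum_congr rfl fun i _ => ?_
      rw [Matrix.mul_apply]
      simp [Matrix.mulVec, dotProduct, Matrix.star_apply, hqdef]
    rw [Matrix.sum_apply, this]
    refine Finset.sum_congr rfl fun i _ => ?_
    rw [Matrix.smul_apply, Matrix.vecMulVec_apply, smul_eq_mul]
    have := congrFun (hσp i) r
    rw [Pi.smul_apply, smul_eq_mul] at this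
    rw [← mul_assoc, this]
  · -- p orthogonal
    intro i j hij
    by_cases hi : σ i = 0
    · simp [hpdef, hi]
    by_cases hj : σ j = 0
    · simp [hpdef, hj]
    rw [hppkey i j hi hj, hqq, if_neg hij]
    ring
  · -- p norm ≤ 1
    intro i
    by_cases hi : σ i = 0
    · simp [hpdef, hi, dot_self_nonneg']
    · rw [hppkey i i hi hi, hqq, if_pos rfl, ← hσσ i]
      field_simp
      exact le_refl _
  · -- p norm = 1 on support
    intro i hi
    rw [hppkey i i hi hi, hqq, if_pos rfl, ← hσσ i]
    field_simp
  · intro i j hij; rw [hqq, if_neg hij]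
  · intro i; rw [hqq, if_pos rfl]



lemma vecMulVec_mulVec' (u : ι → ℝ) (v : κ → ℝ) (w : κ → ℝ) :
    Matrix.vecMulVec u v *ᵥ w = (v ⬝ᵥ w) • u := by
  funext r
  simp only [Matrix.mulVec, dotProduct, Matrix.vecMulVec_apply, Pi.smul_apply,
    smul_eq_mul, Finset.sum_mul]
  exact Finset.sum_congr rfl fun i _ => by ring

lemma sum_mulVec' {J : Type*} (t : Finset J) (M : J → Matrix ι κ ℝ) (w : κ → ℝ) :
    (∑ j ∈ t, M j) *ᵥ w = ∑ j ∈ t, M j *ᵥ w := by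
  funext r
  simp only [Matrix.mulVec, dotProduct, Finset.sum_apply, Matrix.sum_apply,
    Finset.sum_mul]
  rw [Finset.sum_comm]

lemma nuclearNorm_le_of_decomp {J : Type*} [Fintype J] (A : Matrix ι κ ℝ)
    (u : J → ι → ℝ) (v : J → κ → ℝ) (hA : A = ∑ j, Matrix.vecMulVec (u j) (v j)) :
    nuclearNorm A ≤ ∑ j, Real.sqrt (u j ⬝ᵥ u j) * Real.sqrt (v j ⬝ᵥ v j) := by
  obtain ⟨σ, p, q, hσ0, hnn, hdec, hp0, hp1, hp2, hq0, hq1⟩ := svd_exists A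
  have hσeq : ∀ i, σ i = p i ⬝ᵥ (A *ᵥ q i) := by
    intro i
    conv_rhs => rw [hdec]
    rw [show (∑ i', σ i' • Matrix.vecMulVec (p i') (q i')) *ᵥ q i
        = ∑ i', σ i' • ((q i' ⬝ᵥ q i) • p i') by
      rw [sum_mulVec']
      exact Finset.sum_congr rfl fun i' _ => by
        rw [Matrix.smul_mulVec, vecMulVec_mulVec']]
    rw [dotProduct_sum', Finset.sum_eq_single i]
    · rw [hq1 i]
      by_cases h : σ i = 0
      · simp [h]
      · simp only [one_smul, dotProduct_smul, smul_eq_mul]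
        rw [hp2 i h]; ring
    · intro j _ hj
      rw [hq0 j i hj]
      simp
    · intro h; exact absurd (Finset.mem_univ i) h
  calc nuclearNorm A = ∑ i, p i ⬝ᵥ (A *ᵥ q i) := by
        rw [hnn]; exact Finset.sum_congr rfl fun i _ => hσeq i
    _ = ∑ i, ∑ j, (p i ⬝ᵥ u j) * (q i ⬝ᵥ v j) := by
        refine Finset.sum_congr rfl fun i _ => ?_
        conv_lhs => rw [hA]
        rw [sum_mulVec', dotProduct_sum']
        refine Finset.sum_congr rfl fun j _ => ?_
        rw [vecMulVec_mulVec', dotProduct_smul, smul_eq_mul,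
          dotProduct_comm (v j) (q i)]
        ring
    _ = ∑ j, ∑ i, (p i ⬝ᵥ u j) * (q i ⬝ᵥ v j) := Finset.sum_comm
    _ ≤ ∑ j, Real.sqrt (u j ⬝ᵥ u j) * Real.sqrt (v j ⬝ᵥ v j) := by
        refine Finset.sum_le_sum fun j _ => ?_
        have hb1 : ∑ i, (p i ⬝ᵥ u j) ^ 2 ≤ u j ⬝ᵥ u j := bessel p hp0 hp1 (u j)
        have hb2 : ∑ i, (q i ⬝ᵥ v j) ^ 2 ≤ v j ⬝ᵥ v j :=
          bessel q hq0 (fun i => le_of_eq (hq1 i)) (v j)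
        have hcs := Finset.sum_mul_sq_le_sq_mul_sq Finset.univ
          (fun i => p i ⬝ᵥ u j) (fun i => q i ⬝ᵥ v j)
        have h1 : (∑ i, (p i ⬝ᵥ u j) * (q i ⬝ᵥ v j)) ^ 2 ≤ (u j ⬝ᵥ u j) * (v j ⬝ᵥ v j) := by
          refine le_trans hcs ?_
          exact mul_le_mul hb1 hb2 (Finset.sum_nonneg fun i _ => sq_nonneg _)
            (le_trans (Finset.sum_nonneg fun i _ => sq_nonneg _) hb1)
        calc ∑ i, (p i ⬝ᵥ u j) * (q i ⬝ᵥ v j)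
            ≤ |∑ i, (p i ⬝ᵥ u j) * (q i ⬝ᵥ v j)| := le_abs_self _
          _ = Real.sqrt ((∑ i, (p i ⬝ᵥ u j) * (q i ⬝ᵥ v j)) ^ 2) := (Real.sqrt_sq_eq_abs _).symm
          _ ≤ Real.sqrt ((u j ⬝ᵥ u j) * (v j ⬝ᵥ v j)) := Real.sqrt_le_sqrt h1
          _ = Real.sqrt (u j ⬝ᵥ u j) * Real.sqrt (v j ⬝ᵥ v j) :=
              Real.sqrt_mul (dot_self_nonneg' _) _

lemma card_support_le (σ : κ → ℝ) (p : κ → ι → ℝ)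
    (h1 : ∀ i j, i ≠ j → p i ⬝ᵥ p j = 0) (h2 : ∀ i, σ i ≠ 0 → p i ⬝ᵥ p i = 1) :
    Fintype.card {i // σ i ≠ 0} ≤ Fintype.card ι := by
  classical
  set P : {i // σ i ≠ 0} → EuclideanSpace ℝ ι :=
    fun i => (WithLp.equiv 2 (ι → ℝ)).symm (p i.1) with hP
  have horth : Orthonormal ℝ P := by
    rw [orthonormal_iff_ite]
    intro i j
    have : (inner ℝ (P i) (P j) : ℝ) = p i.1 ⬝ᵥ p j.1 := by
      simp [hP, PiLp.inner_apply, dotProduct, RCLike.inner_apply, mul_comm]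
    rw [this]
    by_cases h : i = j
    · subst h; rw [if_pos rfl, h2 i.1 i.2]
    · rw [if_neg h, h1 i.1 j.1 (fun hh => h (Subtype.ext hh))]
  have := horth.linearIndependent.fintype_card_le_finrank
  rwa [finrank_euclideanSpace] at this

lemma iInf_eq_iInf_real {α β : Sort*} [Nonempty α] [Nonempty β] (f : α → ℝ) (g : β → ℝ)
    (h1 : ∀ a, ∃ b, g b ≤ f a) (h2 : ∀ b, ∃ a, f a ≤ g b) : (⨅ a, f a) = ⨅ b, g b := by
  by_cases hb : BddBelow (Set.range g)
  · have hf : BddBelow (Set.range f) := by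
      obtain ⟨cst, hc⟩ := hb
      refine ⟨cst, ?_⟩
      rintro x ⟨a, rfl⟩
      obtain ⟨b, hba⟩ := h1 a
      exact le_trans (hc ⟨b, rfl⟩) hba
    apply le_antisymm
    · refine le_ciInf fun b => ?_
      obtain ⟨a, ha⟩ := h2 b
      exact le_trans (ciInf_le hf a) ha
    · refine le_ciInf fun a => ?_
      obtain ⟨b, hbb⟩ := h1 a
      exact le_trans (ciInf_le hb b) hbb
  · have hfb : ¬ BddBelow (Set.range f) := by
      intro hf
      apply hb
      obtain ⟨cst, hc⟩ := hf
      refine ⟨cst, ?_⟩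
      rintro x ⟨b, rfl⟩
      obtain ⟨a, ha⟩ := h2 b
      exact le_trans (hc ⟨a, rfl⟩) ha
    rw [iInf, iInf, Real.sInf_of_not_bddBelow hfb, Real.sInf_of_not_bddBelow hb]

end aux

lemma headAlg {s d c : ℕ} (X : Matrix (Fin s) (Fin d) ℝ)
    (W1 : Matrix (Fin d) (Fin d) ℝ) (W2 : Matrix (Fin d) (Fin c) ℝ) :
    X * W1 * Xᵀ * X * W2 =
      ∑ k : Fin d, ∑ l : Fin d, (Xᵀ * X) k l •
        (X * Matrix.of fun a p => W1 a k * W2 l p) := by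
  rw [Matrix.mul_assoc (X * W1) Xᵀ X]
  ext r pp
  rw [show ((X * W1) * (Xᵀ * X) * W2) r pp
      = ∑ l, ((X * W1) * (Xᵀ * X)) r l * W2 l pp from Matrix.mul_apply]
  simp only [Matrix.sum_apply, Matrix.smul_apply, smul_eq_mul]
  have hL : ∀ l, ((X * W1) * (Xᵀ * X)) r l * W2 l pp
      = ∑ k, (X * W1) r k * ((Xᵀ * X) k l * W2 l pp) := by
    intro l
    rw [Matrix.mul_apply, Finset.sum_mul]
    exact Finset.sum_congr rfl fun k _ => by ring
  rw [Finset.sum_congr rfl fun l _ => hL l, Finset.sum_comm]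
  refine Finset.sum_congr rfl fun k _ => Finset.sum_congr rfl fun l _ => ?_
  rw [show (X * Matrix.of fun a p => W1 a k * W2 l p) r pp
      = ∑ a, X r a * (W1 a k * W2 l pp) from Matrix.mul_apply]
  rw [Matrix.mul_apply, Finset.sum_mul, Finset.mul_sum]
  exact Finset.sum_congr rfl fun a _ => by ring

lemma PhiAdd {s d c : ℕ} (X : Matrix (Fin s) (Fin d) ℝ) {J : Type*} (t : Finset J)
    (Z : J → Matrix (Fin d × Fin d) (Fin d × Fin c) ℝ) :
    (∑ k : Fin d, ∑ l : Fin d, ((Xᵀ * X) k l) •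
        (X * Matrix.of fun a p => (∑ j ∈ t, Z j) (k, a) (l, p)))
      = ∑ j ∈ t, ∑ k : Fin d, ∑ l : Fin d, ((Xᵀ * X) k l) •
        (X * Matrix.of fun a p => Z j (k, a) (l, p)) := by
  have h1 : ∀ k l : Fin d, (Matrix.of fun a p => (∑ j ∈ t, Z j) (k, a) (l, p))
      = ∑ j ∈ t, Matrix.of fun a p => Z j (k, a) (l, p) := by
    intro k l; ext a p; simp [Matrix.sum_apply]
  calc (∑ k : Fin d, ∑ l : Fin d, ((Xᵀ * X) k l) •
        (X * Matrix.of fun a p => (∑ j ∈ t, Z j) (k, a) (l, p)))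
      = ∑ k : Fin d, ∑ l : Fin d, ∑ j ∈ t, ((Xᵀ * X) k l) •
          (X * Matrix.of fun a p => Z j (k, a) (l, p)) := by
        refine Finset.sum_congr rfl fun k _ => Finset.sum_congr rfl fun l _ => ?_
        rw [h1 k l, Matrix.mul_sum, Finset.smul_sum]
    _ = ∑ k : Fin d, ∑ j ∈ t, ∑ l : Fin d, ((Xᵀ * X) k l) •
          (X * Matrix.of fun a p => Z j (k, a) (l, p)) :=
        Finset.sum_congr rfl fun k _ => Finset.sum_comm
    _ = ∑ j ∈ t, ∑ k : Fin d, ∑ l : Fin d, ((Xᵀ * X) k l) •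
          (X * Matrix.of fun a p => Z j (k, a) (l, p)) := Finset.sum_comm

lemma sum_comp_extend {α β M : Type*} [Fintype α] [Fintype β] [DecidableEq β] [AddCommMonoid M]
    (e : α ↪ β) (F : β → M) (hF : ∀ b, (∀ a, e a ≠ b) → F b = 0) :
    ∑ b, F b = ∑ a, F (e a) := by
  rw [← Finset.sum_map Finset.univ e F]
  refine (Finset.sum_subset (Finset.subset_univ _) fun x _ hx => ?_).symm
  exact hF x fun a ha => hx (Finset.mem_map.mpr ⟨a, Finset.mem_univ a, ha⟩)

lemma sum_support {κ M : Type*} [Fintype κ] [AddCommMonoid M] (σ : κ → ℝ) (g : κ → M)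
    (h : ∀ i, σ i = 0 → g i = 0) :
    ∑ i : {i // σ i ≠ 0}, g i.1 = ∑ i, g i := by
  classical
  rw [← Finset.sum_filter_of_ne (p := fun i => σ i ≠ 0) (fun x _ hx => fun h0 => hx (h x h0))]
  exact (Finset.sum_subtype _ (fun x => by simp) g).symm

lemma sumHeads {s d c : ℕ} {J : Type*} [Fintype J] (X : Matrix (Fin s) (Fin d) ℝ)
    (W1 : J → Matrix (Fin d) (Fin d) ℝ) (W2 : J → Matrix (Fin d) (Fin c) ℝ) :
    ∑ j, X * W1 j * Xᵀ * X * W2 j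
      = ∑ k : Fin d, ∑ l : Fin d, ((Xᵀ * X) k l) •
          (X * Matrix.of fun a p =>
            (∑ j, Matrix.vecMulVec (fun ka : Fin d × Fin d => W1 j ka.2 ka.1)
              (fun lp : Fin d × Fin c => W2 j lp.1 lp.2)) (k, a) (l, p)) := by
  rw [PhiAdd]
  refine Finset.sum_congr rfl fun j _ => ?_
  rw [headAlg]
  refine Finset.sum_congr rfl fun k _ => Finset.sum_congr rfl fun l _ =>
    congrArg (fun M => ((Xᵀ * X) k l) • (X * M)) ?_
  ext a p
  simp [Matrix.vecMulVec_apply]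

lemma frobSq {d1 d2 : ℕ} (A : Matrix (Fin d1) (Fin d2) ℝ) :
    frobNorm A ^ 2 = (fun ka : Fin d2 × Fin d1 => A ka.2 ka.1) ⬝ᵥ
      (fun ka : Fin d2 × Fin d1 => A ka.2 ka.1) := by
  rw [frobNorm, Real.sq_sqrt (by positivity)]
  rw [dotProduct, Fintype.sum_prod_type, Finset.sum_comm]
  exact Finset.sum_congr rfl fun k _ => Finset.sum_congr rfl fun a _ => pow_two (A a k)

lemma frobSq' {d1 d2 : ℕ} (A : Matrix (Fin d1) (Fin d2) ℝ) :
    frobNorm A ^ 2 = (fun lp : Fin d1 × Fin d2 => A lp.1 lp.2) ⬝ᵥ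
      (fun lp : Fin d1 × Fin d2 => A lp.1 lp.2) := by
  rw [frobNorm, Real.sq_sqrt (by positivity)]
  rw [dotProduct, Fintype.sum_prod_type]
  exact Finset.sum_congr rfl fun a _ => Finset.sum_congr rfl fun k _ => pow_two (A a k)

/-- **Theorem 1 (linear-activation multi-head self-attention).**
The non-convex training problem is equivalent to a convex program with a
Gram-matrix-weighted linear model and nuclear-norm regularization, for any
number of heads `m ≥ m*` with `m* ≤ min {d², dc}`. -/
theorem linear_self_attention_convex_dual
    (n s d c : ℕ) (hn : 0 < n) (hs : 0 < s) (hd : 0 < d) (hc : 0 < c)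
    (β : ℝ) (hβ : 0 < β)
    (X : Fin n → Matrix (Fin s) (Fin d) ℝ) (Y : Fin n → Matrix (Fin s) (Fin c) ℝ)
    (L : Matrix (Fin s) (Fin c) ℝ → Matrix (Fin s) (Fin c) ℝ → ℝ)
    (hconv : ∀ Yi, ConvexOn ℝ Set.univ fun R => L R Yi)
    (hlsc : ∀ Yi, LowerSemicontinuous fun R => L R Yi) :
    ∃ mstar : ℕ, mstar ≤ min (d * d) (d * c) ∧ ∀ m : ℕ, mstar ≤ m →
      (⨅ W : (Fin m → Matrix (Fin d) (Fin d) ℝ) × (Fin m → Matrix (Fin d) (Fin c) ℝ),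
        (∑ i, L (∑ j, X i * W.1 j * (X i)ᵀ * (X i) * W.2 j) (Y i)) +
          (β / 2) * ∑ j, (frobNorm (W.1 j) ^ 2 + frobNorm (W.2 j) ^ 2))
      =
      (⨅ Z : Matrix (Fin d × Fin d) (Fin d × Fin c) ℝ,
        (∑ i, L (∑ k : Fin d, ∑ l : Fin d,
            ((X i)ᵀ * X i) k l • (X i * Matrix.of fun a p => Z (k, a) (l, p))) (Y i)) +
          β * nuclearNorm Z) := by
  classical
  refine ⟨min (d * d) (d * c), le_refl _, fun m hm => ?_⟩
  apply iInf_eq_iInf_real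
  · -- for every W there is a Z with no larger objective
    intro W
    set u : Fin m → (Fin d × Fin d) → ℝ := fun j ka => W.1 j ka.2 ka.1 with hu
    set v : Fin m → (Fin d × Fin c) → ℝ := fun j lp => W.2 j lp.1 lp.2 with hv
    refine ⟨∑ j, Matrix.vecMulVec (u j) (v j), ?_⟩
    have hloss : ∀ i, (∑ k : Fin d, ∑ l : Fin d, ((X i)ᵀ * X i) k l •
          (X i * Matrix.of fun a p => (∑ j, Matrix.vecMulVec (u j) (v j)) (k, a) (l, p)))
        = ∑ j, X i * W.1 j * (X i)ᵀ * X i * W.2 j :=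
      fun i => (sumHeads (X i) W.1 W.2).symm
    have e1 : (∑ i, L (∑ k : Fin d, ∑ l : Fin d, ((X i)ᵀ * X i) k l •
          (X i * Matrix.of fun a p => (∑ j, Matrix.vecMulVec (u j) (v j)) (k, a) (l, p))) (Y i))
        = ∑ i, L (∑ j, X i * W.1 j * (X i)ᵀ * X i * W.2 j) (Y i) :=
      Finset.sum_congr rfl fun i _ => by rw [hloss i]
    rw [e1]
    refine add_le_add (le_refl _) ?_
    have h1 := nuclearNorm_le_of_decomp (∑ j, Matrix.vecMulVec (u j) (v j)) u v rfl
    have h2 : ∑ j, Real.sqrt (u j ⬝ᵥ u j) * Real.sqrt (v j ⬝ᵥ v j)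
        ≤ ∑ j, (frobNorm (W.1 j) ^ 2 + frobNorm (W.2 j) ^ 2) / 2 := by
      refine Finset.sum_le_sum fun j _ => ?_
      have e1' : frobNorm (W.1 j) ^ 2 = u j ⬝ᵥ u j := frobSq (W.1 j)
      have e2' : frobNorm (W.2 j) ^ 2 = v j ⬝ᵥ v j := frobSq' (W.2 j)
      rw [e1', e2']
      have ha := dot_self_nonneg' (u j)
      have hb := dot_self_nonneg' (v j)
      nlinarith [sq_nonneg (Real.sqrt (u j ⬝ᵥ u j) - Real.sqrt (v j ⬝ᵥ v j)),
        Real.sq_sqrt ha, Real.sq_sqrt hb, Real.sqrt_nonneg (u j ⬝ᵥ u j),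
        Real.sqrt_nonneg (v j ⬝ᵥ v j)]
    calc β * nuclearNorm (∑ j, Matrix.vecMulVec (u j) (v j))
        ≤ β * ∑ j, (frobNorm (W.1 j) ^ 2 + frobNorm (W.2 j) ^ 2) / 2 :=
          mul_le_mul_of_nonneg_left (h1.trans h2) hβ.le
      _ = β / 2 * ∑ j, (frobNorm (W.1 j) ^ 2 + frobNorm (W.2 j) ^ 2) := by
          rw [← Finset.sum_div]
          ring
  · -- for every Z there is a W with no larger objective
    intro Z
    obtain ⟨σ, p, q, hσ0, hnn, hdec, hp0, hp1, hp2, hq0, hq1⟩ := svd_exists Z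
    have hcard : Fintype.card {i // σ i ≠ 0} ≤ Fintype.card (Fin m) := by
      rw [Fintype.card_fin]
      have c1 : Fintype.card {i // σ i ≠ 0} ≤ d * d := by
        have := card_support_le σ p hp0 hp2
        simpa using this
      have c2 : Fintype.card {i // σ i ≠ 0} ≤ d * c := by
        have := Fintype.card_subtype_le (fun i : Fin d × Fin c => σ i ≠ 0)
        simpa using this
      exact le_trans (le_min c1 c2) hm
    obtain ⟨e⟩ := Function.Embedding.nonempty_iff_card_le.mpr hcard
    set u' : Fin m → (Fin d × Fin d) → ℝ :=
      Function.extend e (fun i => Real.sqrt (σ i.1) • p i.1) 0 with hu'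
    set v' : Fin m → (Fin d × Fin c) → ℝ :=
      Function.extend e (fun i => Real.sqrt (σ i.1) • q i.1) 0 with hv'
    have hu'e : ∀ i, u' (e i) = Real.sqrt (σ i.1) • p i.1 :=
      fun i => e.injective.extend_apply _ _ i
    have hv'e : ∀ i, v' (e i) = Real.sqrt (σ i.1) • q i.1 :=
      fun i => e.injective.extend_apply _ _ i
    have hu'0 : ∀ jj, (∀ i, e i ≠ jj) → u' jj = 0 := by
      intro jj h
      rw [hu', Function.extend_apply' _ _ _ (fun ⟨i, hi⟩ => h i hi)]
      rfl
    have hv'0 : ∀ jj, (∀ i, e i ≠ jj) → v' jj = 0 := by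
      intro jj h
      rw [hv', Function.extend_apply' _ _ _ (fun ⟨i, hi⟩ => h i hi)]
      rfl
    have hZdec : ∑ j : Fin m, Matrix.vecMulVec (u' j) (v' j) = Z := by
      rw [sum_comp_extend e (fun j => Matrix.vecMulVec (u' j) (v' j))
        (fun b hb => by
          show Matrix.vecMulVec (u' b) (v' b) = 0
          rw [hu'0 b hb]; ext x y; simp [Matrix.vecMulVec_apply])]
      have h1 : ∀ i : {i // σ i ≠ 0}, Matrix.vecMulVec (u' (e i)) (v' (e i))
          = σ i.1 • Matrix.vecMulVec (p i.1) (q i.1) := by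
        intro i
        rw [hu'e, hv'e]
        ext x y
        simp only [Matrix.vecMulVec_apply, Matrix.smul_apply, Pi.smul_apply, smul_eq_mul]
        have hs2 : Real.sqrt (σ i.1) * Real.sqrt (σ i.1) = σ i.1 := Real.mul_self_sqrt (hσ0 i.1)
        linear_combination (p i.1 x * q i.1 y) * hs2
      rw [Finset.sum_congr rfl fun i _ => h1 i]
      rw [show (∑ i : {i // σ i ≠ 0}, σ i.1 • Matrix.vecMulVec (p i.1) (q i.1))
          = ∑ i, σ i • Matrix.vecMulVec (p i) (q i) from
        sum_support σ (fun i => σ i • Matrix.vecMulVec (p i) (q i))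
          (fun i h0 => by show σ i • Matrix.vecMulVec (p i) (q i) = 0; rw [h0, zero_smul])]
      exact hdec.symm
    set W1 : Fin m → Matrix (Fin d) (Fin d) ℝ :=
      fun j => Matrix.of fun a k => u' j (k, a) with hW1
    set W2 : Fin m → Matrix (Fin d) (Fin c) ℝ :=
      fun j => Matrix.of fun l pp => v' j (l, pp) with hW2
    have hl1 : ∀ j, (fun ka : Fin d × Fin d => W1 j ka.2 ka.1) = u' j := by
      intro j; funext ka; simp [hW1]
    have hl2 : ∀ j, (fun lp : Fin d × Fin c => W2 j lp.1 lp.2) = v' j := by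
      intro j; funext lp; simp [hW2]
    have hvmv : (∑ j, Matrix.vecMulVec
        (fun ka : Fin d × Fin d => W1 j ka.2 ka.1)
        (fun lp : Fin d × Fin c => W2 j lp.1 lp.2)) = Z := by
      calc (∑ j, Matrix.vecMulVec (fun ka : Fin d × Fin d => W1 j ka.2 ka.1)
            (fun lp : Fin d × Fin c => W2 j lp.1 lp.2))
          = ∑ j, Matrix.vecMulVec (u' j) (v' j) :=
            Finset.sum_congr rfl fun j _ => by rw [hl1 j, hl2 j]
        _ = Z := hZdec
    have hloss : ∀ i, (∑ j, X i * W1 j * (X i)ᵀ * X i * W2 j)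
        = ∑ k : Fin d, ∑ l : Fin d, ((X i)ᵀ * X i) k l •
            (X i * Matrix.of fun a p => Z (k, a) (l, p)) := by
      intro i
      rw [sumHeads (X i) W1 W2, hvmv]
    have hpen : (∑ j, (frobNorm (W1 j) ^ 2 + frobNorm (W2 j) ^ 2)) = 2 * ∑ i, σ i := by
      have hterm : ∀ j, frobNorm (W1 j) ^ 2 + frobNorm (W2 j) ^ 2
          = u' j ⬝ᵥ u' j + v' j ⬝ᵥ v' j := by
        intro j
        rw [show frobNorm (W1 j) ^ 2 = u' j ⬝ᵥ u' j by rw [frobSq (W1 j), hl1 j],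
          show frobNorm (W2 j) ^ 2 = v' j ⬝ᵥ v' j by rw [frobSq' (W2 j), hl2 j]]
      rw [Finset.sum_congr rfl fun j _ => hterm j]
      rw [sum_comp_extend e (fun j => u' j ⬝ᵥ u' j + v' j ⬝ᵥ v' j)
        (fun b hb => by
          show u' b ⬝ᵥ u' b + v' b ⬝ᵥ v' b = 0
          rw [hu'0 b hb, hv'0 b hb]; simp)]
      have h2 : ∀ i : {i // σ i ≠ 0}, u' (e i) ⬝ᵥ u' (e i) + v' (e i) ⬝ᵥ v' (e i)
          = 2 * σ i.1 := by
        intro i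
        rw [hu'e, hv'e]
        rw [smul_dotProduct, dotProduct_smul,
          smul_dotProduct, dotProduct_smul]
        rw [hp2 i.1 i.2, hq1 i.1]
        simp only [smul_eq_mul]
        have hs2 : Real.sqrt (σ i.1) * Real.sqrt (σ i.1) = σ i.1 := Real.mul_self_sqrt (hσ0 i.1)
        linear_combination 2 * hs2
      rw [Finset.sum_congr rfl fun i _ => h2 i]
      rw [show (∑ i : {i // σ i ≠ 0}, 2 * σ i.1) = ∑ i, 2 * σ i from
        sum_support σ (fun i => 2 * σ i) (fun i h0 => by show 2 * σ i = 0; rw [h0, mul_zero])]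
      rw [Finset.mul_sum]
    refine ⟨(W1, W2), le_of_eq ?_⟩
    show (∑ i, L (∑ j, X i * W1 j * (X i)ᵀ * X i * W2 j) (Y i)) +
        (β / 2) * ∑ j, (frobNorm (W1 j) ^ 2 + frobNorm (W2 j) ^ 2)
      = _
    rw [Finset.sum_congr rfl fun i _ => by rw [hloss i]]
    rw [hpen, hnn]
    ring
end
end

section
/- Suppose the Gram matrices G_i := X_iᵀ X_i are all block diagonal with a common partition of {1,…,d} into B consecutive index blocks of sizes d_1,…,d_B (i.e. G_i[k,ℓ] = 0 whenever k and ℓ lie in different blocks, for all i), and let G_i^{(b)} ∈ ℝ^{d_b×d_b} denote the b-th diagonal block. For each m, let p_SA(m) be the infimum over W_{1j} ∈ ℝ^{d×d} and W_{2j} ∈ ℝ^{d×c} (j = 1,…,m) of Σ_{i=1}^n L(Σ_{j=1}^m (X_i W_{1j} X_iᵀ) X_i W_{2j}, Y_i) + (β/2) Σ_{j=1}^m (‖W_{1j}‖_F² + ‖W_{2j}‖_F²). Then there exists m* ≤ min{d², dc} such that for every m ≥ m*, p_SA(m) equals the infimum over matrices Z^{(b)} ∈ ℝ^{d_b d ×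 d_b c} (b = 1,…,B) of Σ_{i=1}^n L(Σ_{b=1}^B Σ_{k=1}^{d_b} Σ_{ℓ=1}^{d_b} G_i^{(b)}[k,ℓ] · X_i Z^{(b,k,ℓ)}, Y_i) + β Σ_{b=1}^B ‖Z^{(b)}‖_*, where Z^{(b,k,ℓ)} ∈ ℝ^{d×c} consists of rows (k−1)d+1,…,kd and columns (ℓ−1)c+1,…,ℓc of Z^{(b)}. -/
open Matrix Pointwise Kronecker

noncomputable section

namespace Cor1Aux


/-- Euclidean norm of a finitely supported vector. -/
def en {ι : Type*} [Fintype ι] (u : ι → ℝ) : ℝ := Real.sqrt (∑ i, u i ^ 2)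

lemma en_nonneg {ι : Type*} [Fintype ι] (u : ι → ℝ) : 0 ≤ en u := Real.sqrt_nonneg _

lemma en_sq {ι : Type*} [Fintype ι] (u : ι → ℝ) : en u ^ 2 = ∑ i, u i ^ 2 :=
  Real.sq_sqrt (Finset.sum_nonneg fun _ _ => sq_nonneg _)

lemma en_mono {ι₁ ι₂ : Type*} [Fintype ι₁] [Fintype ι₂] {u : ι₁ → ℝ} {v : ι₂ → ℝ}
    (h : ∑ i, u i ^ 2 ≤ ∑ i, v i ^ 2) : en u ≤ en v := Real.sqrt_le_sqrt h

/-- Cauchy–Schwarz. -/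
lemma cs {ι : Type*} [Fintype ι] (f g : ι → ℝ) : ∑ i, f i * g i ≤ en f * en g := by
  have h := Finset.sum_mul_sq_le_sq_mul_sq Finset.univ f g
  calc ∑ i, f i * g i ≤ |∑ i, f i * g i| := le_abs_self _
    _ = Real.sqrt ((∑ i, f i * g i) ^ 2) := (Real.sqrt_sq_eq_abs _).symm
    _ ≤ Real.sqrt ((∑ i, f i ^ 2) * ∑ i, g i ^ 2) := Real.sqrt_le_sqrt h
    _ = en f * en g := Real.sqrt_mul (Finset.sum_nonneg fun _ _ => sq_nonneg _) _



variable {ι κ : Type*} [Fintype ι] [Fintype κ] [DecidableEq κ]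

/-- columns of eigenvector unitary of `Aᴴ * A`. -/
def evec (A : Matrix ι κ ℝ) : κ → κ → ℝ := fun i r =>
  (Matrix.isHermitian_conjTranspose_mul_self A).eigenvectorBasis i r

def eval (A : Matrix ι κ ℝ) : κ → ℝ :=
  (Matrix.isHermitian_conjTranspose_mul_self A).eigenvalues

lemma eval_nonneg (A : Matrix ι κ ℝ) (i : κ) : 0 ≤ eval A i :=
  Matrix.eigenvalues_conjTranspose_mul_self_nonneg A i

lemma evec_mulVec (A : Matrix ι κ ℝ) (i : κ) :
    (Aᴴ * A) *ᵥ evec A i = eval A i • evec A i :=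
  (Matrix.isHermitian_conjTranspose_mul_self A).mulVec_eigenvectorBasis i

lemma evec_unitary_eq (A : Matrix ι κ ℝ) :
    ((Matrix.isHermitian_conjTranspose_mul_self A).eigenvectorUnitary : Matrix κ κ ℝ)
    = Matrix.of (fun r i => evec A i r) := by
  ext r i
  simp [evec, Matrix.IsHermitian.eigenvectorUnitary_apply]

lemma evec_ortho (A : Matrix ι κ ℝ) (i j : κ) :
    ∑ r, evec A i r * evec A j r = if i = j then 1 else 0 := by
  have h := Matrix.mem_unitaryGroup_iff'.mp
    ((Matrix.isHermitian_conjTranspose_mul_self A).eigenvectorUnitary).2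
  have := congrFun (congrFun h i) j
  rw [evec_unitary_eq] at this
  simpa [Matrix.mul_apply, Matrix.one_apply, Matrix.star_eq_conjTranspose,
    Matrix.conjTranspose_apply, mul_comm] using this

lemma evec_complete (A : Matrix ι κ ℝ) (a p : κ) :
    ∑ i, evec A i a * evec A i p = if a = p then 1 else 0 := by
  have h := Matrix.mem_unitaryGroup_iff.mp
    ((Matrix.isHermitian_conjTranspose_mul_self A).eigenvectorUnitary).2
  have := congrFun (congrFun h a) p
  rw [evec_unitary_eq] at this
  simpa [Matrix.mul_apply, Matrix.one_apply, Matrix.star_eq_conjTranspose,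
    Matrix.conjTranspose_apply] using this

lemma sq_mulVec_evec (A : Matrix ι κ ℝ) (i : κ) :
    ∑ r, ((A *ᵥ evec A i) r) ^ 2 = eval A i := by
  have h1 : evec A i ⬝ᵥ ((Aᴴ * A) *ᵥ evec A i) = (A *ᵥ evec A i) ⬝ᵥ (A *ᵥ evec A i) := by
    rw [Matrix.conjTranspose_eq_transpose_of_trivial, ← Matrix.mulVec_mulVec,
      Matrix.dotProduct_mulVec, Matrix.vecMul_transpose]
  have h2 : evec A i ⬝ᵥ ((Aᴴ * A) *ᵥ evec A i) = eval A i := by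
    rw [evec_mulVec]
    simp only [dotProduct, Pi.smul_apply, smul_eq_mul]
    have : ∑ r, evec A i r * (eval A i * evec A i r)
        = eval A i * ∑ r, evec A i r * evec A i r := by
      rw [Finset.mul_sum]; exact Finset.sum_congr rfl fun r _ => by ring
    rw [this, evec_ortho, if_pos rfl, mul_one]
  rw [← h2, h1]
  simp [dotProduct, sq]

/-- normalized image vectors -/
def qv (A : Matrix ι κ ℝ) : κ → ι → ℝ := fun i =>
  (Real.sqrt (eval A i))⁻¹ • (A *ᵥ evec A i)

lemma mulVec_evec_eq_zero (A : Matrix ι κ ℝ) {i : κ} (h : eval A i = 0) :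
    A *ᵥ evec A i = 0 := by
  funext r
  have h0 := sq_mulVec_evec A i
  rw [h] at h0
  have := (Finset.sum_eq_zero_iff_of_nonneg (fun r _ => sq_nonneg ((A *ᵥ evec A i) r))).mp h0
  exact (pow_eq_zero_iff two_ne_zero).mp (this r (Finset.mem_univ r))

lemma qv_dot_mulVec (A : Matrix ι κ ℝ) (i : κ) :
    ∑ r, qv A i r * (A *ᵥ evec A i) r = Real.sqrt (eval A i) := by
  rcases eq_or_ne (eval A i) 0 with h | h
  · simp [qv, mulVec_evec_eq_zero A h, h]
  · have hpos : 0 < eval A i := lt_of_le_of_ne (eval_nonneg A i) (Ne.symm h)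
    have : ∑ r, qv A i r * (A *ᵥ evec A i) r
        = (Real.sqrt (eval A i))⁻¹ * ∑ r, ((A *ᵥ evec A i) r) ^ 2 := by
      rw [Finset.mul_sum]
      exact Finset.sum_congr rfl fun r _ => by simp [qv]; ring
    rw [this, sq_mulVec_evec]
    rw [← Real.mul_self_sqrt hpos.le]
    field_simp
    rw [Real.sqrt_sq (Real.sqrt_nonneg _)]

lemma qv_dot_qv (A : Matrix ι κ ℝ) (i k : κ) :
    ∑ r, qv A i r * qv A k r =
      if i = k ∧ eval A i ≠ 0 then 1 else 0 := by
  have key : ∑ r, (A *ᵥ evec A i) r * (A *ᵥ evec A k) r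
      = eval A k * (if i = k then 1 else 0) := by
    have h1 : evec A i ⬝ᵥ ((Aᴴ * A) *ᵥ evec A k) = (A *ᵥ evec A i) ⬝ᵥ (A *ᵥ evec A k) := by
      rw [Matrix.conjTranspose_eq_transpose_of_trivial, ← Matrix.mulVec_mulVec,
        Matrix.dotProduct_mulVec, Matrix.vecMul_transpose]
    have h2 : evec A i ⬝ᵥ ((Aᴴ * A) *ᵥ evec A k) = eval A k * (if i = k then 1 else 0) := by
      rw [evec_mulVec]
      simp only [dotProduct, Pi.smul_apply, smul_eq_mul]
      rw [← evec_ortho A i k, Finset.mul_sum]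
      exact Finset.sum_congr rfl fun r _ => by ring
    calc ∑ r, (A *ᵥ evec A i) r * (A *ᵥ evec A k) r
        = evec A i ⬝ᵥ ((Aᴴ * A) *ᵥ evec A k) := h1.symm
      _ = eval A k * (if i = k then 1 else 0) := h2
  have expand : ∑ r, qv A i r * qv A k r
      = (Real.sqrt (eval A i))⁻¹ * ((Real.sqrt (eval A k))⁻¹ *
          ∑ r, (A *ᵥ evec A i) r * (A *ᵥ evec A k) r) := by
    rw [Finset.mul_sum, Finset.mul_sum]
    exact Finset.sum_congr rfl fun r _ => by simp [qv]; ring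
  rw [expand, key]
  rcases eq_or_ne i k with rfl | hik
  · rcases eq_or_ne (eval A i) 0 with h | h
    · simp [h]
    · have hpos : 0 < eval A i := lt_of_le_of_ne (eval_nonneg A i) (Ne.symm h)
      have hs : Real.sqrt (eval A i) ≠ 0 := (Real.sqrt_ne_zero'.mpr hpos)
      simp only [if_pos rfl, mul_one, h, ne_eq, not_false_iff, and_self, if_true]
      rw [show eval A i = Real.sqrt (eval A i) * Real.sqrt (eval A i) from
        (Real.mul_self_sqrt hpos.le).symm]
      field_simp
      rw [Real.sqrt_sq (Real.sqrt_nonneg _)]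
  · simp [hik]

lemma qv_eq_zero (A : Matrix ι κ ℝ) {i : κ} (h : eval A i = 0) : qv A i = 0 := by
  funext r; simp [qv, mulVec_evec_eq_zero A h]

/-- Bessel inequality for the family `qv`. -/
lemma bessel (A : Matrix ι κ ℝ) (x : ι → ℝ) :
    ∑ i, (∑ r, qv A i r * x r) ^ 2 ≤ ∑ r, x r ^ 2 := by
  set c : κ → ℝ := fun i => ∑ r, qv A i r * x r with hc
  have hczero : ∀ i, eval A i = 0 → c i = 0 := by
    intro i h
    simp [hc, qv_eq_zero A h]
  set S : ι → ℝ := fun r => ∑ i, c i * qv A i r with hS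
  have hmid : ∑ r, x r * S r = ∑ i, c i ^ 2 := by
    calc ∑ r, x r * S r = ∑ r, ∑ i, c i * (qv A i r * x r) := by
          refine Finset.sum_congr rfl fun r _ => ?_
          rw [hS, Finset.mul_sum]
          exact Finset.sum_congr rfl fun i _ => by ring
      _ = ∑ i, ∑ r, c i * (qv A i r * x r) := Finset.sum_comm
      _ = ∑ i, c i ^ 2 := by
          refine Finset.sum_congr rfl fun i _ => ?_
          rw [← Finset.mul_sum, hc, sq]
  have hlast : ∑ r, S r ^ 2 = ∑ i, c i ^ 2 := by
    calc ∑ r, S r ^ 2 = ∑ r, ∑ i, ∑ k, (c i * c k) * (qv A i r * qv A k r) := by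
          refine Finset.sum_congr rfl fun r _ => ?_
          rw [hS, sq, Finset.sum_mul_sum]
          exact Finset.sum_congr rfl fun i _ => Finset.sum_congr rfl fun k _ => by ring
      _ = ∑ i, ∑ k, (c i * c k) * ∑ r, qv A i r * qv A k r := by
          rw [Finset.sum_comm]
          refine Finset.sum_congr rfl fun i _ => ?_
          rw [Finset.sum_comm]
          exact Finset.sum_congr rfl fun k _ => (Finset.mul_sum _ _ _).symm
      _ = ∑ i, c i ^ 2 := by
          refine Finset.sum_congr rfl fun i _ => ?_
          rw [Finset.sum_eq_single i]
          · rw [qv_dot_qv]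
            rcases eq_or_ne (eval A i) 0 with h | h
            · simp [hczero i h]
            · simp [h, sq]
          · intro k _ hk
            rw [qv_dot_qv]
            simp [Ne.symm hk]
          · intro hi; exact absurd (Finset.mem_univ i) hi
  have h0 : (0:ℝ) ≤ ∑ r, (x r - S r) ^ 2 := Finset.sum_nonneg fun r _ => sq_nonneg _
  have hexp : ∑ r, (x r - S r) ^ 2
      = ∑ r, x r ^ 2 - 2 * ∑ r, x r * S r + ∑ r, S r ^ 2 := by
    calc ∑ r, (x r - S r) ^ 2
        = ∑ r, (x r ^ 2 - 2 * (x r * S r) + S r ^ 2) :=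
          Finset.sum_congr rfl fun r _ => by ring
      _ = ∑ r, x r ^ 2 - 2 * ∑ r, x r * S r + ∑ r, S r ^ 2 := by
          rw [Finset.sum_add_distrib, Finset.sum_sub_distrib, ← Finset.mul_sum]
  rw [hexp, hmid, hlast] at h0
  have : ∑ i, (∑ r, qv A i r * x r) ^ 2 = ∑ i, c i ^ 2 := by
    exact Finset.sum_congr rfl fun i _ => by rw [hc]
  rw [this]
  linarith


lemma nn_eq (A : Matrix ι κ ℝ) : nuclearNorm A = ∑ i, Real.sqrt (eval A i) := rfl

lemma en_eq_sqrt_sq {ι : Type*} [Fintype ι] (u : ι → ℝ) : en u = Real.sqrt (en u ^ 2) :=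
  (Real.sqrt_sq (en_nonneg u)).symm

/-- L1: nuclear norm bounded by any factorization. -/
lemma nn_le_sum {J : Type*} [Fintype J] (u : J → ι → ℝ) (v : J → κ → ℝ) :
    nuclearNorm (∑ j, vecMulVec (u j) (v j)) ≤ ∑ j, en (u j) * en (v j) := by
  obtain ⟨A, hA⟩ : ∃ A : Matrix ι κ ℝ, A = ∑ j, vecMulVec (u j) (v j) := ⟨_, rfl⟩
  rw [← hA]
  have hAv : ∀ i r, (A *ᵥ evec A i) r = ∑ j, u j r * (∑ a, v j a * evec A i a) := by
    intro i r
    rw [hA]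
    simp only [Matrix.mulVec, dotProduct, Finset.sum_apply, Matrix.sum_apply,
      Matrix.vecMulVec_apply, Finset.sum_mul, Finset.mul_sum]
    rw [Finset.sum_comm]
    exact Finset.sum_congr rfl fun j _ => Finset.sum_congr rfl fun a _ => by ring
  have key : nuclearNorm A = ∑ j, ∑ i, (∑ r, qv A i r * u j r) * (∑ a, v j a * evec A i a) := by
    rw [nn_eq]
    rw [Finset.sum_comm]
    refine Finset.sum_congr rfl fun i _ => ?_
    rw [← qv_dot_mulVec A i]
    calc ∑ r, qv A i r * (A *ᵥ evec A i) r
        = ∑ r, ∑ j, qv A i r * u j r * (∑ a, v j a * evec A i a) := by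
          refine Finset.sum_congr rfl fun r _ => ?_
          rw [hAv i r, Finset.mul_sum]
          exact Finset.sum_congr rfl fun j _ => by ring
      _ = ∑ j, (∑ r, qv A i r * u j r) * (∑ a, v j a * evec A i a) := by
          rw [Finset.sum_comm]
          exact Finset.sum_congr rfl fun j _ => (Finset.sum_mul _ _ _).symm
  rw [key]
  refine Finset.sum_le_sum fun j _ => ?_
  calc ∑ i, (∑ r, qv A i r * u j r) * (∑ a, v j a * evec A i a)
      ≤ en (fun i => ∑ r, qv A i r * u j r) * en (fun i => ∑ a, v j a * evec A i a) :=
        cs _ _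
    _ ≤ en (u j) * en (v j) := by
        apply mul_le_mul
        · exact en_mono (bessel A (u j))
        · refine en_mono (le_of_eq ?_)
          have hexp : ∀ i, (∑ a, v j a * evec A i a) ^ 2
              = ∑ a, ∑ b, (v j a * v j b) * (evec A i a * evec A i b) := by
            intro i
            rw [sq, Finset.sum_mul_sum]
            exact Finset.sum_congr rfl fun a _ => Finset.sum_congr rfl fun b _ => by ring
          calc ∑ i, (∑ a, v j a * evec A i a) ^ 2
              = ∑ a, ∑ b, (v j a * v j b) * ∑ i, evec A i a * evec A i b := by
                rw [Finset.sum_congr rfl fun i (_ : i ∈ Finset.univ) => hexp i,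
                  Finset.sum_comm]
                refine Finset.sum_congr rfl fun a _ => ?_
                rw [Finset.sum_comm]
                exact Finset.sum_congr rfl fun b _ => (Finset.mul_sum _ _ _).symm
            _ = ∑ a, v j a ^ 2 := by
                refine Finset.sum_congr rfl fun a _ => ?_
                rw [Finset.sum_eq_single a]
                · rw [evec_complete, if_pos rfl, mul_one, sq]
                · intro b _ hb
                  rw [evec_complete, if_neg (Ne.symm hb), mul_zero]
                · intro ha; exact absurd (Finset.mem_univ a) ha
        · exact en_nonneg _
        · exact en_nonneg _

/-- L2: optimal factorization. -/
lemma exists_fact (A : Matrix ι κ ℝ) :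
    ∃ (u : κ → ι → ℝ) (v : κ → κ → ℝ),
      A = ∑ i, vecMulVec (u i) (v i) ∧
      (∑ i, en (u i) * en (v i) = nuclearNorm A) ∧
      (∑ i, (en (u i) ^ 2 + en (v i) ^ 2) = 2 * nuclearNorm A) := by
  have hcc : ∀ i : κ, Real.sqrt (Real.sqrt (eval A i)) ^ 2 = Real.sqrt (eval A i) :=
    fun i => Real.sq_sqrt (Real.sqrt_nonneg _)
  set cc : κ → ℝ := fun i => Real.sqrt (Real.sqrt (eval A i))
  have hu2 : ∀ i, en ((cc i)⁻¹ • (A *ᵥ evec A i)) ^ 2 = Real.sqrt (eval A i) := by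
    intro i
    rw [en_sq]
    have : ∀ r, ((cc i)⁻¹ • (A *ᵥ evec A i)) r ^ 2 = (cc i)⁻¹ ^ 2 * ((A *ᵥ evec A i) r) ^ 2 := by
      intro r; simp only [Pi.smul_apply, smul_eq_mul]; ring
    rw [Finset.sum_congr rfl fun r (_ : r ∈ Finset.univ) => this r, ← Finset.mul_sum,
      sq_mulVec_evec]
    rcases eq_or_ne (eval A i) 0 with h | h
    · simp [h]
    · have hpos : 0 < eval A i := lt_of_le_of_ne (eval_nonneg A i) (Ne.symm h)
      have hsne : Real.sqrt (eval A i) ≠ 0 := Real.sqrt_ne_zero'.mpr hpos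
      rw [inv_pow, hcc i]
      rw [show eval A i = Real.sqrt (eval A i) * Real.sqrt (eval A i) from
        (Real.mul_self_sqrt hpos.le).symm]
      field_simp
      rw [Real.sqrt_sq (Real.sqrt_nonneg _)]
  have hv2 : ∀ i, en (cc i • evec A i) ^ 2 = Real.sqrt (eval A i) := by
    intro i
    rw [en_sq]
    have : ∀ r, (cc i • evec A i) r ^ 2 = cc i ^ 2 * (evec A i r * evec A i r) := by
      intro r; simp only [Pi.smul_apply, smul_eq_mul]; ring
    rw [Finset.sum_congr rfl fun r (_ : r ∈ Finset.univ) => this r, ← Finset.mul_sum,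
      evec_ortho, if_pos rfl, mul_one, hcc i]
  refine ⟨fun i => (cc i)⁻¹ • (A *ᵥ evec A i), fun i => cc i • evec A i, ?_, ?_, ?_⟩
  · have hterm : ∀ i, vecMulVec ((cc i)⁻¹ • (A *ᵥ evec A i)) (cc i • evec A i)
        = vecMulVec (A *ᵥ evec A i) (evec A i) := by
      intro i
      rcases eq_or_ne (eval A i) 0 with h | h
      · ext r p
        simp [Matrix.vecMulVec_apply, mulVec_evec_eq_zero A h]
      · have hpos : 0 < eval A i := lt_of_le_of_ne (eval_nonneg A i) (Ne.symm h)
        have hccne : cc i ≠ 0 := by positivity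
        ext r p
        simp only [Matrix.vecMulVec_apply, Pi.smul_apply, smul_eq_mul]
        field_simp
    rw [Finset.sum_congr rfl fun i (_ : i ∈ Finset.univ) => hterm i]
    ext r p
    simp only [Matrix.sum_apply, Matrix.vecMulVec_apply, Matrix.mulVec, dotProduct]
    calc A r p = ∑ a, A r a * (if a = p then 1 else 0) := by simp
      _ = ∑ a, ∑ i, (A r a * evec A i a) * evec A i p := by
          refine Finset.sum_congr rfl fun a _ => ?_
          rw [← evec_complete A a p, Finset.mul_sum]
          exact Finset.sum_congr rfl fun i _ => by ring
      _ = ∑ i, (∑ a, A r a * evec A i a) * evec A i p := by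
          rw [Finset.sum_comm]
          exact Finset.sum_congr rfl fun i _ => (Finset.sum_mul _ _ _).symm
  · rw [nn_eq]
    refine Finset.sum_congr rfl fun i _ => ?_
    dsimp only
    rw [en_eq_sqrt_sq ((cc i)⁻¹ • (A *ᵥ evec A i)), en_eq_sqrt_sq (cc i • evec A i),
      hu2 i, hv2 i, Real.mul_self_sqrt (Real.sqrt_nonneg _)]
  · rw [nn_eq, Finset.mul_sum]
    refine Finset.sum_congr rfl fun i _ => ?_
    dsimp only
    rw [hu2 i, hv2 i]; ring

/-- transpose invariance of the nuclear norm. -/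
lemma nn_transpose_le {α β : Type*} [Fintype α] [Fintype β] [DecidableEq α] [DecidableEq β]
    (M : Matrix α β ℝ) : nuclearNorm Mᵀ ≤ nuclearNorm M := by
  obtain ⟨u, v, hfac, hsum, -⟩ := exists_fact M
  have hT : Mᵀ = ∑ i, vecMulVec (v i) (u i) := by
    rw [hfac, Matrix.transpose_sum]
    refine Finset.sum_congr rfl fun i _ => ?_
    ext r p
    simp [Matrix.vecMulVec_apply, mul_comm]
  calc nuclearNorm Mᵀ ≤ ∑ i, en (v i) * en (u i) := hT ▸ nn_le_sum v u
    _ = nuclearNorm M := by rw [← hsum]; exact Finset.sum_congr rfl fun i _ => mul_comm _ _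

lemma nn_transpose {α β : Type*} [Fintype α] [Fintype β] [DecidableEq α] [DecidableEq β]
    (M : Matrix α β ℝ) : nuclearNorm Mᵀ = nuclearNorm M := by
  refine le_antisymm (nn_transpose_le M) ?_
  have := nn_transpose_le Mᵀ
  rwa [Matrix.transpose_transpose] at this

/-- Infima of mutually dominating families agree. -/
lemma iInf_eq_iInf {α β : Sort*} [Nonempty α] [Nonempty β] (f : α → ℝ) (g : β → ℝ)
    (h1 : ∀ a, ∃ b, g b ≤ f a) (h2 : ∀ b, ∃ a, f a ≤ g b) : (⨅ a, f a) = ⨅ b, g b := by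
  by_cases hf : BddBelow (Set.range f)
  · have hg : BddBelow (Set.range g) := by
      obtain ⟨mm, hm⟩ := hf
      refine ⟨mm, ?_⟩
      rintro y ⟨b, rfl⟩
      obtain ⟨a, ha⟩ := h2 b
      exact le_trans (hm ⟨a, rfl⟩) ha
    refine le_antisymm ?_ ?_
    · refine le_ciInf fun b => ?_
      obtain ⟨a, ha⟩ := h2 b
      exact le_trans (ciInf_le hf a) ha
    · refine le_ciInf fun a => ?_
      obtain ⟨b, hb⟩ := h1 a
      exact le_trans (ciInf_le hg b) hb
  · have hg : ¬ BddBelow (Set.range g) := by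
      intro hg
      obtain ⟨mm, hm⟩ := hg
      refine hf ⟨mm, ?_⟩
      rintro y ⟨a, rfl⟩
      obtain ⟨b, hb⟩ := h1 a
      exact le_trans (hm ⟨b, rfl⟩) hb
    rw [Real.iInf_of_not_bddBelow hf, Real.iInf_of_not_bddBelow hg]

section Pad

open Classical in
/-- pad a family along an embedding by zero. -/
noncomputable def padf {J T M : Type*} [Zero M] (e : J ↪ T) (ψ : J → M) : T → M :=
  fun t => if h : ∃ j, e j = t then ψ h.choose else 0

lemma padf_apply {J T M : Type*} [Zero M] (e : J ↪ T) (ψ : J → M) (j : J) :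
    padf e ψ (e j) = ψ j := by
  rw [padf]
  have h : ∃ j', e j' = e j := ⟨j, rfl⟩
  rw [dif_pos h]
  congr 1
  exact e.injective h.choose_spec

lemma sum_padf {J T M N : Type*} [Zero M] [AddCommMonoid N] [Fintype J] [Fintype T]
    (e : J ↪ T) (ψ : J → M) (G : M → N) (hG : G 0 = 0) :
    ∑ t, G (padf e ψ t) = ∑ j, G (ψ j) := by
  calc ∑ t, G (padf e ψ t)
      = ∑ t ∈ Finset.univ.map e, G (padf e ψ t) := by
        refine (Finset.sum_subset (Finset.subset_univ _) ?_).symm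
        intro t _ ht
        have : ¬ ∃ j, e j = t := by
          intro ⟨j, hj⟩
          exact ht (Finset.mem_map.mpr ⟨j, Finset.mem_univ j, hj⟩)
        rw [padf, dif_neg this, hG]
    _ = ∑ j, G (padf e ψ (e j)) := Finset.sum_map Finset.univ e _
    _ = ∑ j, G (ψ j) := Finset.sum_congr rfl fun j _ => by rw [padf_apply]

end Pad

section Blocks

variable {B : ℕ} {db : Fin B → ℕ}

/-- extend a block vector by zero. -/
def blk (b : Fin B) (f : Fin (db b) → ℝ) : (Σ b', Fin (db b')) → ℝ :=
  fun k' => if h : k'.1 = b then f (h ▸ k'.2) else 0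

lemma blk_same (b : Fin B) (f : Fin (db b) → ℝ) (k : Fin (db b)) :
    blk b f ⟨b, k⟩ = f k := by
  rw [blk, dif_pos rfl]

lemma blk_other {b b' : Fin B} (h : b' ≠ b) (f : Fin (db b) → ℝ) (k : Fin (db b')) :
    blk b f ⟨b', k⟩ = 0 := dif_neg h

lemma sum_sigma_split {M : Type*} [AddCommMonoid M] (F : (Σ b', Fin (db b')) → M) :
    ∑ k', F k' = ∑ b', ∑ k, F ⟨b', k⟩ := by
  rw [← Finset.univ_sigma_univ, Finset.sum_sigma]

end Blocks

lemma frob_sq {m n : Type*} [Fintype m] [Fintype n] (A : Matrix m n ℝ) :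
    frobNorm A ^ 2 = ∑ i, ∑ j, A i j ^ 2 :=
  Real.sq_sqrt (Finset.sum_nonneg fun _ _ => Finset.sum_nonneg fun _ _ => sq_nonneg _)

lemma frob_zero {m n : Type*} [Fintype m] [Fintype n] :
    frobNorm (0 : Matrix m n ℝ) = 0 := by
  rw [frobNorm]
  simp

lemma en_zero {ι : Type*} [Fintype ι] : en (0 : ι → ℝ) = 0 := by
  rw [en]; simp

/-- Factorization whose index embeds into any large enough type, columns version. -/
lemma fact_into_col {ι κ : Type*} [Fintype ι] [Fintype κ] [DecidableEq κ]
    (A : Matrix ι κ ℝ) (T : Type*) [Fintype T]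
    (hT : Fintype.card κ ≤ Fintype.card T) :
    ∃ (u : T → ι → ℝ) (v : T → κ → ℝ),
      A = ∑ t, vecMulVec (u t) (v t) ∧
      ∑ t, (en (u t) ^ 2 + en (v t) ^ 2) = 2 * nuclearNorm A := by
  obtain ⟨e⟩ := Function.Embedding.nonempty_iff_card_le.mpr hT
  obtain ⟨u, v, hfac, -, hsum⟩ := exists_fact A
  refine ⟨fun t => (padf e (fun i => (u i, v i)) t).1,
    fun t => (padf e (fun i => (u i, v i)) t).2, ?_, ?_⟩
  · rw [hfac]
    exact (sum_padf e (fun i => (u i, v i))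
      (fun pr => vecMulVec pr.1 pr.2) (by ext r p; simp [Matrix.vecMulVec_apply])).symm
  · rw [← hsum]
    exact sum_padf e (fun i => (u i, v i))
      (fun pr => en pr.1 ^ 2 + en pr.2 ^ 2) (by simp [en_sq])

/-- Factorization whose index embeds into any large enough type. -/
lemma fact_into {ι κ : Type*} [Fintype ι] [Fintype κ] [DecidableEq ι] [DecidableEq κ]
    (A : Matrix ι κ ℝ) (T : Type*) [Fintype T]
    (hT : Fintype.card κ ≤ Fintype.card T ∨ Fintype.card ι ≤ Fintype.card T) :
    ∃ (u : T → ι → ℝ) (v : T → κ → ℝ),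
      A = ∑ t, vecMulVec (u t) (v t) ∧
      ∑ t, (en (u t) ^ 2 + en (v t) ^ 2) = 2 * nuclearNorm A := by
  rcases hT with hT | hT
  · exact fact_into_col A T hT
  · obtain ⟨u1, v1, hfac, hsum⟩ := fact_into_col Aᵀ T hT
    refine ⟨v1, u1, ?_, ?_⟩
    · have := congrArg Matrix.transpose hfac
      rw [Matrix.transpose_transpose, Matrix.transpose_sum] at this
      rw [this]
      refine Finset.sum_congr rfl fun t _ => ?_
      ext r p
      simp [Matrix.vecMulVec_apply, mul_comm]
    · rw [← nn_transpose A, ← hsum]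
      exact Finset.sum_congr rfl fun t _ => by ring

section Blocks2

variable {B sz c : ℕ} {db : Fin B → ℕ}

def mkW1 (b : Fin B) (f : Fin (db b) × (Σ b', Fin (db b')) → ℝ) :
    Matrix (Σ b', Fin (db b')) (Σ b', Fin (db b')) ℝ :=
  Matrix.of fun a k' => blk b (fun k => f (k, a)) k'

def mkW2 (b : Fin B) (g : Fin (db b) × Fin c → ℝ) :
    Matrix (Σ b', Fin (db b')) (Fin c) ℝ :=
  Matrix.of fun l' p => blk b (fun l => g (l, p)) l'

lemma frob_mkW1 (b : Fin B) (f : Fin (db b) × (Σ b', Fin (db b')) → ℝ) :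
    frobNorm (mkW1 b f) ^ 2 = en f ^ 2 := by
  rw [frob_sq, en_sq]
  calc ∑ a, ∑ k', (mkW1 b f a k') ^ 2
      = ∑ a : (Σ b', Fin (db b')), ∑ b', ∑ k, (blk b (fun k => f (k, a)) ⟨b', k⟩) ^ 2 :=
        Finset.sum_congr rfl fun a _ => sum_sigma_split _
    _ = ∑ a : (Σ b', Fin (db b')), ∑ k, f (k, a) ^ 2 := by
        refine Finset.sum_congr rfl fun a _ => ?_
        rw [Finset.sum_eq_single b]
        · exact Finset.sum_congr rfl fun k _ => by rw [blk_same]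
        · intro b' _ hb'
          exact Finset.sum_eq_zero fun k _ => by rw [blk_other hb', zero_pow two_ne_zero]
        · intro hb; exact absurd (Finset.mem_univ b) hb
    _ = ∑ ka : Fin (db b) × (Σ b', Fin (db b')), f ka ^ 2 := by
        rw [Fintype.sum_prod_type]
        exact Finset.sum_comm

lemma frob_mkW2 (b : Fin B) (g : Fin (db b) × Fin c → ℝ) :
    frobNorm (mkW2 b g) ^ 2 = en g ^ 2 := by
  rw [frob_sq, en_sq]
  calc ∑ l', ∑ p, (mkW2 b g l' p) ^ 2
      = ∑ p, ∑ l', (mkW2 (c := c) b g l' p) ^ 2 := Finset.sum_comm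
    _ = ∑ p, ∑ b', ∑ l, (blk b (fun l => g (l, p)) ⟨b', l⟩) ^ 2 :=
        Finset.sum_congr rfl fun p _ => sum_sigma_split _
    _ = ∑ p, ∑ l, g (l, p) ^ 2 := by
        refine Finset.sum_congr rfl fun p _ => ?_
        rw [Finset.sum_eq_single b]
        · exact Finset.sum_congr rfl fun l _ => by rw [blk_same]
        · intro b' _ hb'
          exact Finset.sum_eq_zero fun l _ => by rw [blk_other hb', zero_pow two_ne_zero]
        · intro hb; exact absurd (Finset.mem_univ b) hb
    _ = ∑ lp : Fin (db b) × Fin c, g lp ^ 2 := by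
        rw [Fintype.sum_prod_type]
        exact Finset.sum_comm

/-- single-block product identity (no block-diagonality needed). -/
lemma single_block (X : Matrix (Fin sz) (Σ b', Fin (db b')) ℝ) (b : Fin B)
    (f : Fin (db b) × (Σ b', Fin (db b')) → ℝ) (g : Fin (db b) × Fin c → ℝ) :
    X * mkW1 b f * Xᵀ * X * mkW2 b g
      = ∑ k : Fin (db b), ∑ l : Fin (db b), (Xᵀ * X) ⟨b, k⟩ ⟨b, l⟩ •
          (X * Matrix.of fun a p => f (k, a) * g (l, p)) := by
  rw [Matrix.mul_assoc (X * mkW1 b f) Xᵀ X]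
  set M := X * mkW1 b f with hM
  set G := Xᵀ * X with hG
  have hMr : ∀ (r : Fin sz) (k' : (Σ b', Fin (db b'))),
      M r k' = ∑ a, X r a * blk b (fun k => f (k, a)) k' := by
    intro r k'
    rw [hM, Matrix.mul_apply]
    rfl
  ext r p
  have hRHS : (∑ k : Fin (db b), ∑ l : Fin (db b), G ⟨b, k⟩ ⟨b, l⟩ •
      (X * Matrix.of fun a p => f (k, a) * g (l, p))) r p
      = ∑ k : Fin (db b), ∑ l : Fin (db b),
          (∑ a, X r a * f (k, a)) * G ⟨b, k⟩ ⟨b, l⟩ * g (l, p) := by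
    simp only [Matrix.sum_apply, Matrix.smul_apply, smul_eq_mul, Matrix.mul_apply,
      Matrix.of_apply]
    refine Finset.sum_congr rfl fun k _ => Finset.sum_congr rfl fun l _ => ?_
    rw [Finset.sum_mul, Finset.sum_mul, Finset.mul_sum]
    exact Finset.sum_congr rfl fun a _ => by ring
  rw [hRHS]
  have hLHS : (M * G * mkW2 b g) r p
      = ∑ l' : (Σ b', Fin (db b')), (∑ k', M r k' * G k' l') * mkW2 b g l' p := by
    simp only [Matrix.mul_apply]
  rw [hLHS]
  calc ∑ l' : (Σ b', Fin (db b')), (∑ k', M r k' * G k' l') * mkW2 b g l' p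
      = ∑ b1, ∑ l, (∑ k', M r k' * G k' ⟨b1, l⟩) * blk b (fun l0 => g (l0, p)) ⟨b1, l⟩ := by
        rw [sum_sigma_split]
        rfl
    _ = ∑ l, (∑ k', M r k' * G k' ⟨b, l⟩) * g (l, p) := by
        rw [Finset.sum_eq_single b]
        · exact Finset.sum_congr rfl fun l _ => by rw [blk_same]
        · intro b1 _ hb1
          exact Finset.sum_eq_zero fun l _ => by rw [blk_other hb1, mul_zero]
        · intro hb; exact absurd (Finset.mem_univ b) hb
    _ = ∑ l, (∑ k, (∑ a, X r a * f (k, a)) * G ⟨b, k⟩ ⟨b, l⟩) * g (l, p) := by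
        refine Finset.sum_congr rfl fun l _ => ?_
        congr 1
        calc ∑ k' : (Σ b', Fin (db b')), M r k' * G k' ⟨b, l⟩
            = ∑ b0, ∑ k, M r ⟨b0, k⟩ * G ⟨b0, k⟩ ⟨b, l⟩ := sum_sigma_split _
          _ = ∑ k, (∑ a, X r a * f (k, a)) * G ⟨b, k⟩ ⟨b, l⟩ := by
              rw [Finset.sum_eq_single b]
              · refine Finset.sum_congr rfl fun k _ => ?_
                rw [hMr]
                congr 1
                exact Finset.sum_congr rfl fun a _ => by rw [blk_same]
              · intro b0 _ hb0
                refine Finset.sum_eq_zero fun k _ => ?_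
                rw [hMr]
                rw [Finset.sum_eq_zero fun a _ => by rw [blk_other hb0, mul_zero], zero_mul]
              · intro hb; exact absurd (Finset.mem_univ b) hb
    _ = ∑ k, ∑ l, (∑ a, X r a * f (k, a)) * G ⟨b, k⟩ ⟨b, l⟩ * g (l, p) := by
        rw [Finset.sum_comm]
        exact Finset.sum_congr rfl fun l _ => (Finset.sum_mul _ _ _)

/-- multi-block identity under block-diagonality. -/
lemma multi_block (X : Matrix (Fin sz) (Σ b', Fin (db b')) ℝ)
    (hbl : ∀ k l : (Σ b', Fin (db b')), k.1 ≠ l.1 → (Xᵀ * X) k l = 0)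
    {m : ℕ} (W1 : Fin m → Matrix (Σ b', Fin (db b')) (Σ b', Fin (db b')) ℝ)
    (W2 : Fin m → Matrix (Σ b', Fin (db b')) (Fin c) ℝ) :
    ∑ j, X * W1 j * Xᵀ * X * W2 j
      = ∑ b, ∑ k : Fin (db b), ∑ l : Fin (db b), (Xᵀ * X) ⟨b, k⟩ ⟨b, l⟩ •
          (X * Matrix.of fun a p => ∑ j, W1 j a ⟨b, k⟩ * W2 j ⟨b, l⟩ p) := by
  set G := Xᵀ * X with hG
  have key : ∀ j, X * W1 j * Xᵀ * X * W2 j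
      = ∑ b, ∑ k : Fin (db b), ∑ l : Fin (db b), G ⟨b, k⟩ ⟨b, l⟩ •
          (X * Matrix.of fun a p => W1 j a ⟨b, k⟩ * W2 j ⟨b, l⟩ p) := by
    intro j
    rw [Matrix.mul_assoc (X * W1 j) Xᵀ X, ← hG]
    ext r p
    have hRHS : (∑ b, ∑ k : Fin (db b), ∑ l : Fin (db b), G ⟨b, k⟩ ⟨b, l⟩ •
        (X * Matrix.of fun a p => W1 j a ⟨b, k⟩ * W2 j ⟨b, l⟩ p)) r p
        = ∑ b, ∑ l : Fin (db b), ∑ k : Fin (db b),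
            ((X * W1 j) r ⟨b, k⟩ * G ⟨b, k⟩ ⟨b, l⟩) * W2 j ⟨b, l⟩ p := by
      simp only [Matrix.sum_apply, Matrix.smul_apply, smul_eq_mul, Matrix.mul_apply,
        Matrix.of_apply]
      refine Finset.sum_congr rfl fun b _ => ?_
      rw [Finset.sum_comm]
      refine Finset.sum_congr rfl fun l _ => Finset.sum_congr rfl fun k _ => ?_
      rw [Finset.sum_mul, Finset.sum_mul, Finset.mul_sum]
      exact Finset.sum_congr rfl fun a _ => by ring
    rw [hRHS]
    have hLHS : ((X * W1 j) * G * W2 j) r p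
        = ∑ l' : (Σ b', Fin (db b')), (∑ k', (X * W1 j) r k' * G k' l') * W2 j l' p := by
      simp only [Matrix.mul_apply]
    rw [hLHS]
    calc ∑ l' : (Σ b', Fin (db b')), (∑ k', (X * W1 j) r k' * G k' l') * W2 j l' p
        = ∑ b1, ∑ l, (∑ k', (X * W1 j) r k' * G k' ⟨b1, l⟩) * W2 j ⟨b1, l⟩ p := by
          rw [sum_sigma_split]
      _ = ∑ b1, ∑ l, (∑ k, (X * W1 j) r ⟨b1, k⟩ * G ⟨b1, k⟩ ⟨b1, l⟩) * W2 j ⟨b1, l⟩ p := by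
          refine Finset.sum_congr rfl fun b1 _ => Finset.sum_congr rfl fun l _ => ?_
          congr 1
          calc ∑ k' : (Σ b', Fin (db b')), (X * W1 j) r k' * G k' ⟨b1, l⟩
              = ∑ b0, ∑ k, (X * W1 j) r ⟨b0, k⟩ * G ⟨b0, k⟩ ⟨b1, l⟩ := sum_sigma_split _
            _ = ∑ k, (X * W1 j) r ⟨b1, k⟩ * G ⟨b1, k⟩ ⟨b1, l⟩ := by
                rw [Finset.sum_eq_single b1]
                · intro b0 _ hb0
                  exact Finset.sum_eq_zero fun k _ => by
                    rw [hbl ⟨b0, k⟩ ⟨b1, l⟩ hb0, mul_zero]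
                · intro hb; exact absurd (Finset.mem_univ b1) hb
      _ = ∑ b1, ∑ l, ∑ k, ((X * W1 j) r ⟨b1, k⟩ * G ⟨b1, k⟩ ⟨b1, l⟩) * W2 j ⟨b1, l⟩ p := by
          exact Finset.sum_congr rfl fun b1 _ => Finset.sum_congr rfl fun l _ =>
            Finset.sum_mul _ _ _
  calc ∑ j, X * W1 j * Xᵀ * X * W2 j
      = ∑ j, ∑ b, ∑ k : Fin (db b), ∑ l : Fin (db b), G ⟨b, k⟩ ⟨b, l⟩ •
          (X * Matrix.of fun a p => W1 j a ⟨b, k⟩ * W2 j ⟨b, l⟩ p) :=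
        Finset.sum_congr rfl fun j _ => key j
    _ = ∑ b, ∑ k : Fin (db b), ∑ l : Fin (db b), ∑ j, G ⟨b, k⟩ ⟨b, l⟩ •
          (X * Matrix.of fun a p => W1 j a ⟨b, k⟩ * W2 j ⟨b, l⟩ p) := by
        rw [Finset.sum_comm]
        refine Finset.sum_congr rfl fun b _ => ?_
        rw [Finset.sum_comm]
        refine Finset.sum_congr rfl fun k _ => ?_
        rw [Finset.sum_comm]
    _ = ∑ b, ∑ k : Fin (db b), ∑ l : Fin (db b), G ⟨b, k⟩ ⟨b, l⟩ •
          (X * Matrix.of fun a p => ∑ j, W1 j a ⟨b, k⟩ * W2 j ⟨b, l⟩ p) := by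
        refine Finset.sum_congr rfl fun b _ => Finset.sum_congr rfl fun k _ =>
          Finset.sum_congr rfl fun l _ => ?_
        rw [← Finset.smul_sum, ← Matrix.mul_sum]
        congr 2
        ext a p
        simp [Matrix.sum_apply]

lemma frob_split1 (W : Matrix (Σ b', Fin (db b')) (Σ b', Fin (db b')) ℝ) :
    frobNorm W ^ 2
      = ∑ b, en (fun ka : Fin (db b) × (Σ b', Fin (db b')) => W ka.2 ⟨b, ka.1⟩) ^ 2 := by
  rw [frob_sq]
  calc ∑ a, ∑ k', W a k' ^ 2
      = ∑ a : (Σ b', Fin (db b')), ∑ b, ∑ k, W a ⟨b, k⟩ ^ 2 :=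
        Finset.sum_congr rfl fun a _ => sum_sigma_split _
    _ = ∑ b, ∑ a : (Σ b', Fin (db b')), ∑ k, W a ⟨b, k⟩ ^ 2 := Finset.sum_comm
    _ = ∑ b, en (fun ka : Fin (db b) × (Σ b', Fin (db b')) => W ka.2 ⟨b, ka.1⟩) ^ 2 := by
        refine Finset.sum_congr rfl fun b _ => ?_
        rw [en_sq, Fintype.sum_prod_type]
        exact Finset.sum_comm

lemma frob_split2 (W : Matrix (Σ b', Fin (db b')) (Fin c) ℝ) :
    frobNorm W ^ 2 = ∑ b, en (fun lp : Fin (db b) × Fin c => W ⟨b, lp.1⟩ lp.2) ^ 2 := by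
  rw [frob_sq]
  calc ∑ l', ∑ p, W l' p ^ 2
      = ∑ b, ∑ l, ∑ p, W ⟨b, l⟩ p ^ 2 := sum_sigma_split _
    _ = ∑ b, en (fun lp : Fin (db b) × Fin c => W ⟨b, lp.1⟩ lp.2) ^ 2 := by
        refine Finset.sum_congr rfl fun b _ => ?_
        rw [en_sq, Fintype.sum_prod_type]

lemma mul_le_half_sq (a b : ℝ) : a * b ≤ (a ^ 2 + b ^ 2) / 2 := by
  nlinarith [sq_nonneg (a - b)]

end Blocks2

end Cor1Aux

open Cor1Aux in
/-- **Corollary 1 (linear self-attention with block-diagonal Gram matrices).**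
The feature index set `{1,…,d}` is partitioned into `B` blocks of sizes `db b`,
encoded as the sigma type `Σ b, Fin (db b)`; `d = ∑ b, db b`. If every Gram
matrix `Gᵢ = Xᵢᵀ Xᵢ` vanishes off the diagonal blocks, the convex program
separates over the blocks. -/
theorem linear_self_attention_convex_dual_block_diagonal
    (n s c B : ℕ) (hn : 0 < n) (hs : 0 < s) (hc : 0 < c) (hB : 0 < B)
    (db : Fin B → ℕ) (hdb : ∀ b, 0 < db b)
    (β : ℝ) (hβ : 0 < β)
    (X : Fin n → Matrix (Fin s) (Σ b : Fin B, Fin (db b)) ℝ)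
    (Y : Fin n → Matrix (Fin s) (Fin c) ℝ)
    (L : Matrix (Fin s) (Fin c) ℝ → Matrix (Fin s) (Fin c) ℝ → ℝ)
    (hconv : ∀ Yi, ConvexOn ℝ Set.univ fun R => L R Yi)
    (hlsc : ∀ Yi, LowerSemicontinuous fun R => L R Yi)
    (hblock : ∀ (i : Fin n) (k l : Σ b : Fin B, Fin (db b)),
      k.1 ≠ l.1 → ((X i)ᵀ * X i) k l = 0) :
    ∃ mstar : ℕ, mstar ≤ min ((∑ b, db b) * (∑ b, db b)) ((∑ b, db b) * c) ∧
      ∀ m : ℕ, mstar ≤ m →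
      (⨅ W : (Fin m → Matrix (Σ b : Fin B, Fin (db b)) (Σ b : Fin B, Fin (db b)) ℝ) ×
              (Fin m → Matrix (Σ b : Fin B, Fin (db b)) (Fin c) ℝ),
        (∑ i, L (∑ j, X i * W.1 j * (X i)ᵀ * (X i) * W.2 j) (Y i)) +
          (β / 2) * ∑ j, (frobNorm (W.1 j) ^ 2 + frobNorm (W.2 j) ^ 2))
      =
      (⨅ Z : (b : Fin B) → Matrix (Fin (db b) × (Σ b' : Fin B, Fin (db b')))
              (Fin (db b) × Fin c) ℝ,
        (∑ i, L (∑ b : Fin B, ∑ k : Fin (db b), ∑ l : Fin (db b),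
            ((X i)ᵀ * X i) ⟨b, k⟩ ⟨b, l⟩ •
              (X i * Matrix.of fun a p => Z b (k, a) (l, p))) (Y i)) +
          β * ∑ b, nuclearNorm (Z b)) := by
  classical
  refine ⟨min ((∑ b, db b) * (∑ b, db b)) ((∑ b, db b) * c), le_refl _, ?_⟩
  intro m hm
  apply iInf_eq_iInf
  · -- every W is dominated by some Z
    intro W
    refine ⟨fun b => Matrix.of fun ka lp =>
      ∑ j, W.1 j ka.2 ⟨b, ka.1⟩ * W.2 j ⟨b, lp.1⟩ lp.2, ?_⟩
    have hloss : ∀ i : Fin n,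
        (∑ j, X i * W.1 j * (X i)ᵀ * (X i) * W.2 j)
          = ∑ b : Fin B, ∑ k : Fin (db b), ∑ l : Fin (db b),
              ((X i)ᵀ * X i) ⟨b, k⟩ ⟨b, l⟩ •
                (X i * Matrix.of fun a p =>
                  (Matrix.of fun (ka : Fin (db b) × (Σ b' : Fin B, Fin (db b')))
                      (lp : Fin (db b) × Fin c) =>
                    ∑ j, W.1 j ka.2 ⟨b, ka.1⟩ * W.2 j ⟨b, lp.1⟩ lp.2) (k, a) (l, p)) :=
      fun i => multi_block (X i) (hblock i) W.1 W.2
    have hreg : β * ∑ b, nuclearNorm (Matrix.of fun (ka : Fin (db b) × (Σ b' : Fin B, Fin (db b')))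
          (lp : Fin (db b) × Fin c) => ∑ j, W.1 j ka.2 ⟨b, ka.1⟩ * W.2 j ⟨b, lp.1⟩ lp.2)
        ≤ (β / 2) * ∑ j, (frobNorm (W.1 j) ^ 2 + frobNorm (W.2 j) ^ 2) := by
      have hnn : ∀ b : Fin B, nuclearNorm (Matrix.of fun (ka : Fin (db b) × (Σ b' : Fin B, Fin (db b')))
          (lp : Fin (db b) × Fin c) => ∑ j, W.1 j ka.2 ⟨b, ka.1⟩ * W.2 j ⟨b, lp.1⟩ lp.2)
          ≤ ∑ j, en (fun ka : Fin (db b) × (Σ b' : Fin B, Fin (db b')) => W.1 j ka.2 ⟨b, ka.1⟩)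
              * en (fun lp : Fin (db b) × Fin c => W.2 j ⟨b, lp.1⟩ lp.2) := by
        intro b
        have hfac : (Matrix.of fun (ka : Fin (db b) × (Σ b' : Fin B, Fin (db b')))
            (lp : Fin (db b) × Fin c) => ∑ j, W.1 j ka.2 ⟨b, ka.1⟩ * W.2 j ⟨b, lp.1⟩ lp.2)
            = ∑ j, Matrix.vecMulVec
                (fun ka : Fin (db b) × (Σ b' : Fin B, Fin (db b')) => W.1 j ka.2 ⟨b, ka.1⟩)
                (fun lp : Fin (db b) × Fin c => W.2 j ⟨b, lp.1⟩ lp.2) := by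
          ext ka lp
          simp [Matrix.sum_apply, Matrix.vecMulVec_apply]
        rw [hfac]
        exact nn_le_sum _ _
      calc β * ∑ b, nuclearNorm _ ≤ β * ∑ b, ∑ j, en (fun ka : Fin (db b) × (Σ b' : Fin B, Fin (db b')) => W.1 j ka.2 ⟨b, ka.1⟩)
              * en (fun lp : Fin (db b) × Fin c => W.2 j ⟨b, lp.1⟩ lp.2) := by
            apply mul_le_mul_of_nonneg_left _ hβ.le
            exact Finset.sum_le_sum fun b _ => hnn b
        _ = β * ∑ j, ∑ b, en (fun ka : Fin (db b) × (Σ b' : Fin B, Fin (db b')) => W.1 j ka.2 ⟨b, ka.1⟩)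
              * en (fun lp : Fin (db b) × Fin c => W.2 j ⟨b, lp.1⟩ lp.2) := by
            rw [Finset.sum_comm]
        _ ≤ β * ∑ j, (frobNorm (W.1 j) ^ 2 + frobNorm (W.2 j) ^ 2) / 2 := by
            apply mul_le_mul_of_nonneg_left _ hβ.le
            refine Finset.sum_le_sum fun j _ => ?_
            calc ∑ b, en (fun ka : Fin (db b) × (Σ b' : Fin B, Fin (db b')) => W.1 j ka.2 ⟨b, ka.1⟩)
                  * en (fun lp : Fin (db b) × Fin c => W.2 j ⟨b, lp.1⟩ lp.2)
                ≤ ∑ b, (en (fun ka : Fin (db b) × (Σ b' : Fin B, Fin (db b')) => W.1 j ka.2 ⟨b, ka.1⟩) ^ 2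
                    + en (fun lp : Fin (db b) × Fin c => W.2 j ⟨b, lp.1⟩ lp.2) ^ 2) / 2 :=
                  Finset.sum_le_sum fun b _ => mul_le_half_sq _ _
              _ = (frobNorm (W.1 j) ^ 2 + frobNorm (W.2 j) ^ 2) / 2 := by
                  rw [frob_split1 (W.1 j), frob_split2 (W.2 j), ← Finset.sum_add_distrib,
                    ← Finset.sum_div]
        _ = (β / 2) * ∑ j, (frobNorm (W.1 j) ^ 2 + frobNorm (W.2 j) ^ 2) := by
            rw [Finset.mul_sum, Finset.mul_sum]
            exact Finset.sum_congr rfl fun j _ => by ring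
    refine add_le_add ?_ hreg
    refine le_of_eq (Finset.sum_congr rfl fun i _ => ?_)
    rw [hloss i]
  · -- every Z is matched exactly by some W
    intro Z
    have hdsum : Fintype.card (Σ b : Fin B, Fin (db b)) = ∑ b, db b := by
      simp [Fintype.card_sigma]
    obtain ⟨tsz, htsz, hfact⟩ : ∃ tsz : Fin B → ℕ, (∑ b, tsz b) ≤ m ∧
        ∀ b : Fin B, ∃ (u : Fin (tsz b) → (Fin (db b) × (Σ b' : Fin B, Fin (db b'))) → ℝ)
          (v : Fin (tsz b) → (Fin (db b) × Fin c) → ℝ),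
          Z b = ∑ t, Matrix.vecMulVec (u t) (v t) ∧
          ∑ t, (en (u t) ^ 2 + en (v t) ^ 2) = 2 * nuclearNorm (Z b) := by
      rcases le_total ((∑ b, db b) * c) ((∑ b, db b) * (∑ b, db b)) with hcd | hcd
      · refine ⟨fun b => db b * c, ?_, fun b => ?_⟩
        · calc ∑ b, db b * c = (∑ b, db b) * c := (Finset.sum_mul _ _ _).symm
            _ = min ((∑ b, db b) * (∑ b, db b)) ((∑ b, db b) * c) := (min_eq_right hcd).symm
            _ ≤ m := hm
        · exact fact_into (Z b) _ (Or.inl (by simp))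
      · refine ⟨fun b => db b * (∑ b', db b'), ?_, fun b => ?_⟩
        · calc ∑ b, db b * (∑ b', db b') = (∑ b, db b) * (∑ b', db b') :=
              (Finset.sum_mul _ _ _).symm
            _ = min ((∑ b, db b) * (∑ b, db b)) ((∑ b, db b) * c) := (min_eq_left hcd).symm
            _ ≤ m := hm
        · exact fact_into (Z b) _ (Or.inr (by simp [hdsum]))
    choose u v hfac hsum using hfact
    have hcard : Fintype.card (Σ b : Fin B, Fin (tsz b)) ≤ Fintype.card (Fin m) := by
      simpa [Fintype.card_sigma] using htsz
    obtain ⟨e⟩ := Function.Embedding.nonempty_iff_card_le.mpr hcard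
    set ψ : (Σ b : Fin B, Fin (tsz b)) →
        (Matrix (Σ b' : Fin B, Fin (db b')) (Σ b' : Fin B, Fin (db b')) ℝ ×
          Matrix (Σ b' : Fin B, Fin (db b')) (Fin c) ℝ) :=
      fun bt => (mkW1 bt.1 (u bt.1 bt.2), mkW2 bt.1 (v bt.1 bt.2)) with hψ
    refine ⟨⟨fun j => (padf e ψ j).1, fun j => (padf e ψ j).2⟩, le_of_eq ?_⟩
    have hloss : ∀ i : Fin n,
        (∑ j, X i * (padf e ψ j).1 * (X i)ᵀ * (X i) * (padf e ψ j).2)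
          = ∑ b : Fin B, ∑ k : Fin (db b), ∑ l : Fin (db b),
              ((X i)ᵀ * X i) ⟨b, k⟩ ⟨b, l⟩ •
                (X i * Matrix.of fun a p => Z b (k, a) (l, p)) := by
      intro i
      calc ∑ j, X i * (padf e ψ j).1 * (X i)ᵀ * (X i) * (padf e ψ j).2
          = ∑ bt : (Σ b : Fin B, Fin (tsz b)),
              X i * (ψ bt).1 * (X i)ᵀ * (X i) * (ψ bt).2 :=
            sum_padf e ψ (fun pr => X i * pr.1 * (X i)ᵀ * (X i) * pr.2) (by simp)
        _ = ∑ b : Fin B, ∑ t, X i * mkW1 b (u b t) * (X i)ᵀ * (X i) * mkW2 b (v b t) := by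
            rw [← Finset.univ_sigma_univ, Finset.sum_sigma]
        _ = ∑ b : Fin B, ∑ t, ∑ k : Fin (db b), ∑ l : Fin (db b),
              ((X i)ᵀ * X i) ⟨b, k⟩ ⟨b, l⟩ •
                (X i * Matrix.of fun a p => u b t (k, a) * v b t (l, p)) :=
            Finset.sum_congr rfl fun b _ => Finset.sum_congr rfl fun t _ =>
              single_block (X i) b (u b t) (v b t)
        _ = ∑ b : Fin B, ∑ k : Fin (db b), ∑ l : Fin (db b),
              ((X i)ᵀ * X i) ⟨b, k⟩ ⟨b, l⟩ •
                (X i * Matrix.of fun a p => Z b (k, a) (l, p)) := by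
            refine Finset.sum_congr rfl fun b _ => ?_
            rw [Finset.sum_comm]
            refine Finset.sum_congr rfl fun k _ => ?_
            rw [Finset.sum_comm]
            refine Finset.sum_congr rfl fun l _ => ?_
            rw [← Finset.smul_sum, ← Matrix.mul_sum]
            congr 2
            ext a p
            simp [Matrix.sum_apply, hfac b, Matrix.vecMulVec_apply]
    have hreg : (β / 2) * ∑ j, (frobNorm ((padf e ψ j).1) ^ 2 + frobNorm ((padf e ψ j).2) ^ 2)
        = β * ∑ b, nuclearNorm (Z b) := by
      have h1 : ∑ j, (frobNorm ((padf e ψ j).1) ^ 2 + frobNorm ((padf e ψ j).2) ^ 2)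
          = ∑ b, 2 * nuclearNorm (Z b) := by
        calc ∑ j, (frobNorm ((padf e ψ j).1) ^ 2 + frobNorm ((padf e ψ j).2) ^ 2)
            = ∑ bt : (Σ b : Fin B, Fin (tsz b)),
                (frobNorm ((ψ bt).1) ^ 2 + frobNorm ((ψ bt).2) ^ 2) :=
              sum_padf e ψ (fun pr => frobNorm pr.1 ^ 2 + frobNorm pr.2 ^ 2)
                (by simp [frob_zero])
          _ = ∑ b : Fin B, ∑ t, (frobNorm (mkW1 b (u b t)) ^ 2 + frobNorm (mkW2 b (v b t)) ^ 2) := by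
              rw [← Finset.univ_sigma_univ, Finset.sum_sigma]
          _ = ∑ b : Fin B, ∑ t, (en (u b t) ^ 2 + en (v b t) ^ 2) := by
              refine Finset.sum_congr rfl fun b _ => Finset.sum_congr rfl fun t _ => ?_
              rw [frob_mkW1, frob_mkW2]
          _ = ∑ b, 2 * nuclearNorm (Z b) := Finset.sum_congr rfl fun b _ => hsum b
      rw [h1, Finset.mul_sum, Finset.mul_sum]
      exact Finset.sum_congr rfl fun b _ => by ring
    rw [hreg]
    congr 1
    exact Finset.sum_congr rfl fun i _ => by rw [hloss i]
end
end

section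
/- For each m, let p_FN(m) be the infimum over vectors w_{1j} ∈ ℝ^{sd} and w_{2j} ∈ ℝ^c (j = 1,…,m) of Σ_{i=1}^n L(Σ_{j=1}^m (circ(X_i) w_{1j}) w_{2j}ᵀ, Y_i) + (β/2) Σ_{j=1}^m (‖w_{1j}‖₂² + ‖w_{2j}‖₂²). Then there exists m* ≤ min{sd, c} such that for every m ≥ m*, p_FN(m) equals the infimum over Z ∈ ℝ^{sd×c} of Σ_{i=1}^n L(circ(X_i) Z, Y_i) + β‖Z‖_*. -/
open Matrix Pointwise Kronecker

noncomputable section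

namespace LFNO

variable {ι κ : Type*} [Fintype ι] [Fintype κ] [DecidableEq κ]

set_option linter.unusedSectionVars false

lemma svd_package (A : Matrix ι κ ℝ) :
    ∃ (σ : κ → ℝ) (p : κ → ι → ℝ) (q : κ → κ → ℝ),
      (∀ i, 0 ≤ σ i) ∧
      nuclearNorm A = ∑ i, σ i ∧
      (∀ i j, p i ⬝ᵥ p j = if i = j ∧ σ i ≠ 0 then 1 else 0) ∧
      (∀ i j, q i ⬝ᵥ q j = if i = j then 1 else 0) ∧
      (∀ i, A *ᵥ q i = σ i • p i) ∧
      (A = ∑ i, Matrix.vecMulVec (A *ᵥ q i) (q i)) := by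
  classical
  set hB := Matrix.isHermitian_conjTranspose_mul_self A with hBdef
  set μ : κ → ℝ := hB.eigenvalues with hμdef
  set q : κ → κ → ℝ := fun i => ⇑(hB.eigenvectorBasis i) with hqdef
  set σ : κ → ℝ := fun i => Real.sqrt (μ i) with hσdef
  have hμ0 : ∀ i, 0 ≤ μ i := fun i => Matrix.eigenvalues_conjTranspose_mul_self_nonneg A i
  have hσ0 : ∀ i, 0 ≤ σ i := fun i => Real.sqrt_nonneg _
  have hσsq : ∀ i, σ i ^ 2 = μ i := fun i => Real.sq_sqrt (hμ0 i)
  -- orthonormality of q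
  have hq : ∀ i j, q i ⬝ᵥ q j = if i = j then 1 else 0 := by
    intro i j
    have := (hB.eigenvectorBasis.orthonormal).2
    have h1 := orthonormal_iff_ite.mp hB.eigenvectorBasis.orthonormal i j
    simp [PiLp.inner_apply, dotProduct, mul_comm] at h1
    exact h1
  -- A q i dot A q j
  have hAq : ∀ i j, (A *ᵥ q i) ⬝ᵥ (A *ᵥ q j) = if i = j then μ i else 0 := by
    intro i j
    have h1 : (Aᴴ * A) *ᵥ q j = μ j • q j := hB.mulVec_eigenvectorBasis j
    have h2 : q i ⬝ᵥ ((Aᴴ * A) *ᵥ q j) = (A *ᵥ q i) ⬝ᵥ (A *ᵥ q j) := by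
      rw [← Matrix.mulVec_mulVec, Matrix.dotProduct_mulVec, Matrix.vecMul_conjTranspose]
      simp
    rw [← h2, h1, dotProduct_smul, hq i j]
    by_cases h : i = j <;> simp [h, smul_eq_mul]
  have hA0 : ∀ i, σ i = 0 → A *ᵥ q i = 0 := by
    intro i h
    have hμi : μ i = 0 := by
      have h' := Real.sqrt_eq_zero'.mp h
      have := hμ0 i; linarith
    have := hAq i i
    rw [if_pos rfl, hμi] at this
    exact dotProduct_self_eq_zero.mp this
  set p : κ → ι → ℝ := fun i => if σ i = 0 then 0 else (σ i)⁻¹ • (A *ᵥ q i) with hpdef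
  have he : ∀ i, A *ᵥ q i = σ i • p i := by
    intro i
    by_cases h : σ i = 0
    · simp [hpdef, h, hA0 i h]
    · simp [hpdef, h, smul_smul, mul_inv_cancel₀ h]
  have hp : ∀ i j, p i ⬝ᵥ p j = if i = j ∧ σ i ≠ 0 then 1 else 0 := by
    intro i j
    by_cases hi : σ i = 0
    · simp [hpdef, hi]
    · by_cases hj : σ j = 0
      · have hij : i ≠ j := by rintro rfl; exact hi hj
        simp [hpdef, hi, hj, hij]
      · simp only [hpdef, if_neg hi, if_neg hj]
        rw [smul_dotProduct, dotProduct_smul, hAq i j]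
        by_cases h : i = j
        · subst h
          have hμσ : μ i = σ i * σ i := by rw [← hσsq i]; ring
          rw [if_pos rfl, if_pos ⟨rfl, hi⟩, hμσ]
          simp only [smul_eq_mul]
          field_simp
        · simp [h, hi]
  -- completeness
  have hcomp : ∀ k b, (∑ i, q i k * q i b) = if k = b then 1 else 0 := by
    intro k b
    have h1 := hB.eigenvectorBasis.sum_inner_mul_inner
      (EuclideanSpace.single k (1:ℝ)) (EuclideanSpace.single b (1:ℝ))
    simp only [EuclideanSpace.inner_single_left, starRingEnd_apply, star_trivial, one_mul] at h1
    have h2 : ∀ i, (inner ℝ (hB.eigenvectorBasis i) (EuclideanSpace.single b (1:ℝ)) : ℝ)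
        = q i b := by
      intro i
      rw [real_inner_comm, EuclideanSpace.inner_single_left]
      simp only [starRingEnd_apply, star_trivial, one_mul]
      rfl
    simp_rw [h2] at h1
    rw [show (∑ i, q i k * q i b) = EuclideanSpace.single b (1:ℝ) k from h1,
      EuclideanSpace.single_apply]
  have hdecomp : A = ∑ i, Matrix.vecMulVec (A *ᵥ q i) (q i) := by
    ext a b
    rw [Matrix.sum_apply]
    simp only [Matrix.vecMulVec_apply, Matrix.mulVec, dotProduct]
    calc (A a b) = ∑ k, A a k * (if k = b then 1 else 0) := by simp
      _ = ∑ k, A a k * (∑ i, q i k * q i b) := by simp_rw [hcomp]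
      _ = ∑ k, ∑ i, A a k * (q i k * q i b) := by simp_rw [Finset.mul_sum]
      _ = ∑ i, ∑ k, A a k * (q i k * q i b) := Finset.sum_comm
      _ = ∑ i, (∑ k, A a k * q i k) * q i b := by simp_rw [Finset.sum_mul, mul_assoc]
  exact ⟨σ, p, q, hσ0, rfl, hp, hq, he, hdecomp⟩


lemma dotProduct_sum' {γ : Type*} (s : Finset γ) (v : ι → ℝ) (w : γ → ι → ℝ) :
    v ⬝ᵥ (∑ j ∈ s, w j) = ∑ j ∈ s, v ⬝ᵥ w j := by
  simp only [dotProduct, Finset.sum_apply, Finset.mul_sum]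
  exact Finset.sum_comm

lemma sum_mulVec' {γ : Type*} (s : Finset γ) (M : γ → Matrix ι κ ℝ) (x : κ → ℝ) :
    (∑ j ∈ s, M j) *ᵥ x = ∑ j ∈ s, M j *ᵥ x := by
  ext a
  simp only [Matrix.mulVec, dotProduct, Finset.sum_apply, Matrix.sum_apply, Finset.sum_mul]
  exact Finset.sum_comm

lemma vecMulVec_mulVec (u : ι → ℝ) (v : κ → ℝ) (x : κ → ℝ) :
    Matrix.vecMulVec u v *ᵥ x = (v ⬝ᵥ x) • u := by
  ext a
  simp only [Matrix.mulVec, Matrix.vecMulVec_apply, dotProduct, Pi.smul_apply, smul_eq_mul,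
    Finset.sum_mul]
  exact Finset.sum_congr rfl fun b _ => by ring

lemma dotProduct_self_eq_sum_sq (v : ι → ℝ) : v ⬝ᵥ v = ∑ r, (v r) ^ 2 := by
  simp [dotProduct, sq]

/-- Bessel-type inequality for an "orthonormal or zero" finite family. -/
lemma bessel {γ : Type*} [Fintype γ] [DecidableEq γ] (p : γ → ι → ℝ)
    (horth : ∀ i j, i ≠ j → p i ⬝ᵥ p j = 0) (hnorm : ∀ i, p i ⬝ᵥ p i ≤ 1) (u : ι → ℝ) :
    ∑ i, (p i ⬝ᵥ u) ^ 2 ≤ ∑ r, (u r) ^ 2 := by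
  set c : γ → ℝ := fun i => p i ⬝ᵥ u with hc
  set w : ι → ℝ := u - ∑ i, c i • p i with hw
  have hpos : (0:ℝ) ≤ w ⬝ᵥ w := by
    rw [dotProduct_self_eq_sum_sq]; positivity
  have hkey : w ⬝ᵥ w = u ⬝ᵥ u - 2 * ∑ i, c i ^ 2 + ∑ i, c i ^ 2 * (p i ⬝ᵥ p i) := by
    have h1 : u ⬝ᵥ (∑ i, c i • p i) = ∑ i, c i ^ 2 := by
      rw [dotProduct_sum']
      exact Finset.sum_congr rfl fun i _ => by
        rw [dotProduct_smul, smul_eq_mul, dotProduct_comm, sq]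
    have h2 : (∑ i, c i • p i) ⬝ᵥ u = ∑ i, c i ^ 2 := by
      rw [dotProduct_comm]; exact h1
    have h3 : (∑ i, c i • p i) ⬝ᵥ (∑ i, c i • p i) = ∑ i, c i ^ 2 * (p i ⬝ᵥ p i) := by
      rw [dotProduct_sum']
      refine Finset.sum_congr rfl fun j _ => ?_
      rw [dotProduct_comm, dotProduct_sum', Finset.sum_eq_single j]
      · rw [smul_dotProduct, dotProduct_smul, smul_eq_mul, smul_eq_mul]; ring
      · intro b _ hb
        rw [smul_dotProduct, dotProduct_smul, smul_eq_mul, smul_eq_mul,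
          horth j b (Ne.symm hb)]; ring
      · intro h; exact absurd (Finset.mem_univ j) h
    rw [hw, sub_dotProduct, dotProduct_sub, dotProduct_sub, h1, h2, h3]
    ring
  have hle : ∑ i, c i ^ 2 * (p i ⬝ᵥ p i) ≤ ∑ i, c i ^ 2 :=
    Finset.sum_le_sum fun i _ => by
      have := hnorm i
      nlinarith [sq_nonneg (c i)]
  have huu : u ⬝ᵥ u = ∑ r, (u r) ^ 2 := dotProduct_self_eq_sum_sq u
  rw [hkey, huu] at hpos
  linarith [hpos, hle]

lemma sum_mul_le_sqrt_mul_sqrt {γ : Type*} [Fintype γ] (a b : γ → ℝ) :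
    ∑ i, a i * b i ≤ Real.sqrt (∑ i, (a i) ^ 2) * Real.sqrt (∑ i, (b i) ^ 2) := by
  have h := Finset.sum_mul_sq_le_sq_mul_sq Finset.univ a b
  calc ∑ i, a i * b i ≤ Real.sqrt ((∑ i, a i * b i) ^ 2) := by
        rw [Real.sqrt_sq_eq_abs]; exact le_abs_self _
    _ ≤ Real.sqrt ((∑ i, (a i) ^ 2) * (∑ i, (b i) ^ 2)) := Real.sqrt_le_sqrt h
    _ = _ := Real.sqrt_mul (by positivity) _

lemma nuclearNorm_le_sum (A : Matrix ι κ ℝ) {γ : Type*} [Fintype γ] [DecidableEq γ]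
    (u : γ → ι → ℝ) (v : γ → κ → ℝ) (hA : A = ∑ j, Matrix.vecMulVec (u j) (v j)) :
    nuclearNorm A ≤ ∑ j, Real.sqrt (∑ r, (u j r) ^ 2) * Real.sqrt (∑ r, (v j r) ^ 2) := by
  obtain ⟨σ, p, q, hσ0, hnn, hp, hq, he, -⟩ := svd_package A
  have hσ : ∀ i, σ i = p i ⬝ᵥ (A *ᵥ q i) := by
    intro i; rw [he i, dotProduct_smul, hp i i]
    by_cases h : σ i = 0 <;> simp [h]
  have horthp : ∀ i j, i ≠ j → p i ⬝ᵥ p j = 0 := fun i j hij => by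
    rw [hp i j]; simp [hij]
  have hnormp : ∀ i, p i ⬝ᵥ p i ≤ 1 := fun i => by
    rw [hp i i]; by_cases h : σ i = 0 <;> simp [h]
  have horthq : ∀ i j, i ≠ j → q i ⬝ᵥ q j = 0 := fun i j hij => by
    rw [hq i j]; simp [hij]
  have hnormq : ∀ i, q i ⬝ᵥ q i ≤ 1 := fun i => by rw [hq i i]; simp
  calc nuclearNorm A = ∑ i, σ i := hnn
    _ = ∑ i, p i ⬝ᵥ (A *ᵥ q i) := Finset.sum_congr rfl fun i _ => hσ i
    _ = ∑ i, ∑ j, (p i ⬝ᵥ u j) * (v j ⬝ᵥ q i) := by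
        refine Finset.sum_congr rfl fun i _ => ?_
        rw [hA, sum_mulVec', dotProduct_sum']
        refine Finset.sum_congr rfl fun j _ => ?_
        rw [vecMulVec_mulVec, dotProduct_smul, smul_eq_mul]; ring
    _ = ∑ j, ∑ i, (p i ⬝ᵥ u j) * (v j ⬝ᵥ q i) := Finset.sum_comm
    _ ≤ ∑ j, Real.sqrt (∑ i, (p i ⬝ᵥ u j) ^ 2) * Real.sqrt (∑ i, (v j ⬝ᵥ q i) ^ 2) :=
        Finset.sum_le_sum fun j _ => sum_mul_le_sqrt_mul_sqrt _ _
    _ ≤ ∑ j, Real.sqrt (∑ r, (u j r) ^ 2) * Real.sqrt (∑ r, (v j r) ^ 2) := by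
        refine Finset.sum_le_sum fun j _ => ?_
        have h1 : ∑ i, (p i ⬝ᵥ u j) ^ 2 ≤ ∑ r, (u j r) ^ 2 := bessel p horthp hnormp (u j)
        have h2 : ∑ i, (v j ⬝ᵥ q i) ^ 2 ≤ ∑ r, (v j r) ^ 2 := by
          have := bessel q horthq hnormq (v j)
          simpa [dotProduct_comm] using this
        exact mul_le_mul (Real.sqrt_le_sqrt h1) (Real.sqrt_le_sqrt h2)
          (Real.sqrt_nonneg _) (Real.sqrt_nonneg _)

lemma nuclearNorm_transpose_le [DecidableEq ι] (A : Matrix ι κ ℝ) :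
    nuclearNorm Aᵀ ≤ nuclearNorm A := by
  obtain ⟨σ, p, q, hσ0, hnn, hp, hq, he, hdec⟩ := svd_package A
  have hAT : Aᵀ = ∑ i, Matrix.vecMulVec (q i) (A *ᵥ q i) := by
    have h := congrArg Matrix.transpose hdec
    rw [Matrix.transpose_sum] at h
    rw [h]
    refine Finset.sum_congr rfl fun i _ => ?_
    ext a b; simp [Matrix.vecMulVec_apply, Matrix.transpose_apply, mul_comm]
  calc nuclearNorm Aᵀ ≤ ∑ i, Real.sqrt (∑ r, (q i r) ^ 2) * Real.sqrt (∑ r, ((A *ᵥ q i) r) ^ 2) :=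
        nuclearNorm_le_sum Aᵀ q (fun i => A *ᵥ q i) hAT
    _ = ∑ i, σ i := by
        refine Finset.sum_congr rfl fun i _ => ?_
        have h1 : ∑ r, (q i r) ^ 2 = 1 := by
          rw [← dotProduct_self_eq_sum_sq, hq i i]; simp
        have h2 : ∑ r, ((A *ᵥ q i) r) ^ 2 = σ i ^ 2 := by
          rw [← dotProduct_self_eq_sum_sq, he i, smul_dotProduct, dotProduct_smul,
            hp i i]
          by_cases h : σ i = 0 <;> simp [h, sq]
        rw [h1, h2, Real.sqrt_one, one_mul, Real.sqrt_sq (hσ0 i)]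
    _ = nuclearNorm A := hnn.symm

lemma exists_good_factorization (A : Matrix ι κ ℝ) :
    ∃ (u : κ → ι → ℝ) (v : κ → κ → ℝ),
      A = ∑ j, Matrix.vecMulVec (u j) (v j) ∧
      ∑ j, ((∑ r, (u j r) ^ 2) + (∑ r, (v j r) ^ 2)) ≤ 2 * nuclearNorm A := by
  obtain ⟨σ, p, q, hσ0, hnn, hp, hq, he, hdec⟩ := svd_package A
  refine ⟨fun j => Real.sqrt (σ j) • p j, fun j => Real.sqrt (σ j) • q j, ?_, ?_⟩
  · conv_lhs => rw [hdec]
    refine Finset.sum_congr rfl fun j _ => ?_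
    rw [he j]
    ext a b
    simp only [Matrix.vecMulVec_apply, Pi.smul_apply, smul_eq_mul]
    have hss : Real.sqrt (σ j) * Real.sqrt (σ j) = σ j := Real.mul_self_sqrt (hσ0 j)
    linear_combination -p j a * q j b * hss
  · have hb : ∀ j, (∑ r, ((Real.sqrt (σ j) • p j) r) ^ 2) + (∑ r, ((Real.sqrt (σ j) • q j) r) ^ 2)
        ≤ 2 * σ j := by
      intro j
      have h1 : ∑ r, ((Real.sqrt (σ j) • p j) r) ^ 2 = σ j * (p j ⬝ᵥ p j) := by
        rw [← dotProduct_self_eq_sum_sq, smul_dotProduct, dotProduct_smul,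
          smul_eq_mul, smul_eq_mul, ← mul_assoc, Real.mul_self_sqrt (hσ0 j)]
      have h2 : ∑ r, ((Real.sqrt (σ j) • q j) r) ^ 2 = σ j * (q j ⬝ᵥ q j) := by
        rw [← dotProduct_self_eq_sum_sq, smul_dotProduct, dotProduct_smul,
          smul_eq_mul, smul_eq_mul, ← mul_assoc, Real.mul_self_sqrt (hσ0 j)]
      rw [h1, h2, hq j j]
      have hpj : p j ⬝ᵥ p j ≤ 1 := by rw [hp j j]; by_cases h : σ j = 0 <;> simp [h]
      have := hσ0 j
      simp only [eq_self_iff_true, if_true]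
      have h3 := mul_le_mul_of_nonneg_left hpj (hσ0 j)
      linarith
    calc ∑ j, ((∑ r, ((Real.sqrt (σ j) • p j) r) ^ 2) + (∑ r, ((Real.sqrt (σ j) • q j) r) ^ 2))
        ≤ ∑ j, 2 * σ j := Finset.sum_le_sum fun j _ => hb j
      _ = 2 * nuclearNorm A := by rw [hnn, Finset.mul_sum]


lemma sum_pad {γ α M : Type*} [Fintype γ] [AddCommMonoid M] {m : ℕ} (e : γ ↪ Fin m)
    (W : γ → α) (z : α) (f : α → M) (hz : f z = 0) :
    ∑ k : Fin m, f (if h : ∃ j, e j = k then W h.choose else z) = ∑ j, f (W j) := by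
  classical
  have h0 : ∀ k ∈ Finset.univ, k ∉ Finset.univ.map e →
      f (if h : ∃ j, e j = k then W h.choose else z) = 0 := by
    intro k _ hk
    have hne : ¬∃ j, e j = k := by
      rintro ⟨j, rfl⟩; exact hk (Finset.mem_map_of_mem e (Finset.mem_univ j))
    rw [dif_neg hne, hz]
  rw [← Finset.sum_subset (Finset.subset_univ (Finset.univ.map e)) h0, Finset.sum_map]
  refine Finset.sum_congr rfl fun j _ => ?_
  have hex : ∃ j', e j' = e j := ⟨j, rfl⟩
  rw [dif_pos hex]
  exact congrArg (fun x => f (W x)) (e.injective hex.choose_spec)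

lemma exists_pad_factor {γ : Type*} [Fintype γ] {m : ℕ}
    (hcard : Fintype.card γ ≤ m) (u : γ → ι → ℝ) (v : γ → κ → ℝ) :
    ∃ (u' : Fin m → ι → ℝ) (v' : Fin m → κ → ℝ),
      (∑ k, Matrix.vecMulVec (u' k) (v' k) = ∑ j, Matrix.vecMulVec (u j) (v j)) ∧
      (∑ k, ((∑ r, (u' k r) ^ 2) + (∑ r, (v' k r) ^ 2))
        = ∑ j, ((∑ r, (u j r) ^ 2) + (∑ r, (v j r) ^ 2))) := by
  classical
  obtain ⟨e⟩ : Nonempty (γ ↪ Fin m) :=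
    Function.Embedding.nonempty_of_card_le (by simpa using hcard)
  set Wp : Fin m → (ι → ℝ) × (κ → ℝ) :=
    fun k => if h : ∃ j, e j = k then (u h.choose, v h.choose) else (0, 0) with hWp
  refine ⟨fun k => (Wp k).1, fun k => (Wp k).2, ?_, ?_⟩
  · have := sum_pad e (fun j => (u j, v j)) ((0:ι → ℝ), (0:κ → ℝ))
      (fun p => Matrix.vecMulVec p.1 p.2) (by ext a b; simp [Matrix.vecMulVec_apply])
    simpa [hWp, apply_dite (fun p : (ι → ℝ) × (κ → ℝ) => Matrix.vecMulVec p.1 p.2)] using this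
  · have := sum_pad e (fun j => (u j, v j)) ((0:ι → ℝ), (0:κ → ℝ))
      (fun p => (∑ r, (p.1 r) ^ 2) + (∑ r, (p.2 r) ^ 2)) (by simp)
    simpa [hWp] using this

lemma mul_vecMulVec {N : Type*} [Fintype N] (C : Matrix N ι ℝ) (u : ι → ℝ) (v : κ → ℝ) :
    C * Matrix.vecMulVec u v = Matrix.vecMulVec (C *ᵥ u) v := by
  ext a b
  simp only [Matrix.mul_apply, Matrix.vecMulVec_apply, Matrix.mulVec, dotProduct,
    Finset.sum_mul]
  exact Finset.sum_congr rfl fun k _ => by ring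

lemma iInf_eq_iInf' {α β : Type*} [Nonempty α] [Nonempty β] (f : α → ℝ) (g : β → ℝ)
    (h1 : ∀ a, ∃ b, g b ≤ f a) (h2 : ∀ b, ∃ a, f a ≤ g b) : (⨅ a, f a) = ⨅ b, g b := by
  by_cases hb : BddBelow (Set.range g)
  · have hf : BddBelow (Set.range f) := by
      obtain ⟨C, hC⟩ := hb
      refine ⟨C, ?_⟩
      rintro _ ⟨a, rfl⟩
      obtain ⟨b, hb'⟩ := h1 a
      exact le_trans (hC ⟨b, rfl⟩) hb'
    apply le_antisymm
    · refine le_ciInf fun b => ?_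
      obtain ⟨a, ha⟩ := h2 b
      exact le_trans (ciInf_le hf a) ha
    · refine le_ciInf fun a => ?_
      obtain ⟨b, hb'⟩ := h1 a
      exact le_trans (ciInf_le hb b) hb'
  · have hf : ¬ BddBelow (Set.range f) := by
      rintro ⟨C, hC⟩
      refine hb ⟨C, ?_⟩
      rintro _ ⟨b, rfl⟩
      obtain ⟨a, ha⟩ := h2 b
      exact le_trans (hC ⟨a, rfl⟩) ha
    rw [Real.iInf_of_not_bddBelow hf, Real.iInf_of_not_bddBelow hb]

lemma sqrt_mul_sqrt_le_half_add (a b : ℝ) (ha : 0 ≤ a) (hb : 0 ≤ b) :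
    Real.sqrt a * Real.sqrt b ≤ (a + b) / 2 := by
  nlinarith [Real.sq_sqrt ha, Real.sq_sqrt hb, sq_nonneg (Real.sqrt a - Real.sqrt b)]


end LFNO

/-- **Theorem 5 (linear-activation FNO).**
For `m ≥ m*` with `m* ≤ min {sd, c}`, the non-convex linear FNO training
problem (a global circular-convolution two-layer network) equals a convex
program with nuclear-norm regularization. -/
theorem linear_fno_convex_dual
    (n s d c : ℕ) (hn : 0 < n) (hs : 0 < s) (hd : 0 < d) (hc : 0 < c)
    (β : ℝ) (hβ : 0 < β)
    (X : Fin n → Matrix (Fin s) (Fin d) ℝ) (Y : Fin n → Matrix (Fin s) (Fin c) ℝ)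
    (L : Matrix (Fin s) (Fin c) ℝ → Matrix (Fin s) (Fin c) ℝ → ℝ)
    (hconv : ∀ Yi, ConvexOn ℝ Set.univ fun R => L R Yi)
    (hlsc : ∀ Yi, LowerSemicontinuous fun R => L R Yi) :
    ∃ mstar : ℕ, mstar ≤ min (s * d) c ∧ ∀ m : ℕ, mstar ≤ m →
      (⨅ W : (Fin m → (Fin s × Fin d → ℝ)) × (Fin m → (Fin c → ℝ)),
        (∑ i, L (∑ j, Matrix.vecMulVec (circM (X i) *ᵥ W.1 j) (W.2 j)) (Y i)) +
          (β / 2) * ∑ j, ((∑ r, (W.1 j r) ^ 2) + (∑ r, (W.2 j r) ^ 2)))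
      =
      (⨅ Z : Matrix (Fin s × Fin d) (Fin c) ℝ,
        (∑ i, L (circM (X i) * Z) (Y i)) + β * nuclearNorm Z) := by
  classical
  refine ⟨min (s * d) c, le_refl _, fun m hm => ?_⟩
  refine LFNO.iInf_eq_iInf' _ _ ?_ ?_
  · -- from a network to the convex program
    rintro ⟨w1, w2⟩
    refine ⟨∑ j, Matrix.vecMulVec (w1 j) (w2 j), ?_⟩
    set Z : Matrix (Fin s × Fin d) (Fin c) ℝ := ∑ j, Matrix.vecMulVec (w1 j) (w2 j) with hZ
    show (∑ i, L (circM (X i) * Z) (Y i)) + β * nuclearNorm Z ≤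
      (∑ i, L (∑ j, Matrix.vecMulVec (circM (X i) *ᵥ w1 j) (w2 j)) (Y i)) +
        (β / 2) * ∑ j, ((∑ r, (w1 j r) ^ 2) + (∑ r, (w2 j r) ^ 2))
    have hloss : ∀ i, ∑ j, Matrix.vecMulVec (circM (X i) *ᵥ w1 j) (w2 j) = circM (X i) * Z := by
      intro i
      rw [hZ, Matrix.mul_sum]
      exact Finset.sum_congr rfl fun j _ => (LFNO.mul_vecMulVec _ _ _).symm
    have hnn : nuclearNorm Z ≤ (∑ j, ((∑ r, (w1 j r) ^ 2) + (∑ r, (w2 j r) ^ 2))) / 2 :=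
      calc nuclearNorm Z
          ≤ ∑ j, Real.sqrt (∑ r, (w1 j r) ^ 2) * Real.sqrt (∑ r, (w2 j r) ^ 2) :=
            LFNO.nuclearNorm_le_sum Z w1 w2 hZ
        _ ≤ ∑ j, ((∑ r, (w1 j r) ^ 2) + (∑ r, (w2 j r) ^ 2)) / 2 :=
            Finset.sum_le_sum fun j _ =>
              LFNO.sqrt_mul_sqrt_le_half_add _ _ (by positivity) (by positivity)
        _ = (∑ j, ((∑ r, (w1 j r) ^ 2) + (∑ r, (w2 j r) ^ 2))) / 2 := by
            rw [Finset.sum_div]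
    have hLeq : (∑ i, L (circM (X i) * Z) (Y i))
        = ∑ i, L (∑ j, Matrix.vecMulVec (circM (X i) *ᵥ w1 j) (w2 j)) (Y i) :=
      Finset.sum_congr rfl fun i _ => by rw [hloss i]
    rw [hLeq]
    have : β * nuclearNorm Z ≤ (β / 2) * ∑ j, ((∑ r, (w1 j r) ^ 2) + (∑ r, (w2 j r) ^ 2)) := by
      have := mul_le_mul_of_nonneg_left hnn (le_of_lt hβ)
      calc β * nuclearNorm Z
          ≤ β * ((∑ j, ((∑ r, (w1 j r) ^ 2) + (∑ r, (w2 j r) ^ 2))) / 2) := this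
        _ = (β / 2) * ∑ j, ((∑ r, (w1 j r) ^ 2) + (∑ r, (w2 j r) ^ 2)) := by ring
    linarith
  · -- from the convex program to a network
    intro Z
    have key : ∃ (u' : Fin m → (Fin s × Fin d) → ℝ) (v' : Fin m → (Fin c) → ℝ),
        (∑ k, Matrix.vecMulVec (u' k) (v' k) = Z) ∧
        (∑ k, ((∑ r, (u' k r) ^ 2) + (∑ r, (v' k r) ^ 2)) ≤ 2 * nuclearNorm Z) := by
      rcases le_total c (s * d) with hcle | hsd
      · have hmge : c ≤ m := by
          rw [min_eq_right hcle] at hm; exact hm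
        obtain ⟨u, v, hZf, hreg⟩ := LFNO.exists_good_factorization Z
        obtain ⟨u', v', hsum, hregsum⟩ := LFNO.exists_pad_factor
          (γ := Fin c) (by simpa using hmge) u v
        exact ⟨u', v', by rw [hsum, ← hZf], by rw [hregsum]; linarith⟩
      · have hmge : s * d ≤ m := by
          rw [min_eq_left hsd] at hm; exact hm
        obtain ⟨u, v, hZTf, hreg⟩ := LFNO.exists_good_factorization Zᵀ
        have hZf : Z = ∑ j, Matrix.vecMulVec (v j) (u j) := by
          have h := congrArg Matrix.transpose hZTf
          rw [Matrix.transpose_transpose, Matrix.transpose_sum] at h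
          rw [h]
          exact Finset.sum_congr rfl fun j _ => by
            ext a b; simp [Matrix.vecMulVec_apply, Matrix.transpose_apply, mul_comm]
        obtain ⟨u', v', hsum, hregsum⟩ := LFNO.exists_pad_factor
          (γ := Fin s × Fin d) (by simpa using hmge) v u
        refine ⟨u', v', by rw [hsum, ← hZf], ?_⟩
        rw [hregsum]
        have h2 : ∑ j, ((∑ r, (v j r) ^ 2) + (∑ r, (u j r) ^ 2))
            = ∑ j, ((∑ r, (u j r) ^ 2) + (∑ r, (v j r) ^ 2)) :=
          Finset.sum_congr rfl fun j _ => add_comm _ _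
        have h3 : nuclearNorm Zᵀ ≤ nuclearNorm Z := LFNO.nuclearNorm_transpose_le Z
        rw [h2]
        linarith
    obtain ⟨u', v', hsum, hreg⟩ := key
    refine ⟨(u', v'), ?_⟩
    show (∑ i, L (∑ j, Matrix.vecMulVec (circM (X i) *ᵥ u' j) (v' j)) (Y i)) +
        (β / 2) * ∑ j, ((∑ r, (u' j r) ^ 2) + (∑ r, (v' j r) ^ 2)) ≤
      (∑ i, L (circM (X i) * Z) (Y i)) + β * nuclearNorm Z
    have hloss : ∀ i, ∑ j, Matrix.vecMulVec (circM (X i) *ᵥ u' j) (v' j) = circM (X i) * Z := by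
      intro i
      rw [← hsum, Matrix.mul_sum]
      exact Finset.sum_congr rfl fun j _ => (LFNO.mul_vecMulVec _ _ _).symm
    have hLeq : (∑ i, L (∑ j, Matrix.vecMulVec (circM (X i) *ᵥ u' j) (v' j)) (Y i))
        = ∑ i, L (circM (X i) * Z) (Y i) :=
      Finset.sum_congr rfl fun i _ => by rw [hloss i]
    rw [hLeq]
    have : (β / 2) * ∑ j, ((∑ r, (u' j r) ^ 2) + (∑ r, (v' j r) ^ 2)) ≤ β * nuclearNorm Z := by
      have h := mul_le_mul_of_nonneg_left hreg (by positivity : (0:ℝ) ≤ β / 2)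
      calc (β / 2) * ∑ j, ((∑ r, (u' j r) ^ 2) + (∑ r, (v' j r) ^ 2))
          ≤ (β / 2) * (2 * nuclearNorm Z) := h
        _ = β * nuclearNorm Z := by ring
    linarith
end
end

section
/- Suppose B divides both d and c, and for b = 1,…,B let X_i^{(b)} ∈ ℝ^{s×(d/B)} be the b-th block of d/B consecutive columns of X_i. For each m, let p_BFN(m) be the infimum over vectors w_{1bj} ∈ ℝ^{sd/B} and w_{2bj} ∈ ℝ^{c/B} (b = 1,…,B, j = 1,…,m) of Σ_{i=1}^n L([f^{(1)}(X_i) ⋯ f^{(B)}(X_i)], Y_i) + (β/2) Σ_{b=1}^B Σ_{j=1}^m (‖w_{1bj}‖₂² + ‖w_{2bj}‖₂²), where f^{(b)}(X_i) := Σ_{j=1}^m (circ(X_i^{(b)}) w_{1bj}) w_{2bj}ᵀ and [⋯] denotes horizontal concatenation. Then there exists m* ≤ (1/B)·min{sd, c} such that for every m ≥ m*, p_BFN(m) equals the infimum over Z_1,…,Z_B ∈ ℝ^{(sd/B)×(c/B)} of Σ_{i=1}^n L([circ(X_i^{(1)}) Z_1 ⋯ circ(X_i^{(B)}) Z_B],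 Y_i) + β Σ_{b=1}^B ‖Z_b‖_*. -/
open Matrix Pointwise Kronecker

noncomputable section

namespace BFNOaux

variable {N c : Type*} [Fintype N] [Fintype c] [DecidableEq c]

noncomputable def lam (A : Matrix N c ℝ) : c → ℝ :=
  (Matrix.isHermitian_conjTranspose_mul_self A).eigenvalues

noncomputable def w (A : Matrix N c ℝ) (i : c) : c → ℝ :=
  fun a => ((Matrix.isHermitian_conjTranspose_mul_self A).eigenvectorUnitary : Matrix c c ℝ) a i

lemma lam_nonneg (A : Matrix N c ℝ) (i : c) : 0 ≤ lam A i :=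
  Matrix.eigenvalues_conjTranspose_mul_self_nonneg A i

lemma nuclearNorm_eq (A : Matrix N c ℝ) : nuclearNorm A = ∑ i, Real.sqrt (lam A i) := rfl

lemma col_on (A : Matrix N c ℝ) (i j : c) :
    ∑ a, w A i a * w A j a = if i = j then 1 else 0 := by
  have h := Matrix.mem_unitaryGroup_iff'.mp
    ((Matrix.isHermitian_conjTranspose_mul_self A).eigenvectorUnitary).2
  have h2 := congrArg (fun M => M i j) h
  simpa [Matrix.mul_apply, Matrix.one_apply, Matrix.star_apply, w,
    mul_comm] using h2

lemma row_on (A : Matrix N c ℝ) (a b : c) :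
    ∑ i, w A i a * w A i b = if a = b then 1 else 0 := by
  have h := Matrix.mem_unitaryGroup_iff.mp
    ((Matrix.isHermitian_conjTranspose_mul_self A).eigenvectorUnitary).2
  have h2 := congrArg (fun M => M a b) h
  simpa [Matrix.mul_apply, Matrix.one_apply, Matrix.star_apply, w] using h2

lemma eigen_eq (A : Matrix N c ℝ) (i : c) :
    (Aᴴ * A) *ᵥ w A i = lam A i • w A i := by
  have h := (Matrix.isHermitian_conjTranspose_mul_self A).mulVec_eigenvectorBasis i
  have hw : w A i = ⇑((Matrix.isHermitian_conjTranspose_mul_self A).eigenvectorBasis i) := by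
    funext a
    exact Matrix.IsHermitian.eigenvectorUnitary_apply _ a i
  rw [hw]
  exact h

end BFNOaux

namespace BFNOaux2
open BFNOaux

variable {N c : Type*} [Fintype N] [Fintype c] [DecidableEq c]

lemma Aw_dot (A : Matrix N c ℝ) (i j : c) :
    (A *ᵥ w A i) ⬝ᵥ (A *ᵥ w A j) = if i = j then lam A i else 0 := by
  have h1 : w A i ⬝ᵥ ((Aᴴ * A) *ᵥ w A j) = (A *ᵥ w A i) ⬝ᵥ (A *ᵥ w A j) := by
    rw [dotProduct_mulVec, ← vecMul_vecMul, vecMul_conjTranspose, ← dotProduct_mulVec]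
    simp
  rw [← h1, eigen_eq, dotProduct_smul]
  have hc := col_on A i j
  have : w A i ⬝ᵥ w A j = if i = j then 1 else 0 := by
    simpa [dotProduct] using hc
  rw [this]
  split_ifs with h
  · subst h; simp
  · simp

lemma Aw_zero (A : Matrix N c ℝ) (i : c) (h : lam A i = 0) : A *ᵥ w A i = 0 := by
  have h2 := Aw_dot A i i
  simp [h] at h2
  exact h2

lemma decomp (A : Matrix N c ℝ) (a : N) (b : c) :
    A a b = ∑ i, (A *ᵥ w A i) a * w A i b := by
  have key : ∀ i, (A *ᵥ w A i) a * w A i b = ∑ k, A a k * (w A i k * w A i b) := by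
    intro i
    simp only [mulVec, dotProduct, Finset.sum_mul]
    exact Finset.sum_congr rfl fun k _ => by ring
  rw [Finset.sum_congr rfl fun i _ => key i, Finset.sum_comm]
  have : ∀ k, ∑ i, A a k * (w A i k * w A i b) = A a k * (if k = b then 1 else 0) := by
    intro k
    rw [← Finset.mul_sum, row_on]
  rw [Finset.sum_congr rfl fun k _ => this k]
  simp

lemma sum_extend {α β M : Type*} [Fintype α] [Fintype β] [DecidableEq β] [AddCommMonoid M]
    (e : α ↪ β) (f : α → M) (g : β → M)
    (hg : ∀ a, g (e a) = f a) (hg0 : ∀ b, (¬ ∃ a, e a = b) → g b = 0) :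
    ∑ b, g b = ∑ a, f a := by
  rw [← Finset.sum_subset (Finset.subset_univ (Finset.univ.map e))]
  · rw [Finset.sum_map]
    exact Finset.sum_congr rfl fun a _ => hg a
  · intro b _ hb
    refine hg0 b fun ⟨a, ha⟩ => hb ?_
    rw [← ha]
    simp

end BFNOaux2

namespace BFNOaux3
open BFNOaux BFNOaux2

variable {N c : Type*} [Fintype N] [Fintype c] [DecidableEq c]

lemma exists_factorization (A : Matrix N c ℝ) (m : ℕ)
    (hm : min (Fintype.card N) (Fintype.card c) ≤ m) :
    ∃ (u : Fin m → N → ℝ) (v : Fin m → c → ℝ),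
      (∀ a b, A a b = ∑ j, u j a * v j b) ∧
      ∑ j, ((∑ r, u j r ^ 2) + (∑ r, v j r ^ 2)) = 2 * nuclearNorm A := by
  classical
  have hcard : Fintype.card {i : c // lam A i ≠ 0} ≤ m := by
    have h1 : Fintype.card {i : c // lam A i ≠ 0} = (Aᴴ * A).rank :=
      ((Matrix.isHermitian_conjTranspose_mul_self A).rank_eq_card_non_zero_eigs).symm
    have h2 : (Aᴴ * A).rank = A.rank := by
      rw [Matrix.conjTranspose_eq_transpose_of_trivial, Matrix.rank_transpose_mul_self]
    have h3 : A.rank ≤ min (Fintype.card N) (Fintype.card c) :=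
      le_min A.rank_le_card_height A.rank_le_card_width
    omega
  obtain ⟨e⟩ : Nonempty ({i : c // lam A i ≠ 0} ↪ Fin m) :=
    Function.Embedding.nonempty_of_card_le (by simpa using hcard)
  set s : {i : c // lam A i ≠ 0} → ℝ := fun i => Real.sqrt (Real.sqrt (lam A i.1)) with hs
  have hlampos : ∀ i : {i : c // lam A i ≠ 0}, 0 < lam A i.1 :=
    fun i => lt_of_le_of_ne (lam_nonneg A i.1) (Ne.symm i.2)
  have hspos : ∀ i, 0 < s i := fun i =>
    Real.sqrt_pos.2 (Real.sqrt_pos.2 (hlampos i))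
  have hssq : ∀ i, s i ^ 2 = Real.sqrt (lam A i.1) := fun i =>
    Real.sq_sqrt (Real.sqrt_nonneg _)
  refine ⟨Function.extend e (fun i => (s i)⁻¹ • (A *ᵥ w A i.1)) (fun _ => 0),
    Function.extend e (fun i => s i • w A i.1) (fun _ => 0), ?_, ?_⟩
  · intro a b
    have h1 : ∑ j, (Function.extend e (fun i => (s i)⁻¹ • (A *ᵥ w A i.1)) (fun _ => 0)) j a *
        (Function.extend e (fun i => s i • w A i.1) (fun _ => 0)) j b
        = ∑ i : {i : c // lam A i ≠ 0}, (A *ᵥ w A i.1) a * w A i.1 b := by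
      apply sum_extend e
      · intro i
        rw [e.injective.extend_apply, e.injective.extend_apply]
        have hsne := (hspos i).ne'
        simp only [Pi.smul_apply, smul_eq_mul]
        field_simp
      · intro b hb
        rw [Function.extend_apply' _ _ _ hb, Function.extend_apply' _ _ _ hb]
        simp
    rw [h1]
    have h2 : ∑ i : {i : c // lam A i ≠ 0}, (A *ᵥ w A i.1) a * w A i.1 b
        = ∑ i : c, (A *ᵥ w A i) a * w A i b := by
      symm
      apply sum_extend (Function.Embedding.subtype _)
        (fun i : {i : c // lam A i ≠ 0} => (A *ᵥ w A i.1) a * w A i.1 b)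
      · intro i; rfl
      · intro i hi
        have : lam A i = 0 := by
          by_contra hne
          exact hi ⟨⟨i, hne⟩, rfl⟩
        rw [Aw_zero A i this]
        simp
    rw [h2, ← decomp]
  · have h1 : ∑ j, ((∑ r, ((Function.extend e (fun i => (s i)⁻¹ • (A *ᵥ w A i.1)) (fun _ => 0)) j r) ^ 2)
        + (∑ r, ((Function.extend e (fun i => s i • w A i.1) (fun _ => 0)) j r) ^ 2))
        = ∑ i : {i : c // lam A i ≠ 0}, (Real.sqrt (lam A i.1) + Real.sqrt (lam A i.1)) := by
      apply sum_extend e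
      · intro i
        rw [e.injective.extend_apply, e.injective.extend_apply]
        have hu : ∑ r, (((s i)⁻¹ • (A *ᵥ w A i.1)) r) ^ 2 = Real.sqrt (lam A i.1) := by
          have hdot : ∑ r, ((A *ᵥ w A i.1) r) ^ 2 = lam A i.1 := by
            have := Aw_dot A i.1 i.1
            rw [if_pos rfl] at this
            rw [← this]
            simp [dotProduct, sq]
          simp only [Pi.smul_apply, smul_eq_mul, mul_pow]
          rw [← Finset.mul_sum, hdot]
          have h4 : lam A i.1 = (s i ^ 2) * (s i ^ 2) := by
            rw [hssq i]; exact (Real.mul_self_sqrt (lam_nonneg A i.1)).symm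
          rw [← hssq i, h4]
          have hsne := (hspos i).ne'
          field_simp
        have hv : ∑ r, ((s i • w A i.1) r) ^ 2 = Real.sqrt (lam A i.1) := by
          have hw1 : ∑ r, (w A i.1 r) ^ 2 = 1 := by
            have := col_on A i.1 i.1
            rw [if_pos rfl] at this
            rw [← this]
            exact Finset.sum_congr rfl fun r _ => by ring
          simp only [Pi.smul_apply, smul_eq_mul, mul_pow]
          rw [← Finset.mul_sum, hw1, mul_one, hssq i]
        rw [hu, hv]
      · intro b hb
        rw [Function.extend_apply' _ _ _ hb, Function.extend_apply' _ _ _ hb]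
        simp
    rw [h1]
    have h2 : ∑ i : {i : c // lam A i ≠ 0}, (Real.sqrt (lam A i.1) + Real.sqrt (lam A i.1))
        = 2 * ∑ i : {i : c // lam A i ≠ 0}, Real.sqrt (lam A i.1) := by
      rw [Finset.mul_sum]; exact Finset.sum_congr rfl fun i _ => (two_mul _).symm
    rw [h2, nuclearNorm_eq]
    congr 1
    symm
    apply sum_extend (Function.Embedding.subtype _)
      (fun i : {i : c // lam A i ≠ 0} => Real.sqrt (lam A i.1))
    · intro i; rfl
    · intro i hi
      have : lam A i = 0 := by
        by_contra hne
        exact hi ⟨⟨i, hne⟩, rfl⟩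
      simp [this]

end BFNOaux3

namespace BFNOaux4
open BFNOaux BFNOaux2

variable {N c : Type*} [Fintype N] [Fintype c] [DecidableEq c]

lemma sum_sq_expand {ι κ : Type*} [Fintype ι] [Fintype κ] (f : ι → κ → ℝ) :
    ∑ r, (∑ i, f i r) ^ 2 = ∑ i, ∑ j, ∑ r, f i r * f j r := by
  have h : ∀ r : κ, (∑ i, f i r) ^ 2 = ∑ i, ∑ j, f i r * f j r := by
    intro r; rw [sq, Finset.sum_mul_sum]
  rw [Finset.sum_congr rfl fun r _ => h r, Finset.sum_comm]
  exact Finset.sum_congr rfl fun i _ => Finset.sum_comm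

noncomputable def Qm (A : Matrix N c ℝ) : Matrix N c ℝ :=
  Matrix.of fun a b => ∑ i, (if lam A i = 0 then 0 else
    (Real.sqrt (lam A i))⁻¹ * ((A *ᵥ w A i) a * w A i b))

noncomputable def dcoef (A : Matrix N c ℝ) (x : c → ℝ) (i : c) : ℝ :=
  (if lam A i = 0 then 0 else (Real.sqrt (lam A i))⁻¹) * (w A i ⬝ᵥ x)

lemma Qm_mulVec (A : Matrix N c ℝ) (x : c → ℝ) (a : N) :
    (Qm A *ᵥ x) a = ∑ i, dcoef A x i * (A *ᵥ w A i) a := by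
  show ∑ b, Qm A a b * x b = _
  have h : ∀ b, Qm A a b * x b = ∑ i, (if lam A i = 0 then 0 else
      (Real.sqrt (lam A i))⁻¹ * ((A *ᵥ w A i) a * w A i b)) * x b := by
    intro b; exact Finset.sum_mul _ _ _
  rw [Finset.sum_congr rfl fun b _ => h b, Finset.sum_comm]
  refine Finset.sum_congr rfl fun i _ => ?_
  by_cases hl : lam A i = 0
  · simp [hl, dcoef]
  · simp only [hl, dcoef, if_false]
    rw [dotProduct, Finset.mul_sum, Finset.sum_mul]
    exact Finset.sum_congr rfl fun b _ => by ring

lemma Qm_contract (A : Matrix N c ℝ) (x : c → ℝ) :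
    ∑ r, ((Qm A *ᵥ x) r) ^ 2 ≤ ∑ b, (x b) ^ 2 := by
  have h1 : ∑ r, ((Qm A *ᵥ x) r) ^ 2
      = ∑ i, ∑ j, (dcoef A x i * dcoef A x j) * (if i = j then lam A i else 0) := by
    rw [Finset.sum_congr rfl fun r (_ : r ∈ Finset.univ) =>
      congrArg (· ^ 2) (Qm_mulVec A x r), sum_sq_expand]
    refine Finset.sum_congr rfl fun i _ => Finset.sum_congr rfl fun j _ => ?_
    rw [← Aw_dot A i j, dotProduct, Finset.mul_sum]
    exact Finset.sum_congr rfl fun r _ => by ring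
  have h2 : ∀ i, ∑ j, (dcoef A x i * dcoef A x j) * (if i = j then lam A i else 0)
      = dcoef A x i * dcoef A x i * lam A i := by
    intro i
    rw [Finset.sum_eq_single i (fun j _ hj => by simp [Ne.symm hj])
      (fun h => absurd (Finset.mem_univ i) h)]
    simp
  rw [h1, Finset.sum_congr rfl fun i _ => h2 i]
  have h3 : ∀ i, dcoef A x i * dcoef A x i * lam A i
      = if lam A i = 0 then 0 else (w A i ⬝ᵥ x) ^ 2 := by
    intro i
    by_cases hl : lam A i = 0
    · simp [hl, dcoef]
    · simp only [dcoef, hl, if_false]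
      have hpos : 0 < Real.sqrt (lam A i) :=
        Real.sqrt_pos.2 (lt_of_le_of_ne (lam_nonneg A i) (Ne.symm hl))
      have hms : Real.sqrt (lam A i) * Real.sqrt (lam A i) = lam A i :=
        Real.mul_self_sqrt (lam_nonneg A i)
      rw [← hms]
      field_simp
      rw [Real.sqrt_sq hpos.le]
  rw [Finset.sum_congr rfl fun i _ => h3 i]
  have h4 : ∑ i, (if lam A i = 0 then 0 else (w A i ⬝ᵥ x) ^ 2) ≤ ∑ i, (w A i ⬝ᵥ x) ^ 2 := by
    refine Finset.sum_le_sum fun i _ => ?_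
    by_cases hl : lam A i = 0
    · simp [hl]; positivity
    · simp [hl]
  refine le_trans h4 (le_of_eq ?_)
  have h5 : ∑ i, (w A i ⬝ᵥ x) ^ 2 = ∑ a, ∑ b, ∑ i, (w A i a * x a) * (w A i b * x b) := by
    have := sum_sq_expand (fun (a : c) (i : c) => w A i a * x a)
    simpa [dotProduct] using this
  rw [h5]
  have h6 : ∀ a b, ∑ i, (w A i a * x a) * (w A i b * x b)
      = (x a * x b) * (if a = b then 1 else 0) := by
    intro a b
    rw [← row_on A a b, Finset.mul_sum]
    exact Finset.sum_congr rfl fun i _ => by ring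
  rw [Finset.sum_congr rfl fun a _ => Finset.sum_congr rfl fun b _ => h6 a b]
  refine Finset.sum_congr rfl fun a _ => ?_
  rw [Finset.sum_eq_single a (fun b _ hb => by simp [Ne.symm hb])
    (fun h => absurd (Finset.mem_univ a) h)]
  simp [sq]

lemma Qm_trace (A : Matrix N c ℝ) :
    ∑ a, ∑ b, Qm A a b * A a b = nuclearNorm A := by
  have h1 : ∑ a, ∑ b, Qm A a b * A a b
      = ∑ i, ∑ a, ∑ b, (if lam A i = 0 then 0 else
        (Real.sqrt (lam A i))⁻¹ * ((A *ᵥ w A i) a * w A i b)) * A a b := by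
    have h : ∀ a b, Qm A a b * A a b = ∑ i, (if lam A i = 0 then 0 else
        (Real.sqrt (lam A i))⁻¹ * ((A *ᵥ w A i) a * w A i b)) * A a b := by
      intro a b; exact Finset.sum_mul _ _ _
    rw [Finset.sum_congr rfl fun a _ => Finset.sum_congr rfl fun b _ => h a b]
    rw [Finset.sum_congr rfl fun a (_ : a ∈ Finset.univ) => Finset.sum_comm, Finset.sum_comm]
  rw [h1, nuclearNorm_eq]
  refine Finset.sum_congr rfl fun i _ => ?_
  by_cases hl : lam A i = 0
  · simp [hl]
  · simp only [hl, if_false]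
    have h2 : ∀ a, ∑ b, (Real.sqrt (lam A i))⁻¹ * ((A *ᵥ w A i) a * w A i b) * A a b
        = (Real.sqrt (lam A i))⁻¹ * ((A *ᵥ w A i) a * (A *ᵥ w A i) a) := by
      intro a
      have hterm : ∀ b, (Real.sqrt (lam A i))⁻¹ * ((A *ᵥ w A i) a * w A i b) * A a b
          = ((Real.sqrt (lam A i))⁻¹ * (A *ᵥ w A i) a) * (A a b * w A i b) := fun b => by ring
      rw [Finset.sum_congr rfl fun b _ => hterm b, ← Finset.mul_sum]
      have hy : ∑ b, A a b * w A i b = (A *ᵥ w A i) a := rfl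
      rw [hy]
      ring
    rw [Finset.sum_congr rfl fun a _ => h2 a, ← Finset.mul_sum]
    have h3 : ∑ a, (A *ᵥ w A i) a * (A *ᵥ w A i) a = lam A i := by
      have := Aw_dot A i i
      rw [if_pos rfl] at this
      rw [← this]; rfl
    rw [h3]
    have hpos : 0 < Real.sqrt (lam A i) :=
      Real.sqrt_pos.2 (lt_of_le_of_ne (lam_nonneg A i) (Ne.symm hl))
    have hms : Real.sqrt (lam A i) * Real.sqrt (lam A i) = lam A i :=
      Real.mul_self_sqrt (lam_nonneg A i)
    rw [← hms]
    field_simp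
    rw [Real.sqrt_sq hpos.le]

lemma nuclearNorm_le_factor {m : ℕ} (A : Matrix N c ℝ)
    (u : Fin m → N → ℝ) (v : Fin m → c → ℝ)
    (hA : ∀ a b, A a b = ∑ j, u j a * v j b) :
    2 * nuclearNorm A ≤ ∑ j, ((∑ r, u j r ^ 2) + (∑ r, v j r ^ 2)) := by
  have key : ∑ j, ∑ a, u j a * (Qm A *ᵥ v j) a = nuclearNorm A := by
    rw [← Qm_trace A]
    have h1 : ∀ j a, u j a * (Qm A *ᵥ v j) a = ∑ b, Qm A a b * (u j a * v j b) := by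
      intro j a
      show u j a * ∑ b, Qm A a b * v j b = _
      rw [Finset.mul_sum]
      exact Finset.sum_congr rfl fun b _ => by ring
    have e1 : ∑ j, ∑ a, u j a * (Qm A *ᵥ v j) a
        = ∑ j, ∑ a, ∑ b, Qm A a b * (u j a * v j b) :=
      Finset.sum_congr rfl fun j _ => Finset.sum_congr rfl fun a _ => h1 j a
    rw [e1, Finset.sum_comm]
    refine Finset.sum_congr rfl fun a _ => ?_
    rw [Finset.sum_comm]
    refine Finset.sum_congr rfl fun b _ => ?_
    rw [← Finset.mul_sum, ← hA a b]
  have bound : ∀ j, ∑ a, u j a * (Qm A *ᵥ v j) a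
      ≤ ((∑ r, u j r ^ 2) + (∑ r, v j r ^ 2)) / 2 := by
    intro j
    set P := ∑ r, u j r ^ 2 with hP
    set R := ∑ r, v j r ^ 2 with hR
    have hP0 : 0 ≤ P := Finset.sum_nonneg fun r _ => sq_nonneg _
    have hR0 : 0 ≤ R := Finset.sum_nonneg fun r _ => sq_nonneg _
    have hT : ∑ r, ((Qm A *ᵥ v j) r) ^ 2 ≤ R := Qm_contract A (v j)
    have hT0 : 0 ≤ ∑ r, ((Qm A *ᵥ v j) r) ^ 2 := Finset.sum_nonneg fun r _ => sq_nonneg _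
    have hCS : (∑ a, u j a * (Qm A *ᵥ v j) a) ^ 2 ≤ P * ∑ r, ((Qm A *ᵥ v j) r) ^ 2 :=
      Finset.sum_mul_sq_le_sq_mul_sq _ _ _
    have step1 : ∑ a, u j a * (Qm A *ᵥ v j) a ≤ Real.sqrt (P * R) := by
      refine le_trans (le_abs_self _) ?_
      rw [← Real.sqrt_sq_eq_abs]
      exact Real.sqrt_le_sqrt (le_trans hCS (mul_le_mul_of_nonneg_left hT hP0))
    refine le_trans step1 ?_
    rw [Real.sqrt_mul hP0]
    have h2m : 2 * (Real.sqrt P * Real.sqrt R) ≤ Real.sqrt P ^ 2 + Real.sqrt R ^ 2 := by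
      have := two_mul_le_add_sq (Real.sqrt P) (Real.sqrt R)
      linarith
    rw [Real.sq_sqrt hP0, Real.sq_sqrt hR0] at h2m
    linarith
  have : nuclearNorm A ≤ ∑ j, ((∑ r, u j r ^ 2) + (∑ r, v j r ^ 2)) / 2 := by
    rw [← key]; exact Finset.sum_le_sum fun j _ => bound j
  rw [← Finset.sum_div] at this
  linarith

end BFNOaux4

namespace BFNOaux5
open BFNOaux BFNOaux2 BFNOaux3 BFNOaux4

lemma iInf_eq_of_mutual {ι κ : Type*} [Nonempty ι] [Nonempty κ] (f : ι → ℝ) (g : κ → ℝ)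
    (h1 : ∀ i, ∃ j, g j ≤ f i) (h2 : ∀ j, ∃ i, f i ≤ g j) : ⨅ i, f i = ⨅ j, g j := by
  by_cases hb : BddBelow (Set.range g)
  · have hbf : BddBelow (Set.range f) := by
      obtain ⟨C, hC⟩ := hb
      refine ⟨C, ?_⟩
      rintro _ ⟨i, rfl⟩
      obtain ⟨j, hj⟩ := h1 i
      exact le_trans (hC ⟨j, rfl⟩) hj
    apply le_antisymm
    · refine le_ciInf fun j => ?_
      obtain ⟨i, hi⟩ := h2 j
      exact ciInf_le_of_le hbf i hi
    · refine le_ciInf fun i => ?_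
      obtain ⟨j, hj⟩ := h1 i
      exact ciInf_le_of_le hb j hj
  · have hbf : ¬ BddBelow (Set.range f) := by
      rintro ⟨C, hC⟩
      apply hb
      refine ⟨C, ?_⟩
      rintro _ ⟨j, rfl⟩
      obtain ⟨i, hi⟩ := h2 j
      exact le_trans (hC ⟨i, rfl⟩) hi
    rw [iInf, iInf, csInf_of_not_bddBelow hbf, csInf_of_not_bddBelow hb]

lemma pred_eq {α β γ : Type*} [Fintype α] [Fintype β] [Fintype γ] {m : ℕ}
    (C : Matrix α β ℝ) (u : Fin m → β → ℝ) (v : Fin m → γ → ℝ)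
    (Z : Matrix β γ ℝ) (hZ : ∀ k q2, Z k q2 = ∑ j, u j k * v j q2)
    (r : α) (q2 : γ) :
    (∑ j, Matrix.vecMulVec (C *ᵥ u j) (v j)) r q2 = (C * Z) r q2 := by
  rw [Matrix.sum_apply]
  have h1 : ∀ j, Matrix.vecMulVec (C *ᵥ u j) (v j) r q2
      = ∑ k, (C r k * u j k) * v j q2 := by
    intro j
    rw [Matrix.vecMulVec_apply]
    show (∑ k, C r k * u j k) * v j q2 = _
    rw [Finset.sum_mul]
  rw [Finset.sum_congr rfl fun j _ => h1 j, Finset.sum_comm, Matrix.mul_apply]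
  refine Finset.sum_congr rfl fun k _ => ?_
  rw [hZ, Finset.mul_sum]
  exact Finset.sum_congr rfl fun j _ => by ring

end BFNOaux5


/-- **Theorem 7 (linear-activation block FNO / B-FNO).**
`B` divides `d` and `c`; we encode `d = B·dB` and `c = B·cB` by indexing
feature columns by `Fin B × Fin dB` (block-major) and output columns by
`Fin B × Fin cB`.  `Xᵢ^{(b)}` is the `b`-th column block of `Xᵢ`.  For
`m ≥ m*` with `m* ≤ (1/B)·min {sd, c} = min {s·dB, cB}`, the non-convex
linear B-FNO problem equals a convex program with groupwise nuclear norms. -/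
theorem linear_bfno_convex_dual
    (n s B dB cB : ℕ) (hn : 0 < n) (hs : 0 < s) (hB : 0 < B) (hdB : 0 < dB) (hcB : 0 < cB)
    (β : ℝ) (hβ : 0 < β)
    (X : Fin n → Matrix (Fin s) (Fin B × Fin dB) ℝ)
    (Y : Fin n → Matrix (Fin s) (Fin B × Fin cB) ℝ)
    (L : Matrix (Fin s) (Fin B × Fin cB) ℝ → Matrix (Fin s) (Fin B × Fin cB) ℝ → ℝ)
    (hconv : ∀ Yi, ConvexOn ℝ Set.univ fun R => L R Yi)
    (hlsc : ∀ Yi, LowerSemicontinuous fun R => L R Yi) :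
    ∃ mstar : ℕ, mstar ≤ min (s * dB) cB ∧ ∀ m : ℕ, mstar ≤ m →
      (⨅ W : (Fin B → Fin m → (Fin s × Fin dB → ℝ)) × (Fin B → Fin m → (Fin cB → ℝ)),
        (∑ i, L (Matrix.of fun r q =>
            (∑ j, Matrix.vecMulVec
                (circM (Matrix.of fun a k => X i a (q.1, k)) *ᵥ W.1 q.1 j)
                (W.2 q.1 j)) r q.2) (Y i)) +
          (β / 2) * ∑ b, ∑ j, ((∑ r, (W.1 b j r) ^ 2) + (∑ r, (W.2 b j r) ^ 2)))
      =
      (⨅ Z : Fin B → Matrix (Fin s × Fin dB) (Fin cB) ℝ,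
        (∑ i, L (Matrix.of fun r q =>
            (circM (Matrix.of fun a k => X i a (q.1, k)) * Z q.1) r q.2) (Y i)) +
          β * ∑ b, nuclearNorm (Z b)) := by
  refine ⟨min (s * dB) cB, le_refl _, fun m hm => ?_⟩
  have hmin : min (Fintype.card (Fin s × Fin dB)) (Fintype.card (Fin cB)) ≤ m := by
    simpa using hm
  apply BFNOaux5.iInf_eq_of_mutual
  · -- given W, produce Z
    intro W
    set Z : Fin B → Matrix (Fin s × Fin dB) (Fin cB) ℝ :=
      fun b => Matrix.of fun k q2 => ∑ j, W.1 b j k * W.2 b j q2 with hZdef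
    refine ⟨Z, ?_⟩
    have hM : ∀ i : Fin n,
        (Matrix.of fun r (q : Fin B × Fin cB) =>
          (circM (Matrix.of fun a k => X i a (q.1, k)) * Z q.1) r q.2)
        = (Matrix.of fun r (q : Fin B × Fin cB) =>
          (∑ j, Matrix.vecMulVec
            (circM (Matrix.of fun a k => X i a (q.1, k)) *ᵥ W.1 q.1 j)
            (W.2 q.1 j)) r q.2) := by
      intro i
      ext r q
      exact (BFNOaux5.pred_eq _ _ _ _ (fun k q2 => rfl) r q.2).symm
    have hLoss : (∑ i, L (Matrix.of fun r (q : Fin B × Fin cB) =>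
          (circM (Matrix.of fun a k => X i a (q.1, k)) * Z q.1) r q.2) (Y i))
        = (∑ i, L (Matrix.of fun r (q : Fin B × Fin cB) =>
          (∑ j, Matrix.vecMulVec
            (circM (Matrix.of fun a k => X i a (q.1, k)) *ᵥ W.1 q.1 j)
            (W.2 q.1 j)) r q.2) (Y i)) :=
      Finset.sum_congr rfl fun i _ => by rw [hM i]
    have hreg : β * ∑ b, nuclearNorm (Z b)
        ≤ (β / 2) * ∑ b, ∑ j, ((∑ r, (W.1 b j r) ^ 2) + (∑ r, (W.2 b j r) ^ 2)) := by
      have h2 : 2 * ∑ b, nuclearNorm (Z b)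
          ≤ ∑ b, ∑ j, ((∑ r, (W.1 b j r) ^ 2) + (∑ r, (W.2 b j r) ^ 2)) := by
        rw [Finset.mul_sum]
        exact Finset.sum_le_sum fun b _ =>
          BFNOaux4.nuclearNorm_le_factor (Z b) (W.1 b) (W.2 b) (fun a b' => rfl)
      have hb2 : (0:ℝ) ≤ β / 2 := by linarith
      calc β * ∑ b, nuclearNorm (Z b)
          = (β / 2) * (2 * ∑ b, nuclearNorm (Z b)) := by ring
        _ ≤ (β / 2) * ∑ b, ∑ j, ((∑ r, (W.1 b j r) ^ 2) + (∑ r, (W.2 b j r) ^ 2)) :=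
            mul_le_mul_of_nonneg_left h2 hb2
    rw [hLoss]
    exact add_le_add le_rfl hreg
  · -- given Z, produce W
    intro Z
    have H : ∀ b : Fin B, ∃ (u : Fin m → (Fin s × Fin dB) → ℝ) (v : Fin m → Fin cB → ℝ),
        (∀ a b', Z b a b' = ∑ j, u j a * v j b') ∧
        ∑ j, ((∑ r, u j r ^ 2) + (∑ r, v j r ^ 2)) = 2 * nuclearNorm (Z b) :=
      fun b => BFNOaux3.exists_factorization (Z b) m hmin
    choose u v hfac hsum using H
    refine ⟨(u, v), le_of_eq ?_⟩
    have hM : ∀ i : Fin n,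
        (Matrix.of fun r (q : Fin B × Fin cB) =>
          (∑ j, Matrix.vecMulVec
            (circM (Matrix.of fun a k => X i a (q.1, k)) *ᵥ u q.1 j)
            (v q.1 j)) r q.2)
        = (Matrix.of fun r (q : Fin B × Fin cB) =>
          (circM (Matrix.of fun a k => X i a (q.1, k)) * Z q.1) r q.2) := by
      intro i
      ext r q
      exact BFNOaux5.pred_eq _ _ _ _ (fun k q2 => hfac q.1 k q2) r q.2
    have hLoss : (∑ i, L (Matrix.of fun r (q : Fin B × Fin cB) =>
          (∑ j, Matrix.vecMulVec
            (circM (Matrix.of fun a k => X i a (q.1, k)) *ᵥ u q.1 j)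
            (v q.1 j)) r q.2) (Y i))
        = (∑ i, L (Matrix.of fun r (q : Fin B × Fin cB) =>
          (circM (Matrix.of fun a k => X i a (q.1, k)) * Z q.1) r q.2) (Y i)) :=
      Finset.sum_congr rfl fun i _ => by rw [hM i]
    have hreg : (β / 2) * ∑ b, ∑ j, ((∑ r, (u b j r) ^ 2) + (∑ r, (v b j r) ^ 2))
        = β * ∑ b, nuclearNorm (Z b) := by
      rw [Finset.sum_congr rfl fun b (_ : b ∈ Finset.univ) => hsum b, ← Finset.mul_sum]
      ring
    rw [hLoss, hreg]
end
end

section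
/- Let h : ℝ^{s×d} → ℝ^{s×d} be an arbitrary fixed function (e.g. a pooling or 2D Fourier mixing map). For each m, let p(m) be the infimum over vectors w_{1j} ∈ ℝ^d and w_{2j} ∈ ℝ^c (j = 1,…,m) of Σ_{i=1}^n L(Σ_{j=1}^m (h(X_i) w_{1j}) w_{2j}ᵀ, Y_i) + (β/2) Σ_{j=1}^m (‖w_{1j}‖₂² + ‖w_{2j}‖₂²). Then there exists m* ≤ min{d, c} such that for every m ≥ m*, p(m) equals the infimum over Z ∈ ℝ^{d×c} of Σ_{i=1}^n L(h(X_i) Z, Y_i) + β‖Z‖_*. -/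
open Matrix Pointwise Kronecker

noncomputable section

namespace LinearMixerAux
open Finset

lemma dotProduct_sum' {ι κ : Type*} [Fintype κ] (s : Finset ι) (v : κ → ℝ) (f : ι → κ → ℝ) :
    v ⬝ᵥ (∑ i ∈ s, f i) = ∑ i ∈ s, v ⬝ᵥ f i := by
  simp only [dotProduct, Finset.sum_apply, Finset.mul_sum]
  rw [Finset.sum_comm]

lemma sum_dotProduct' {ι κ : Type*} [Fintype κ] (s : Finset ι) (f : ι → κ → ℝ) (v : κ → ℝ) :
    (∑ i ∈ s, f i) ⬝ᵥ v = ∑ i ∈ s, f i ⬝ᵥ v := by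
  simp only [dotProduct, Finset.sum_apply, Finset.sum_mul]
  rw [Finset.sum_comm]

lemma sum_mulVec' {ι κ e : Type*} [Fintype κ] (s : Finset ι) (M : ι → Matrix e κ ℝ) (x : κ → ℝ) :
    (∑ i ∈ s, M i) *ᵥ x = ∑ i ∈ s, M i *ᵥ x := by
  ext r
  simp only [Matrix.mulVec, dotProduct, Finset.sum_apply, Matrix.sum_apply,
    Finset.sum_mul]
  rw [Finset.sum_comm]

variable {d c : Type*} [Fintype d] [Fintype c] [DecidableEq c]

lemma dot_mulVec_mulVec (Z : Matrix d c ℝ) (x y : c → ℝ) :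
    (Z *ᵥ x) ⬝ᵥ (Z *ᵥ y) = x ⬝ᵥ ((Zᴴ * Z) *ᵥ y) := by
  rw [Matrix.conjTranspose_eq_transpose_of_trivial, ← Matrix.vecMul_transpose,
    Matrix.dotProduct_mulVec, Matrix.vecMul_vecMul, ← Matrix.dotProduct_mulVec]

/-- eigenvalues of `Zᴴ*Z`. -/
def lam (Z : Matrix d c ℝ) : c → ℝ := (Matrix.isHermitian_conjTranspose_mul_self Z).eigenvalues

/-- orthonormal eigenvectors of `Zᴴ*Z`. -/
def bvec (Z : Matrix d c ℝ) : c → c → ℝ :=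
  fun i => ⇑((Matrix.isHermitian_conjTranspose_mul_self Z).eigenvectorBasis i)

/-- singular values of `Z`. -/
def sig (Z : Matrix d c ℝ) : c → ℝ := fun i => Real.sqrt (lam Z i)

lemma nuclearNorm_eq (Z : Matrix d c ℝ) : nuclearNorm Z = ∑ i, sig Z i := rfl

lemma mulVec_bvec (Z : Matrix d c ℝ) (j : c) :
    (Zᴴ * Z) *ᵥ bvec Z j = lam Z j • bvec Z j :=
  (Matrix.isHermitian_conjTranspose_mul_self Z).mulVec_eigenvectorBasis j

lemma bvec_dot (Z : Matrix d c ℝ) (i k : c) :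
    bvec Z i ⬝ᵥ bvec Z k = if i = k then 1 else 0 := by
  have h := (Matrix.isHermitian_conjTranspose_mul_self Z).eigenvectorBasis.orthonormal
  rw [orthonormal_iff_ite] at h
  simpa [PiLp.inner_apply, dotProduct, RCLike.inner_apply, mul_comm, bvec] using h i k

lemma dot_Zb (Z : Matrix d c ℝ) (i k : c) :
    (Z *ᵥ bvec Z i) ⬝ᵥ (Z *ᵥ bvec Z k) = if i = k then lam Z k else 0 := by
  rw [dot_mulVec_mulVec, mulVec_bvec, dotProduct_smul, smul_eq_mul, bvec_dot]
  split <;> simp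

lemma lam_nonneg (Z : Matrix d c ℝ) (i : c) : 0 ≤ lam Z i := by
  have h := dot_Zb Z i i
  rw [if_pos rfl] at h
  rw [← h]
  exact Finset.sum_nonneg fun r _ => mul_self_nonneg _

lemma sig_nonneg (Z : Matrix d c ℝ) (i : c) : 0 ≤ sig Z i := Real.sqrt_nonneg _

lemma sig_sq (Z : Matrix d c ℝ) (i : c) : sig Z i ^ 2 = lam Z i :=
  Real.sq_sqrt (lam_nonneg Z i)

lemma sig_eq_zero_iff (Z : Matrix d c ℝ) (i : c) : sig Z i = 0 ↔ lam Z i = 0 := by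
  rw [sig, Real.sqrt_eq_zero (lam_nonneg Z i)]

lemma mulVec_bvec_eq_zero (Z : Matrix d c ℝ) {i : c} (h : lam Z i = 0) :
    Z *ᵥ bvec Z i = 0 := by
  have hd := dot_Zb Z i i
  simp only [if_pos rfl, h] at hd
  funext r
  have := (Finset.sum_eq_zero_iff_of_nonneg
    (fun x _ => mul_self_nonneg ((Z *ᵥ bvec Z i) x))).mp hd r (Finset.mem_univ r)
  have := mul_self_eq_zero.mp this
  simpa using this

lemma sum_vecMulVec_bvec (Z : Matrix d c ℝ) :
    ∑ i, Matrix.vecMulVec (bvec Z i) (bvec Z i) = (1 : Matrix c c ℝ) := by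
  set hA := Matrix.isHermitian_conjTranspose_mul_self Z
  have hU : (hA.eigenvectorUnitary : Matrix c c ℝ) * star (hA.eigenvectorUnitary : Matrix c c ℝ)
      = 1 := by
    simpa using (Matrix.mem_unitaryGroup_iff.mp hA.eigenvectorUnitary.2)
  ext x y
  have := congrFun (congrFun hU x) y
  simp only [Matrix.mul_apply, Matrix.star_apply, star_trivial,
    Matrix.IsHermitian.eigenvectorUnitary_apply] at this
  simpa [Matrix.sum_apply, Matrix.vecMulVec_apply, bvec, mul_comm] using this

lemma mul_vecMulVec {e : Type*} [Fintype e] (A : Matrix e d ℝ) (u : d → ℝ) (v : c → ℝ) :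
    A * Matrix.vecMulVec u v = Matrix.vecMulVec (A *ᵥ u) v := by
  ext r s
  simp [Matrix.mul_apply, Matrix.vecMulVec_apply, Matrix.mulVec, dotProduct,
    Finset.sum_mul, mul_assoc]

lemma vecMulVec_mulVec (u : d → ℝ) (v : c → ℝ) (x : c → ℝ) :
    Matrix.vecMulVec u v *ᵥ x = (v ⬝ᵥ x) • u := by
  ext r
  simp only [Matrix.mulVec, Matrix.vecMulVec_apply, dotProduct, Pi.smul_apply,
    smul_eq_mul, Finset.sum_mul]
  exact Finset.sum_congr rfl fun k _ => by ring

lemma decomp (Z : Matrix d c ℝ) :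
    Z = ∑ i, Matrix.vecMulVec (Z *ᵥ bvec Z i) (bvec Z i) := by
  conv_lhs => rw [← Matrix.mul_one Z, ← sum_vecMulVec_bvec Z]
  rw [Matrix.mul_sum]
  exact Finset.sum_congr rfl fun i _ => mul_vecMulVec Z _ _

/-- Bessel-type inequality for a pairwise-orthogonal family with norms at most one. -/
lemma bessel_general {ι κ : Type*} [Fintype ι] [Fintype κ] (w : ι → κ → ℝ)
    (horth : ∀ i k, i ≠ k → w i ⬝ᵥ w k = 0) (hnorm : ∀ i, w i ⬝ᵥ w i ≤ 1) (u : κ → ℝ) :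
    ∑ i, (w i ⬝ᵥ u) ^ 2 ≤ u ⬝ᵥ u := by
  set cc : ι → ℝ := fun i => w i ⬝ᵥ u with hcc
  have key : 0 ≤ (u - ∑ i, cc i • w i) ⬝ᵥ (u - ∑ i, cc i • w i) :=
    Finset.sum_nonneg fun r _ => mul_self_nonneg _
  have expand : (u - ∑ i, cc i • w i) ⬝ᵥ (u - ∑ i, cc i • w i)
      = u ⬝ᵥ u - 2 * ∑ i, cc i ^ 2 + ∑ i, cc i ^ 2 * (w i ⬝ᵥ w i) := by
    rw [sub_dotProduct, dotProduct_sub, dotProduct_sub,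
      dotProduct_sum', sum_dotProduct', sum_dotProduct']
    have h1 : ∑ i, (cc i • w i) ⬝ᵥ u = ∑ i, cc i ^ 2 := by
      refine Finset.sum_congr rfl fun i _ => ?_
      rw [smul_dotProduct, smul_eq_mul, sq]
    have h2 : ∑ i, u ⬝ᵥ (cc i • w i) = ∑ i, cc i ^ 2 := by
      refine Finset.sum_congr rfl fun i _ => ?_
      rw [dotProduct_smul, smul_eq_mul, dotProduct_comm, sq]
    have h3 : ∑ i, (cc i • w i) ⬝ᵥ (∑ k, cc k • w k) = ∑ i, cc i ^ 2 * (w i ⬝ᵥ w i) := by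
      refine Finset.sum_congr rfl fun i _ => ?_
      rw [dotProduct_sum']
      rw [Finset.sum_eq_single i]
      · rw [smul_dotProduct, dotProduct_smul, smul_eq_mul, smul_eq_mul, sq]; ring
      · intro k _ hk
        rw [smul_dotProduct, dotProduct_smul, horth i k (Ne.symm hk)]
        simp
      · intro hi; exact absurd (Finset.mem_univ i) hi
    rw [h1, h2, h3]; ring
  have hle : ∑ i, cc i ^ 2 * (w i ⬝ᵥ w i) ≤ ∑ i, cc i ^ 2 := by
    refine Finset.sum_le_sum fun i _ => ?_
    calc cc i ^ 2 * (w i ⬝ᵥ w i) ≤ cc i ^ 2 * 1 :=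
          mul_le_mul_of_nonneg_left (hnorm i) (sq_nonneg _)
      _ = cc i ^ 2 := mul_one _
  have := key
  rw [expand] at this
  nlinarith [this, hle]

/-- Cauchy–Schwarz for real sums, sqrt form. -/
lemma cs_sqrt {ι : Type*} (s : Finset ι) (x y : ι → ℝ) :
    ∑ i ∈ s, x i * y i ≤ Real.sqrt (∑ i ∈ s, x i ^ 2) * Real.sqrt (∑ i ∈ s, y i ^ 2) := by
  have h := Finset.sum_mul_sq_le_sq_mul_sq s x y
  calc ∑ i ∈ s, x i * y i ≤ |∑ i ∈ s, x i * y i| := le_abs_self _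
    _ = Real.sqrt ((∑ i ∈ s, x i * y i) ^ 2) := (Real.sqrt_sq_eq_abs _).symm
    _ ≤ Real.sqrt ((∑ i ∈ s, x i ^ 2) * ∑ i ∈ s, y i ^ 2) := Real.sqrt_le_sqrt h
    _ = _ := Real.sqrt_mul (Finset.sum_nonneg fun i _ => sq_nonneg _) _

/-- the normalized left singular vectors -/
def avec (Z : Matrix d c ℝ) : c → d → ℝ := fun i => (sig Z i)⁻¹ • (Z *ᵥ bvec Z i)

lemma avec_dot (Z : Matrix d c ℝ) (i k : c) :
    avec Z i ⬝ᵥ avec Z k = if i = k then (if lam Z i = 0 then 0 else 1) else 0 := by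
  rw [avec, avec, smul_dotProduct, dotProduct_smul, dot_Zb, smul_eq_mul,
    smul_eq_mul]
  rcases eq_or_ne i k with rfl | hik
  · simp only [if_pos rfl]
    rcases eq_or_ne (lam Z i) 0 with h0 | h0
    · simp [h0]
    · rw [if_neg h0, ← sig_sq Z i]
      have hs : sig Z i ≠ 0 := by rw [Ne, sig_eq_zero_iff]; exact h0
      field_simp
      simp
  · simp [hik]

lemma avec_dot_Zb (Z : Matrix d c ℝ) (i : c) :
    avec Z i ⬝ᵥ (Z *ᵥ bvec Z i) = sig Z i := by
  rw [avec, smul_dotProduct, dot_Zb, if_pos rfl, smul_eq_mul, ← sig_sq Z i]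
  rcases eq_or_ne (sig Z i) 0 with h0 | h0
  · simp [h0]
  · field_simp

/-- Key upper bound: nuclear norm of a sum of rank-ones. -/
lemma nuclearNorm_sum_le {m : ℕ} (u : Fin m → d → ℝ) (v : Fin m → c → ℝ) :
    nuclearNorm (∑ j, Matrix.vecMulVec (u j) (v j)) ≤
      ∑ j, Real.sqrt (∑ r, u j r ^ 2) * Real.sqrt (∑ r, v j r ^ 2) := by
  set Z : Matrix d c ℝ := ∑ j, Matrix.vecMulVec (u j) (v j) with hZ
  rw [nuclearNorm_eq]
  have hsig : ∀ i, sig Z i = ∑ j, (avec Z i ⬝ᵥ u j) * (v j ⬝ᵥ bvec Z i) := by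
    intro i
    rw [← avec_dot_Zb Z i]
    have : Z *ᵥ bvec Z i = ∑ j, (v j ⬝ᵥ bvec Z i) • u j := by
      rw [hZ, sum_mulVec']
      exact Finset.sum_congr rfl fun j _ => vecMulVec_mulVec _ _ _
    rw [this, dotProduct_sum']
    exact Finset.sum_congr rfl fun j _ => by
      rw [dotProduct_smul, smul_eq_mul, mul_comm]
  calc ∑ i, sig Z i = ∑ i, ∑ j, (avec Z i ⬝ᵥ u j) * (v j ⬝ᵥ bvec Z i) :=
        Finset.sum_congr rfl fun i _ => hsig i
    _ = ∑ j, ∑ i, (avec Z i ⬝ᵥ u j) * (v j ⬝ᵥ bvec Z i) := Finset.sum_comm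
    _ ≤ ∑ j, Real.sqrt (∑ r, u j r ^ 2) * Real.sqrt (∑ r, v j r ^ 2) := by
        refine Finset.sum_le_sum fun j _ => ?_
        calc ∑ i, (avec Z i ⬝ᵥ u j) * (v j ⬝ᵥ bvec Z i)
            ≤ Real.sqrt (∑ i, (avec Z i ⬝ᵥ u j) ^ 2) *
              Real.sqrt (∑ i, (v j ⬝ᵥ bvec Z i) ^ 2) := cs_sqrt _ _ _
          _ ≤ Real.sqrt (∑ r, u j r ^ 2) * Real.sqrt (∑ r, v j r ^ 2) := by
              apply mul_le_mul
              · apply Real.sqrt_le_sqrt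
                have := bessel_general (avec Z)
                  (fun i k hik => by rw [avec_dot]; simp [hik])
                  (fun i => by rw [avec_dot, if_pos rfl]; split <;> norm_num) (u j)
                simpa [dotProduct, sq] using this
              · apply Real.sqrt_le_sqrt
                have := bessel_general (bvec Z)
                  (fun i k hik => by rw [bvec_dot]; simp [hik])
                  (fun i => by rw [bvec_dot, if_pos rfl]) (v j)
                have h2 : ∀ i, (v j ⬝ᵥ bvec Z i) ^ 2 = (bvec Z i ⬝ᵥ v j) ^ 2 := fun i => by
                  rw [dotProduct_comm]
                simp only [h2]
                simpa [dotProduct, sq] using this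
              · exact Real.sqrt_nonneg _
              · exact Real.sqrt_nonneg _


lemma sum_extend {ι κ M α : Type*} [Fintype ι] [Fintype κ] [DecidableEq κ] [AddCommMonoid M]
    (e : ι ↪ κ) (w : ι → α) (z : α) (f : α → M) (hf : f z = 0) :
    ∑ k, f (Function.extend e w (fun _ => z) k) = ∑ i, f (w i) := by
  have h1 : ∑ k ∈ Finset.univ.image e, f (Function.extend e w (fun _ => z) k)
      = ∑ i : ι, f (Function.extend e w (fun _ => z) (e i)) :=
    Finset.sum_image (fun i _ j _ h => e.injective h)
  have h2 : ∑ k ∈ Finset.univ.image e, f (Function.extend e w (fun _ => z) k)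
      = ∑ k : κ, f (Function.extend e w (fun _ => z) k) := by
    apply Finset.sum_subset (Finset.subset_univ _)
    intro k _ hk
    rw [Function.extend_apply' _ _ _ (fun ⟨a, ha⟩ =>
      hk (Finset.mem_image.mpr ⟨a, Finset.mem_univ a, ha⟩))]
    exact hf
  rw [← h2, h1]
  exact Finset.sum_congr rfl fun i _ => by rw [e.injective.extend_apply]

lemma sum_subtype_of_zero {c M : Type*} [Fintype c] [AddCommMonoid M] (p : c → Prop)
    [DecidablePred p] (F : c → M) (h0 : ∀ i, ¬ p i → F i = 0) :
    ∑ i : {i // p i}, F i.1 = ∑ i, F i := by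
  rw [← Finset.sum_subtype (Finset.univ.filter p) (fun x => by simp) F]
  exact Finset.sum_subset (Finset.filter_subset _ _) (fun i _ hi => h0 i (by simpa using hi))

lemma vecMulVec_smul_smul {d c : Type*} (x y : ℝ) (u : d → ℝ) (v : c → ℝ) :
    Matrix.vecMulVec (x • u) (y • v) = (x * y) • Matrix.vecMulVec u v := by
  ext r s
  simp [Matrix.vecMulVec_apply]
  ring

lemma sqrt_mul_sqrt_le_half (a b : ℝ) (ha : 0 ≤ a) (hb : 0 ≤ b) :
    Real.sqrt a * Real.sqrt b ≤ (a + b) / 2 := by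
  nlinarith [Real.sq_sqrt ha, Real.sq_sqrt hb, sq_nonneg (Real.sqrt a - Real.sqrt b),
    Real.sqrt_nonneg a, Real.sqrt_nonneg b]

lemma iInf_eq_iInf_of {α β : Type*} [Nonempty α] [Nonempty β] (f : α → ℝ) (g : β → ℝ)
    (h1 : ∀ a, ∃ b, g b ≤ f a) (h2 : ∀ b, ∃ a, f a = g b) :
    ⨅ a, f a = ⨅ b, g b := by
  by_cases hb : BddBelow (Set.range g)
  · have hf : BddBelow (Set.range f) := by
      obtain ⟨t, ht⟩ := hb
      refine ⟨t, ?_⟩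
      rintro _ ⟨a, rfl⟩
      obtain ⟨b, hba⟩ := h1 a
      exact le_trans (ht ⟨b, rfl⟩) hba
    apply le_antisymm
    · refine le_ciInf fun b => ?_
      obtain ⟨a, ha⟩ := h2 b
      rw [← ha]; exact ciInf_le hf a
    · refine le_ciInf fun a => ?_
      obtain ⟨b, hba⟩ := h1 a
      exact le_trans (ciInf_le hb b) hba
  · have hf : ¬ BddBelow (Set.range f) := by
      intro hbf
      apply hb
      obtain ⟨t, ht⟩ := hbf
      refine ⟨t, ?_⟩
      rintro _ ⟨b, rfl⟩
      obtain ⟨a, ha⟩ := h2 b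
      rw [← ha]; exact ht ⟨a, rfl⟩
    rw [Real.iInf_of_not_bddBelow hf, Real.iInf_of_not_bddBelow hb]

lemma sum_sq_mulVec_bvec' {d c : Type*} [Fintype d] [Fintype c] [DecidableEq c]
    (Z : Matrix d c ℝ) (i : c) : ∑ r, (Z *ᵥ bvec Z i) r ^ 2 = lam Z i := by
  have h := dot_Zb Z i i
  rw [if_pos rfl] at h
  rw [← h]
  simp [dotProduct, sq]

lemma sum_sq_bvec' {d c : Type*} [Fintype d] [Fintype c] [DecidableEq c]
    (Z : Matrix d c ℝ) (i : c) : ∑ r, (bvec Z i) r ^ 2 = 1 := by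
  have h := bvec_dot Z i i
  rw [if_pos rfl] at h
  rw [← h]
  simp [dotProduct, sq]

lemma exists_factorization {d c : Type*} [Fintype d] [Fintype c] [DecidableEq c]
    (Z : Matrix d c ℝ) (m : ℕ)
    (hm : min (Fintype.card d) (Fintype.card c) ≤ m) :
    ∃ W : (Fin m → d → ℝ) × (Fin m → c → ℝ),
      (∑ j, Matrix.vecMulVec (W.1 j) (W.2 j) = Z) ∧
      ∑ j, ((∑ r, W.1 j r ^ 2) + (∑ r, W.2 j r ^ 2)) = 2 * nuclearNorm Z := by
  classical
  have hcard : Fintype.card {i // lam Z i ≠ 0} ≤ Fintype.card (Fin m) := by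
    rw [Fintype.card_fin]
    refine le_trans ?_ hm
    have h1 : Z.rank = Fintype.card {i // lam Z i ≠ 0} := by
      rw [← Matrix.rank_conjTranspose_mul_self Z]
      exact (Matrix.isHermitian_conjTranspose_mul_self Z).rank_eq_card_non_zero_eigs
    rw [← h1]
    exact le_min (Matrix.rank_le_card_height Z) (Matrix.rank_le_card_width Z)
  obtain ⟨e⟩ := Function.Embedding.nonempty_of_card_le hcard
  set P : {i // lam Z i ≠ 0} → (d → ℝ) × (c → ℝ) := fun i =>
    ((Real.sqrt (sig Z i))⁻¹ • (Z *ᵥ bvec Z i), Real.sqrt (sig Z i) • bvec Z i) with hP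
  set W : Fin m → (d → ℝ) × (c → ℝ) := Function.extend e P (fun _ => (0, 0)) with hW
  have hsig_ne : ∀ i : {i // lam Z i ≠ 0}, sig Z i ≠ 0 := fun i => by
    rw [Ne, sig_eq_zero_iff]; exact i.2
  have hsqrt_ne : ∀ i : {i // lam Z i ≠ 0}, Real.sqrt (sig Z i) ≠ 0 := fun i => by
    rw [Ne, Real.sqrt_eq_zero (sig_nonneg Z i)]; exact hsig_ne i
  refine ⟨(fun j => (W j).1, fun j => (W j).2), ?_, ?_⟩
  · have h1 : ∑ j, Matrix.vecMulVec ((W j).1) ((W j).2)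
        = ∑ i : {i // lam Z i ≠ 0}, Matrix.vecMulVec ((P i).1) ((P i).2) :=
      sum_extend e P ((0 : d → ℝ), (0 : c → ℝ))
        (fun p => Matrix.vecMulVec p.1 p.2)
        (by ext r s; simp [Matrix.vecMulVec_apply])
    rw [h1]
    have h2 : ∀ i : {i // lam Z i ≠ 0},
        Matrix.vecMulVec ((P i).1) ((P i).2)
          = Matrix.vecMulVec (Z *ᵥ bvec Z i) (bvec Z i) := by
      intro i
      rw [hP]
      dsimp only
      rw [vecMulVec_smul_smul, inv_mul_cancel₀ (hsqrt_ne i), one_smul]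
    rw [Finset.sum_congr rfl fun i _ => h2 i]
    rw [sum_subtype_of_zero (fun i => lam Z i ≠ 0)
      (fun i => Matrix.vecMulVec (Z *ᵥ bvec Z i) (bvec Z i))
      (fun i hi => by
        show Matrix.vecMulVec (Z *ᵥ bvec Z i) (bvec Z i) = 0
        rw [mulVec_bvec_eq_zero Z (not_not.mp hi)]
        ext r s; simp [Matrix.vecMulVec_apply])]
    exact (decomp Z).symm
  · have h1 : ∑ j, ((∑ r, (W j).1 r ^ 2) + (∑ r, (W j).2 r ^ 2))
        = ∑ i : {i // lam Z i ≠ 0}, ((∑ r, (P i).1 r ^ 2) + (∑ r, (P i).2 r ^ 2)) :=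
      sum_extend e P ((0 : d → ℝ), (0 : c → ℝ))
        (fun p => (∑ r, p.1 r ^ 2) + (∑ r, p.2 r ^ 2)) (by simp)
    rw [h1]
    have h2 : ∀ i : {i // lam Z i ≠ 0},
        ((∑ r, (P i).1 r ^ 2) + (∑ r, (P i).2 r ^ 2)) = 2 * sig Z i := by
      intro i
      rw [hP]
      dsimp only
      have ha : ∑ r, ((Real.sqrt (sig Z i))⁻¹ • (Z *ᵥ bvec Z i)) r ^ 2
          = ((Real.sqrt (sig Z i))⁻¹) ^ 2 * lam Z i := by
        rw [← sum_sq_mulVec_bvec' Z i, Finset.mul_sum]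
        exact Finset.sum_congr rfl fun r _ => by simp [mul_pow]
      have hb : ∑ r, (Real.sqrt (sig Z i) • bvec Z i) r ^ 2
          = (Real.sqrt (sig Z i)) ^ 2 * 1 := by
        calc ∑ r, (Real.sqrt (sig Z i) • bvec Z i) r ^ 2
            = ∑ r, (Real.sqrt (sig Z i)) ^ 2 * (bvec Z i r) ^ 2 :=
              Finset.sum_congr rfl fun r _ => by simp [mul_pow]
          _ = (Real.sqrt (sig Z i)) ^ 2 * 1 := by rw [← Finset.mul_sum, sum_sq_bvec']
      rw [ha, hb, Real.sq_sqrt (sig_nonneg Z i), inv_pow,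
        Real.sq_sqrt (sig_nonneg Z i), ← sig_sq Z i, mul_one]
      have hs : sig Z i.1 ≠ 0 := hsig_ne i
      field_simp
      ring
    rw [Finset.sum_congr rfl fun i _ => h2 i]
    rw [sum_subtype_of_zero (fun i => lam Z i ≠ 0) (fun i => 2 * sig Z i)
      (fun i hi => by
        show 2 * sig Z i = 0
        rw [(sig_eq_zero_iff Z i).mpr (not_not.mp hi), mul_zero])]
    rw [← Finset.mul_sum, nuclearNorm_eq]

end LinearMixerAux

/-- **Linear-activation generic token mixer (PoolFormer / FNet style).**
For a fixed mixing map `h` and `m ≥ m*` with `m* ≤ min {d, c}`, the non-convex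
training problem equals a convex program with nuclear-norm regularization. -/
theorem linear_mixer_convex_dual
    (n s d c : ℕ) (hn : 0 < n) (hs : 0 < s) (hd : 0 < d) (hc : 0 < c)
    (β : ℝ) (hβ : 0 < β)
    (X : Fin n → Matrix (Fin s) (Fin d) ℝ) (Y : Fin n → Matrix (Fin s) (Fin c) ℝ)
    (L : Matrix (Fin s) (Fin c) ℝ → Matrix (Fin s) (Fin c) ℝ → ℝ)
    (hconv : ∀ Yi, ConvexOn ℝ Set.univ fun R => L R Yi)
    (hlsc : ∀ Yi, LowerSemicontinuous fun R => L R Yi)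
    (h : Matrix (Fin s) (Fin d) ℝ → Matrix (Fin s) (Fin d) ℝ) :
    ∃ mstar : ℕ, mstar ≤ min d c ∧ ∀ m : ℕ, mstar ≤ m →
      (⨅ W : (Fin m → (Fin d → ℝ)) × (Fin m → (Fin c → ℝ)),
        (∑ i, L (∑ j, Matrix.vecMulVec (h (X i) *ᵥ W.1 j) (W.2 j)) (Y i)) +
          (β / 2) * ∑ j, ((∑ r, (W.1 j r) ^ 2) + (∑ r, (W.2 j r) ^ 2)))
      =
      (⨅ Z : Matrix (Fin d) (Fin c) ℝ,
        (∑ i, L (h (X i) * Z) (Y i)) + β * nuclearNorm Z) := by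
  
  classical
  refine ⟨min d c, le_refl _, fun m hm => ?_⟩
  apply LinearMixerAux.iInf_eq_iInf_of
  · intro W
    set Z : Matrix (Fin d) (Fin c) ℝ := ∑ j, Matrix.vecMulVec (W.1 j) (W.2 j) with hZ
    refine ⟨Z, ?_⟩
    have hloss : ∀ i, h (X i) * Z = ∑ j, Matrix.vecMulVec (h (X i) *ᵥ W.1 j) (W.2 j) := by
      intro i
      rw [hZ, Matrix.mul_sum]
      exact Finset.sum_congr rfl fun j _ => LinearMixerAux.mul_vecMulVec _ _ _
    have hreg : β * nuclearNorm Z ≤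
        (β / 2) * ∑ j, ((∑ r, (W.1 j r) ^ 2) + (∑ r, (W.2 j r) ^ 2)) := by
      have hnn : nuclearNorm Z ≤
          ∑ j, Real.sqrt (∑ r, (W.1 j r) ^ 2) * Real.sqrt (∑ r, (W.2 j r) ^ 2) :=
        LinearMixerAux.nuclearNorm_sum_le _ _
      have hb : ∑ j, Real.sqrt (∑ r, (W.1 j r) ^ 2) * Real.sqrt (∑ r, (W.2 j r) ^ 2)
          ≤ ∑ j, ((∑ r, (W.1 j r) ^ 2) + (∑ r, (W.2 j r) ^ 2)) / 2 :=
        Finset.sum_le_sum fun j _ => LinearMixerAux.sqrt_mul_sqrt_le_half _ _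
          (Finset.sum_nonneg fun r _ => sq_nonneg _)
          (Finset.sum_nonneg fun r _ => sq_nonneg _)
      have : nuclearNorm Z ≤
          (∑ j, ((∑ r, (W.1 j r) ^ 2) + (∑ r, (W.2 j r) ^ 2))) / 2 := by
        refine le_trans (le_trans hnn hb) ?_
        rw [Finset.sum_div]
      calc β * nuclearNorm Z
          ≤ β * ((∑ j, ((∑ r, (W.1 j r) ^ 2) + (∑ r, (W.2 j r) ^ 2))) / 2) :=
            mul_le_mul_of_nonneg_left this hβ.le
        _ = (β / 2) * ∑ j, ((∑ r, (W.1 j r) ^ 2) + (∑ r, (W.2 j r) ^ 2)) := by ring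
    have hlosseq : ∑ i, L (h (X i) * Z) (Y i)
        = ∑ i, L (∑ j, Matrix.vecMulVec (h (X i) *ᵥ W.1 j) (W.2 j)) (Y i) :=
      Finset.sum_congr rfl fun i _ => by rw [hloss i]
    calc (∑ i, L (h (X i) * Z) (Y i)) + β * nuclearNorm Z
        ≤ (∑ i, L (h (X i) * Z) (Y i)) +
            (β / 2) * ∑ j, ((∑ r, (W.1 j r) ^ 2) + (∑ r, (W.2 j r) ^ 2)) :=
          add_le_add_right hreg _
      _ = (∑ i, L (∑ j, Matrix.vecMulVec (h (X i) *ᵥ W.1 j) (W.2 j)) (Y i)) +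
            (β / 2) * ∑ j, ((∑ r, (W.1 j r) ^ 2) + (∑ r, (W.2 j r) ^ 2)) := by
          rw [hlosseq]
  · intro Z
    obtain ⟨W, hW1, hW2⟩ := LinearMixerAux.exists_factorization Z m
      (by simpa [Fintype.card_fin] using hm)
    refine ⟨W, ?_⟩
    have hloss : ∀ i, ∑ j, Matrix.vecMulVec (h (X i) *ᵥ W.1 j) (W.2 j) = h (X i) * Z := by
      intro i
      rw [← hW1, Matrix.mul_sum]
      exact Finset.sum_congr rfl fun j _ => (LinearMixerAux.mul_vecMulVec _ _ _).symm
    have hlosseq : ∑ i, L (∑ j, Matrix.vecMulVec (h (X i) *ᵥ W.1 j) (W.2 j)) (Y i)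
        = ∑ i, L (h (X i) * Z) (Y i) :=
      Finset.sum_congr rfl fun i _ => by rw [hloss i]
    rw [hlosseq, hW2]
    ring
end
end
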